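/- arXiv:1810.08084 — 8 statements merged into one kernel-verified Lean document; each statement's English description precedes it below -/
import Mathlib

section
/- There exists exactly one affine function $S:\mathbb{R}^3\to\mathbb{R}$ such that $\sum_{p=1}^{6}|F_p|\,S(M_p)\,\psi(M_p)=\sum_{p=1}^{6}|F_p|\,v_{bp}\,\psi(M_p)$ holds for every affine function $\psi:\mathbb{R}^3\to\mathbb{R}$, and this function is $S(x,y,z)=c_1+c_2(x-x_c)+c_3(y-y_c)+c_4(z-z_c)$ with $c_1=\frac{|F_1|(v_{b1}+v_{b2})+|F_3|(v_{b3}+v_{b4})+|F_5|(v_{b5}+v_{b6})}{2(|F_1|+|F_3|+|F_5|)}$, $c_2=\frac{v_{b2}-v_{b1}}{e_x}$, $c_3=\frac{v_{b4}-v_{b3}}{e_y}$, $c_4=\frac{v_{b6}-v_{b5}}{e_z}$. -/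
/-- A function `f : ℝ³ → ℝ` is affine. -/
def IsAffine (f : ℝ × ℝ × ℝ → ℝ) : Prop :=
  ∃ a b c d : ℝ, ∀ p : ℝ × ℝ × ℝ, f p = a + b * p.1 + c * p.2.1 + d * p.2.2

/-- The defining property of the extension `S`:
`∑ₚ |Fₚ| S(Mₚ) ψ(Mₚ) = ∑ₚ |Fₚ| v_{bp} ψ(Mₚ)` for every affine `ψ`. -/
def FaceSumProp (F1 F3 F5 : ℝ) (M1 M2 M3 M4 M5 M6 : ℝ × ℝ × ℝ)
    (vb1 vb2 vb3 vb4 vb5 vb6 : ℝ) (S : ℝ × ℝ × ℝ → ℝ) : Prop :=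
  ∀ ψ : ℝ × ℝ × ℝ → ℝ, IsAffine ψ →
    F1 * S M1 * ψ M1 + F1 * S M2 * ψ M2 + F3 * S M3 * ψ M3 + F3 * S M4 * ψ M4
      + F5 * S M5 * ψ M5 + F5 * S M6 * ψ M6
    = F1 * vb1 * ψ M1 + F1 * vb2 * ψ M2 + F3 * vb3 * ψ M3 + F3 * vb4 * ψ M4
      + F5 * vb5 * ψ M5 + F5 * vb6 * ψ M6

set_option maxHeartbeats 1000000 in
theorem stmt0 (x0 x1 y0 y1 z0 z1 : ℝ) (hx : x0 < x1) (hy : y0 < y1) (hz : z0 < z1)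
    (ex ey ez xc yc zc F1 F3 F5 : ℝ)
    (hex : ex = x1 - x0) (hey : ey = y1 - y0) (hez : ez = z1 - z0)
    (hxc : xc = (x0 + x1) / 2) (hyc : yc = (y0 + y1) / 2) (hzc : zc = (z0 + z1) / 2)
    (hF1 : F1 = ey * ez) (hF3 : F3 = ex * ez) (hF5 : F5 = ex * ey)
    (M1 M2 M3 M4 M5 M6 : ℝ × ℝ × ℝ)
    (hM1 : M1 = (x0, yc, zc)) (hM2 : M2 = (x1, yc, zc))
    (hM3 : M3 = (xc, y0, zc)) (hM4 : M4 = (xc, y1, zc))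
    (hM5 : M5 = (xc, yc, z0)) (hM6 : M6 = (xc, yc, z1))
    (vb1 vb2 vb3 vb4 vb5 vb6 : ℝ) (c1 c2 c3 c4 : ℝ)
    (hc1 : c1 = (F1 * (vb1 + vb2) + F3 * (vb3 + vb4) + F5 * (vb5 + vb6)) / (2 * (F1 + F3 + F5)))
    (hc2 : c2 = (vb2 - vb1) / ex) (hc3 : c3 = (vb4 - vb3) / ey) (hc4 : c4 = (vb6 - vb5) / ez)
    (Sfun : ℝ × ℝ × ℝ → ℝ)
    (hS : ∀ p : ℝ × ℝ × ℝ, Sfun p = c1 + c2 * (p.1 - xc) + c3 * (p.2.1 - yc) + c4 * (p.2.2 - zc)) :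
    (IsAffine Sfun ∧ FaceSumProp F1 F3 F5 M1 M2 M3 M4 M5 M6 vb1 vb2 vb3 vb4 vb5 vb6 Sfun) ∧
    (∀ S : ℝ × ℝ × ℝ → ℝ, IsAffine S →
      FaceSumProp F1 F3 F5 M1 M2 M3 M4 M5 M6 vb1 vb2 vb3 vb4 vb5 vb6 S → S = Sfun) := by
  have px : (0:ℝ) < x1 - x0 := by linarith
  have py : (0:ℝ) < y1 - y0 := by linarith
  have pz : (0:ℝ) < z1 - z0 := by linarith
  have hex0 : ex ≠ 0 := by rw [hex]; linarith
  have hey0 : ey ≠ 0 := by rw [hey]; linarith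
  have hez0 : ez ≠ 0 := by rw [hez]; linarith
  have hF1p : 0 < F1 := by rw [hF1, hey, hez]; exact mul_pos py pz
  have hF3p : 0 < F3 := by rw [hF3, hex, hez]; exact mul_pos px pz
  have hF5p : 0 < F5 := by rw [hF5, hex, hey]; exact mul_pos px py
  have hsum0 : F1 + F3 + F5 ≠ 0 := ne_of_gt (by linarith)
  have hxx : x1 - x0 ≠ 0 := ne_of_gt px
  have hyy : y1 - y0 ≠ 0 := ne_of_gt py
  have hzz : z1 - z0 ≠ 0 := ne_of_gt pz
  have hC : 2*(F1+F3+F5)*c1 = F1*(vb1+vb2)+F3*(vb3+vb4)+F5*(vb5+vb6) := by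
    rw [hc1]; field_simp
  have h1 : Sfun M1 = c1 - (vb2 - vb1)/2 := by
    simp only [hS, hM1, hc2]; rw [hxc, hex]; field_simp; ring
  have h2 : Sfun M2 = c1 + (vb2 - vb1)/2 := by
    simp only [hS, hM2, hc2]; rw [hxc, hex]; field_simp; ring
  have h3 : Sfun M3 = c1 - (vb4 - vb3)/2 := by
    simp only [hS, hM3, hc3]; rw [hyc, hey]; field_simp; ring
  have h4 : Sfun M4 = c1 + (vb4 - vb3)/2 := by
    simp only [hS, hM4, hc3]; rw [hyc, hey]; field_simp; ring
  have h5 : Sfun M5 = c1 - (vb6 - vb5)/2 := by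
    simp only [hS, hM5, hc4]; rw [hzc, hez]; field_simp; ring
  have h6 : Sfun M6 = c1 + (vb6 - vb5)/2 := by
    simp only [hS, hM6, hc4]; rw [hzc, hez]; field_simp; ring
  refine ⟨⟨⟨c1 - c2*xc - c3*yc - c4*zc, c2, c3, c4, fun p => by rw [hS p]; ring⟩, ?_⟩, ?_⟩
  · intro ψ ⟨a, b, c, d, hψ⟩
    rw [h1, h2, h3, h4, h5, h6]
    simp only [hψ, hM1, hM2, hM3, hM4, hM5, hM6]
    rw [hxc, hyc, hzc]
    linear_combination (a + b*((x0+x1)/2) + c*((y0+y1)/2) + d*((z0+z1)/2)) * hC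
  · intro S ⟨a, b, c, d, hψ⟩ hFS
    have E0 := hFS (fun _ => 1) ⟨1, 0, 0, 0, fun p => by ring⟩
    have Ex := hFS (fun p => p.1) ⟨0, 1, 0, 0, fun p => by ring⟩
    have Ey := hFS (fun p => p.2.1) ⟨0, 0, 1, 0, fun p => by ring⟩
    have Ez := hFS (fun p => p.2.2) ⟨0, 0, 0, 1, fun p => by ring⟩
    simp only [hψ, hM1, hM2, hM3, hM4, hM5, hM6] at E0 Ex Ey Ez
    rw [hxc, hyc, hzc] at E0 Ex Ey Ez
    have hb : b = c2 := by
      rw [hc2, hex, eq_div_iff hxx]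
      have key : F1 * (x1 - x0) / 2 * (b * (x1 - x0)) = F1 * (x1 - x0) / 2 * (vb2 - vb1) := by
        linear_combination Ex - ((x0 + x1)/2) * E0
      have := mul_left_cancel₀ (by positivity : F1 * (x1 - x0) / 2 ≠ 0) key
      linarith
    have hcy : c = c3 := by
      rw [hc3, hey, eq_div_iff hyy]
      have key : F3 * (y1 - y0) / 2 * (c * (y1 - y0)) = F3 * (y1 - y0) / 2 * (vb4 - vb3) := by
        linear_combination Ey - ((y0 + y1)/2) * E0
      have := mul_left_cancel₀ (by positivity : F3 * (y1 - y0) / 2 ≠ 0) key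
      linarith
    have hd : d = c4 := by
      rw [hc4, hez, eq_div_iff hzz]
      have key : F5 * (z1 - z0) / 2 * (d * (z1 - z0)) = F5 * (z1 - z0) / 2 * (vb6 - vb5) := by
        linear_combination Ez - ((z0 + z1)/2) * E0
      have := mul_left_cancel₀ (by positivity : F5 * (z1 - z0) / 2 ≠ 0) key
      linarith
    have ha : a + b*xc + c*yc + d*zc = c1 := by
      have key : (2*(F1+F3+F5)) * (a + b*((x0+x1)/2) + c*((y0+y1)/2) + d*((z0+z1)/2))
          = 2*(F1+F3+F5)*c1 := by
        rw [hC]; linear_combination E0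
      rw [hxc, hyc, hzc]
      exact mul_left_cancel₀ (by positivity : (2:ℝ)*(F1+F3+F5) ≠ 0) key
    funext p
    rw [hψ p, hS p, ← hb, ← hcy, ← hd]
    linear_combination ha
end

section
/- For every constant vector $\bar q=(\bar q_1,\bar q_2,\bar q_3)\in\mathbb{R}^3$, $\sum_{p=1}^{6}(\bar q\cdot n_p)\int_{F_p}\big(\mathcal{S}(v_b)-v_{bp}\big)\,dS=0$, where each face integral is taken with respect to two-dimensional Lebesgue measure on the face. -/
lemma lin_int (a b A B m : ℝ) :
    (∫ t in a..b, (A + B * (t - m))) =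
      (b - a) * A + B * ((b^2 - a^2)/2 - m * (b - a)) := by
  have h : ∀ t : ℝ, A + B * (t - m) = (A - B * m) + B * t := fun t => by ring
  simp_rw [h]
  have hint : IntervalIntegrable (fun t : ℝ => B * t) MeasureTheory.volume a b := by
    apply Continuous.intervalIntegrable; fun_prop
  rw [intervalIntegral.integral_add intervalIntegrable_const hint,
    intervalIntegral.integral_const, intervalIntegral.integral_const_mul,
    integral_id, smul_eq_mul]
  ring

lemma dbl_int (a b c d A B C ma mb : ℝ) :
    (∫ s in a..b, ∫ t in c..d, (A + B * (s - ma) + C * (t - mb)))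
      = (b - a) * (d - c) * A
        + (d - c) * B * ((b^2 - a^2)/2 - ma * (b - a))
        + (b - a) * C * ((d^2 - c^2)/2 - mb * (d - c)) := by
  have h1 : ∀ s : ℝ, (∫ t in c..d, (A + B * (s - ma) + C * (t - mb)))
      = (d - c) * (A + B * (s - ma)) + C * ((d^2 - c^2)/2 - mb * (d - c)) :=
    fun s => lin_int c d _ C mb
  simp_rw [h1]
  have h2 : ∀ s : ℝ, (d - c) * (A + B * (s - ma)) + C * ((d^2 - c^2)/2 - mb * (d - c))
      = ((d - c) * A + C * ((d^2 - c^2)/2 - mb * (d - c))) + ((d - c) * B) * (s - ma) :=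
    fun s => by ring
  simp_rw [h2, lin_int]
  ring

theorem stmt5 (x0 x1 y0 y1 z0 z1 : ℝ) (hx : x0 < x1) (hy : y0 < y1) (hz : z0 < z1)
    (ex ey ez xc yc zc F1 F3 F5 : ℝ)
    (hex : ex = x1 - x0) (hey : ey = y1 - y0) (hez : ez = z1 - z0)
    (hxc : xc = (x0 + x1) / 2) (hyc : yc = (y0 + y1) / 2) (hzc : zc = (z0 + z1) / 2)
    (hF1 : F1 = ey * ez) (hF3 : F3 = ex * ez) (hF5 : F5 = ex * ey)
    (vb1 vb2 vb3 vb4 vb5 vb6 : ℝ) (c1 c2 c3 c4 : ℝ)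
    (hc1 : c1 = (F1 * (vb1 + vb2) + F3 * (vb3 + vb4) + F5 * (vb5 + vb6)) / (2 * (F1 + F3 + F5)))
    (hc2 : c2 = (vb2 - vb1) / ex) (hc3 : c3 = (vb4 - vb3) / ey) (hc4 : c4 = (vb6 - vb5) / ez)
    (S : ℝ → ℝ → ℝ → ℝ)
    (hS : ∀ x y z : ℝ, S x y z = c1 + c2 * (x - xc) + c3 * (y - yc) + c4 * (z - zc))
    (qb1 qb2 qb3 : ℝ) :
    (-qb1) * (∫ y in y0..y1, ∫ z in z0..z1, (S x0 y z - vb1))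
      + qb1 * (∫ y in y0..y1, ∫ z in z0..z1, (S x1 y z - vb2))
      + (-qb2) * (∫ x in x0..x1, ∫ z in z0..z1, (S x y0 z - vb3))
      + qb2 * (∫ x in x0..x1, ∫ z in z0..z1, (S x y1 z - vb4))
      + (-qb3) * (∫ x in x0..x1, ∫ y in y0..y1, (S x y z0 - vb5))
      + qb3 * (∫ x in x0..x1, ∫ y in y0..y1, (S x y z1 - vb6)) = 0 := by
  have hexne : ex ≠ 0 := by rw [hex]; linarith
  have heyne : ey ≠ 0 := by rw [hey]; linarith
  have hezne : ez ≠ 0 := by rw [hez]; linarith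
  have H2 : c2 * (x1 - x0) = vb2 - vb1 := by rw [hc2, ← hex]; field_simp
  have H3 : c3 * (y1 - y0) = vb4 - vb3 := by rw [hc3, ← hey]; field_simp
  have H4 : c4 * (z1 - z0) = vb6 - vb5 := by rw [hc4, ← hez]; field_simp
  have r1 : ∀ (v A : ℝ), ∀ y z : ℝ, S A y z - v
      = (c1 + c2 * (A - xc) - v) + c3 * (y - yc) + c4 * (z - zc) :=
    fun v A y z => by rw [hS]; ring
  have r2 : ∀ (v A : ℝ), ∀ x z : ℝ, S x A z - v
      = (c1 + c3 * (A - yc) - v) + c2 * (x - xc) + c4 * (z - zc) :=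
    fun v A x z => by rw [hS]; ring
  have r3 : ∀ (v A : ℝ), ∀ x y : ℝ, S x y A - v
      = (c1 + c4 * (A - zc) - v) + c2 * (x - xc) + c3 * (y - yc) :=
    fun v A x y => by rw [hS]; ring
  simp_rw [r1 vb1 x0, r1 vb2 x1, r2 vb3 y0, r2 vb4 y1, r3 vb5 z0, r3 vb6 z1, dbl_int]
  subst hxc hyc hzc
  linear_combination qb1 * (y1 - y0) * (z1 - z0) * H2
    + qb2 * (x1 - x0) * (z1 - z0) * H3 + qb3 * (x1 - x0) * (y1 - y0) * H4
end

section
/- Let $q=(q_1,q_2,q_3)$ be a continuously differentiable vector field on a neighborhood of $T$. Then $\sum_{p=1}^{6}\int_{F_p}(q\cdot n_p)\big(\mathcal{S}(v_b)-v_{bp}\big)\,dS=\int_T\Big(\partial_x q_1\,\chi_1+\partial_y q_2\,\chi_2+\partial_z q_3\,\chi_3\Big)\,dV$, where face integrals are with respect to two-dimensional Lebesgue measure on the face and the volume integral is with respect to Lebesgue measure on $\mathbb{R}^3$. -/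
open MeasureTheory Set

private lemma restrict_prod_eq {α β : Type*} [MeasureSpace α] [MeasureSpace β]
    [SigmaFinite (volume : Measure α)] [SigmaFinite (volume : Measure β)]
    (s : Set α) (t : Set β) :
    (volume : Measure (α × β)).restrict (s ×ˢ t)
      = (volume.restrict s).prod (volume.restrict t) := by
  rw [Measure.volume_eq_prod, ← Measure.prod_restrict]

private lemma prodInt {α β : Type*} [MeasureSpace α] [MeasureSpace β]
    [SigmaFinite (volume : Measure α)] [SigmaFinite (volume : Measure β)]
    {f : α × β → ℝ} {s : Set α} {t : Set β}
    (hf : Integrable f ((volume : Measure (α × β)).restrict (s ×ˢ t))) :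
    ∫ p in s ×ˢ t, f p = ∫ x in s, ∫ y in t, f (x, y) := by
  rw [restrict_prod_eq] at hf ⊢
  exact integral_prod f hf

private lemma prodIntSymm {α β : Type*} [MeasureSpace α] [MeasureSpace β]
    [SigmaFinite (volume : Measure α)] [SigmaFinite (volume : Measure β)]
    {f : α × β → ℝ} {s : Set α} {t : Set β}
    (hf : Integrable f ((volume : Measure (α × β)).restrict (s ×ˢ t))) :
    ∫ p in s ×ˢ t, f p = ∫ y in t, ∫ x in s, f (x, y) := by
  rw [restrict_prod_eq] at hf ⊢
  exact integral_prod_symm f hf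

private lemma iter2 {a b c d : ℝ} (hab : a ≤ b) (hcd : c ≤ d) {f : ℝ × ℝ → ℝ}
    (hf : ContinuousOn f (Icc a b ×ˢ Icc c d)) :
    (∫ y in a..b, ∫ z in c..d, f (y, z)) = ∫ w in Ioc a b ×ˢ Ioc c d, f w := by
  have hint : Integrable f ((volume : Measure (ℝ × ℝ)).restrict (Ioc a b ×ˢ Ioc c d)) :=
    (hf.integrableOn_compact (isCompact_Icc.prod isCompact_Icc)).mono_set
      (prod_mono Ioc_subset_Icc_self Ioc_subset_Icc_self)
  rw [prodInt hint, intervalIntegral.integral_of_le hab]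
  refine setIntegral_congr_fun measurableSet_Ioc fun y hy => ?_
  rw [intervalIntegral.integral_of_le hcd]

private lemma iter3 {a b c d e g : ℝ} (hab : a ≤ b) (hcd : c ≤ d) (heg : e ≤ g)
    {f : ℝ × ℝ × ℝ → ℝ} (hf : ContinuousOn f (Icc a b ×ˢ Icc c d ×ˢ Icc e g)) :
    (∫ x in a..b, ∫ y in c..d, ∫ z in e..g, f (x, y, z))
      = ∫ p in Ioc a b ×ˢ Ioc c d ×ˢ Ioc e g, f p := by
  have hint : Integrable f
      ((volume : Measure (ℝ × ℝ × ℝ)).restrict (Ioc a b ×ˢ Ioc c d ×ˢ Ioc e g)) :=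
    (hf.integrableOn_compact (isCompact_Icc.prod (isCompact_Icc.prod isCompact_Icc))).mono_set
      (prod_mono Ioc_subset_Icc_self (prod_mono Ioc_subset_Icc_self Ioc_subset_Icc_self))
  rw [prodInt hint, intervalIntegral.integral_of_le hab]
  refine setIntegral_congr_fun measurableSet_Ioc fun x hx => ?_
  have hslice : ContinuousOn (fun w : ℝ × ℝ => f (x, w)) (Icc c d ×ˢ Icc e g) :=
    hf.comp (Continuous.continuousOn (by fun_prop))
      (fun w hw => Set.mem_prod.mpr ⟨Ioc_subset_Icc_self hx, hw⟩)
  exact iter2 hcd heg hslice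

private lemma ftc1 {a b : ℝ} (hab : a ≤ b) {f f' : ℝ → ℝ}
    (hd : ∀ x ∈ Icc a b, HasDerivAt f (f' x) x) (hc : ContinuousOn f' (Icc a b)) (c : ℝ) :
    ∫ x in Ioc a b, f' x * c = (f b - f a) * c := by
  rw [← intervalIntegral.integral_of_le hab, intervalIntegral.integral_mul_const,
    intervalIntegral.integral_eq_sub_of_hasDerivAt
      (fun x hx => hd x (by rwa [uIcc_of_le hab] at hx))
      ((hc.mono (uIcc_of_le hab).subset).intervalIntegrable)]

private lemma pair2 {a b c d : ℝ} (hab : a ≤ b) (hcd : c ≤ d) {f g h : ℝ × ℝ → ℝ}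
    (hf : ContinuousOn f (Icc a b ×ˢ Icc c d)) (hg : ContinuousOn g (Icc a b ×ˢ Icc c d))
    (hfg : ∀ w ∈ Ioc a b ×ˢ Ioc c d, f w + g w = h w) :
    ((∫ y in a..b, ∫ z in c..d, f (y, z)) + ∫ y in a..b, ∫ z in c..d, g (y, z))
      = ∫ w in Ioc a b ×ˢ Ioc c d, h w := by
  have hfi : IntegrableOn f (Ioc a b ×ˢ Ioc c d) :=
    (hf.integrableOn_compact (isCompact_Icc.prod isCompact_Icc)).mono_set
      (prod_mono Ioc_subset_Icc_self Ioc_subset_Icc_self)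
  have hgi : IntegrableOn g (Ioc a b ×ˢ Ioc c d) :=
    (hg.integrableOn_compact (isCompact_Icc.prod isCompact_Icc)).mono_set
      (prod_mono Ioc_subset_Icc_self Ioc_subset_Icc_self)
  rw [iter2 hab hcd hf, iter2 hab hcd hg, ← integral_add hfi hgi]
  exact setIntegral_congr_fun (measurableSet_Ioc.prod measurableSet_Ioc) hfg

private lemma dirDerivX {U : Set (ℝ × ℝ × ℝ)} (hU : IsOpen U) {F : ℝ × ℝ × ℝ → ℝ}
    (hF : ContDiffOn ℝ 1 F U) :
    ∃ D : ℝ × ℝ × ℝ → ℝ, ContinuousOn D U ∧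
      ∀ x y z : ℝ, (x, y, z) ∈ U → HasDerivAt (fun t => F (t, y, z)) (D (x, y, z)) x := by
  refine ⟨fun p => fderiv ℝ F p (1, 0, 0),
    (hF.continuousOn_fderiv_of_isOpen hU le_rfl).clm_apply continuousOn_const, ?_⟩
  intro x y z hp
  have hdF : HasFDerivAt F (fderiv ℝ F (x, y, z)) (x, y, z) :=
    ((hF.differentiableOn one_ne_zero).differentiableAt (hU.mem_nhds hp)).hasFDerivAt
  have hL : HasDerivAt (fun t : ℝ => ((t, y, z) : ℝ × ℝ × ℝ)) (1, 0, 0) x :=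
    HasDerivAt.prodMk (hasDerivAt_id x) (HasDerivAt.prodMk (hasDerivAt_const x y) (hasDerivAt_const x z))
  exact hdF.comp_hasDerivAt x hL

private lemma dirDerivY {U : Set (ℝ × ℝ × ℝ)} (hU : IsOpen U) {F : ℝ × ℝ × ℝ → ℝ}
    (hF : ContDiffOn ℝ 1 F U) :
    ∃ D : ℝ × ℝ × ℝ → ℝ, ContinuousOn D U ∧
      ∀ x y z : ℝ, (x, y, z) ∈ U → HasDerivAt (fun t => F (x, t, z)) (D (x, y, z)) y := by
  refine ⟨fun p => fderiv ℝ F p (0, 1, 0),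
    (hF.continuousOn_fderiv_of_isOpen hU le_rfl).clm_apply continuousOn_const, ?_⟩
  intro x y z hp
  have hdF : HasFDerivAt F (fderiv ℝ F (x, y, z)) (x, y, z) :=
    ((hF.differentiableOn one_ne_zero).differentiableAt (hU.mem_nhds hp)).hasFDerivAt
  have hL : HasDerivAt (fun t : ℝ => ((x, t, z) : ℝ × ℝ × ℝ)) (0, 1, 0) y :=
    HasDerivAt.prodMk (hasDerivAt_const y x) (HasDerivAt.prodMk (hasDerivAt_id y) (hasDerivAt_const y z))
  exact hdF.comp_hasDerivAt y hL

private lemma dirDerivZ {U : Set (ℝ × ℝ × ℝ)} (hU : IsOpen U) {F : ℝ × ℝ × ℝ → ℝ}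
    (hF : ContDiffOn ℝ 1 F U) :
    ∃ D : ℝ × ℝ × ℝ → ℝ, ContinuousOn D U ∧
      ∀ x y z : ℝ, (x, y, z) ∈ U → HasDerivAt (fun t => F (x, y, t)) (D (x, y, z)) z := by
  refine ⟨fun p => fderiv ℝ F p (0, 0, 1),
    (hF.continuousOn_fderiv_of_isOpen hU le_rfl).clm_apply continuousOn_const, ?_⟩
  intro x y z hp
  have hdF : HasFDerivAt F (fderiv ℝ F (x, y, z)) (x, y, z) :=
    ((hF.differentiableOn one_ne_zero).differentiableAt (hU.mem_nhds hp)).hasFDerivAt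
  have hL : HasDerivAt (fun t : ℝ => ((x, y, t) : ℝ × ℝ × ℝ)) (0, 0, 1) z :=
    HasDerivAt.prodMk (hasDerivAt_const z x) (HasDerivAt.prodMk (hasDerivAt_const z y) (hasDerivAt_id z))
  exact hdF.comp_hasDerivAt z hL

theorem stmt6 (x0 x1 y0 y1 z0 z1 : ℝ) (hx : x0 < x1) (hy : y0 < y1) (hz : z0 < z1)
    (ex ey ez xc yc zc F1 F3 F5 : ℝ)
    (hex : ex = x1 - x0) (hey : ey = y1 - y0) (hez : ez = z1 - z0)
    (hxc : xc = (x0 + x1) / 2) (hyc : yc = (y0 + y1) / 2) (hzc : zc = (z0 + z1) / 2)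
    (hF1 : F1 = ey * ez) (hF3 : F3 = ex * ez) (hF5 : F5 = ex * ey)
    (vb1 vb2 vb3 vb4 vb5 vb6 : ℝ) (c1 c2 c3 c4 : ℝ)
    (hc1 : c1 = (F1 * (vb1 + vb2) + F3 * (vb3 + vb4) + F5 * (vb5 + vb6)) / (2 * (F1 + F3 + F5)))
    (hc2 : c2 = (vb2 - vb1) / ex) (hc3 : c3 = (vb4 - vb3) / ey) (hc4 : c4 = (vb6 - vb5) / ez)
    (S : ℝ → ℝ → ℝ → ℝ)
    (hS : ∀ x y z : ℝ, S x y z = c1 + c2 * (x - xc) + c3 * (y - yc) + c4 * (z - zc))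
    -- `q = (q1, q2, q3)` is continuously differentiable on a neighborhood `U` of `T`
    (q1 q2 q3 : ℝ → ℝ → ℝ → ℝ) (U : Set (ℝ × ℝ × ℝ)) (hU : IsOpen U)
    (hTU : Set.Icc x0 x1 ×ˢ Set.Icc y0 y1 ×ˢ Set.Icc z0 z1 ⊆ U)
    (hq1 : ContDiffOn ℝ 1 (fun p : ℝ × ℝ × ℝ => q1 p.1 p.2.1 p.2.2) U)
    (hq2 : ContDiffOn ℝ 1 (fun p : ℝ × ℝ × ℝ => q2 p.1 p.2.1 p.2.2) U)
    (hq3 : ContDiffOn ℝ 1 (fun p : ℝ × ℝ × ℝ => q3 p.1 p.2.1 p.2.2) U) :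
    (∫ y in y0..y1, ∫ z in z0..z1, (-(q1 x0 y z)) * (S x0 y z - vb1))
      + (∫ y in y0..y1, ∫ z in z0..z1, q1 x1 y z * (S x1 y z - vb2))
      + (∫ x in x0..x1, ∫ z in z0..z1, (-(q2 x y0 z)) * (S x y0 z - vb3))
      + (∫ x in x0..x1, ∫ z in z0..z1, q2 x y1 z * (S x y1 z - vb4))
      + (∫ x in x0..x1, ∫ y in y0..y1, (-(q3 x y z0)) * (S x y z0 - vb5))
      + (∫ x in x0..x1, ∫ y in y0..y1, q3 x y z1 * (S x y z1 - vb6))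
    = ∫ x in x0..x1, ∫ y in y0..y1, ∫ z in z0..z1,
        (deriv (fun t => q1 t y z) x * (S x0 y z - vb1)
          + deriv (fun s => q2 x s z) y * (S x y0 z - vb3)
          + deriv (fun r => q3 x y r) z * (S x y z0 - vb5)) := by
  have hx' : x0 ≤ x1 := hx.le
  have hy' : y0 ≤ y1 := hy.le
  have hz' : z0 ≤ z1 := hz.le
  have hx0 : x1 - x0 ≠ 0 := sub_ne_zero.2 hx.ne'
  have hy0 : y1 - y0 ≠ 0 := sub_ne_zero.2 hy.ne'
  have hz0 : z1 - z0 ≠ 0 := sub_ne_zero.2 hz.ne'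
  -- the "jump" identities for S
  have k1 : ∀ y z : ℝ, S x1 y z - vb2 = S x0 y z - vb1 := by
    intro y z
    rw [hS, hS, hc2, hex]
    field_simp
    ring
  have k2 : ∀ x z : ℝ, S x y1 z - vb4 = S x y0 z - vb3 := by
    intro x z
    rw [hS, hS, hc3, hey]
    field_simp
    ring
  have k3 : ∀ x y : ℝ, S x y z1 - vb6 = S x y z0 - vb5 := by
    intro x y
    rw [hS, hS, hc4, hez]
    field_simp
    ring
  -- continuity of S
  have hSc : Continuous (fun p : ℝ × ℝ × ℝ => S p.1 p.2.1 p.2.2) := by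
    rw [show (fun p : ℝ × ℝ × ℝ => S p.1 p.2.1 p.2.2)
      = fun p : ℝ × ℝ × ℝ => c1 + c2 * (p.1 - xc) + c3 * (p.2.1 - yc) + c4 * (p.2.2 - zc)
      from funext fun p => hS _ _ _]
    fun_prop
  -- membership in U
  have hmem : ∀ {x y z : ℝ}, x ∈ Icc x0 x1 → y ∈ Icc y0 y1 → z ∈ Icc z0 z1 →
      ((x, y, z) : ℝ × ℝ × ℝ) ∈ U :=
    fun hxm hym hzm => hTU (Set.mem_prod.mpr ⟨hxm, Set.mem_prod.mpr ⟨hym, hzm⟩⟩)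
  -- directional derivatives
  obtain ⟨D1, hD1c, hD1⟩ := dirDerivX hU hq1
  obtain ⟨D2, hD2c, hD2⟩ := dirDerivY hU hq2
  obtain ⟨D3, hD3c, hD3⟩ := dirDerivZ hU hq3
  -- boxes
  have hK3 : IsCompact (Icc x0 x1 ×ˢ Icc y0 y1 ×ˢ Icc z0 z1) :=
    isCompact_Icc.prod (isCompact_Icc.prod isCompact_Icc)
  have hsub3 : Ioc x0 x1 ×ˢ Ioc y0 y1 ×ˢ Ioc z0 z1 ⊆ Icc x0 x1 ×ˢ Icc y0 y1 ×ˢ Icc z0 z1 :=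
    prod_mono Ioc_subset_Icc_self (prod_mono Ioc_subset_Icc_self Ioc_subset_Icc_self)
  -- continuity of volume integrands
  have cA : ContinuousOn (fun p : ℝ × ℝ × ℝ => D1 p * (S x0 p.2.1 p.2.2 - vb1))
      (Icc x0 x1 ×ˢ Icc y0 y1 ×ˢ Icc z0 z1) :=
    (hD1c.mono hTU).mul ((hSc.comp (by fun_prop : Continuous fun p : ℝ × ℝ × ℝ =>
      ((x0, p.2.1, p.2.2) : ℝ × ℝ × ℝ))).sub continuous_const).continuousOn
  have cB : ContinuousOn (fun p : ℝ × ℝ × ℝ => D2 p * (S p.1 y0 p.2.2 - vb3))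
      (Icc x0 x1 ×ˢ Icc y0 y1 ×ˢ Icc z0 z1) :=
    (hD2c.mono hTU).mul ((hSc.comp (by fun_prop : Continuous fun p : ℝ × ℝ × ℝ =>
      ((p.1, y0, p.2.2) : ℝ × ℝ × ℝ))).sub continuous_const).continuousOn
  have cC : ContinuousOn (fun p : ℝ × ℝ × ℝ => D3 p * (S p.1 p.2.1 z0 - vb5))
      (Icc x0 x1 ×ˢ Icc y0 y1 ×ˢ Icc z0 z1) :=
    (hD3c.mono hTU).mul ((hSc.comp (by fun_prop : Continuous fun p : ℝ × ℝ × ℝ =>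
      ((p.1, p.2.1, z0) : ℝ × ℝ × ℝ))).sub continuous_const).continuousOn
  have hAi : Integrable (fun p : ℝ × ℝ × ℝ => D1 p * (S x0 p.2.1 p.2.2 - vb1))
      ((volume : Measure (ℝ × ℝ × ℝ)).restrict (Ioc x0 x1 ×ˢ Ioc y0 y1 ×ˢ Ioc z0 z1)) :=
    (cA.integrableOn_compact hK3).mono_set hsub3
  have hBi : Integrable (fun p : ℝ × ℝ × ℝ => D2 p * (S p.1 y0 p.2.2 - vb3))
      ((volume : Measure (ℝ × ℝ × ℝ)).restrict (Ioc x0 x1 ×ˢ Ioc y0 y1 ×ˢ Ioc z0 z1)) :=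
    (cB.integrableOn_compact hK3).mono_set hsub3
  have hCi : Integrable (fun p : ℝ × ℝ × ℝ => D3 p * (S p.1 p.2.1 z0 - vb5))
      ((volume : Measure (ℝ × ℝ × ℝ)).restrict (Ioc x0 x1 ×ˢ Ioc y0 y1 ×ˢ Ioc z0 z1)) :=
    (cC.integrableOn_compact hK3).mono_set hsub3
  -- term A : integrate out x
  have hA : (∫ p in Ioc x0 x1 ×ˢ Ioc y0 y1 ×ˢ Ioc z0 z1,
        D1 p * (S x0 p.2.1 p.2.2 - vb1))
      = ∫ w in Ioc y0 y1 ×ˢ Ioc z0 z1,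
        (q1 x1 w.1 w.2 - q1 x0 w.1 w.2) * (S x0 w.1 w.2 - vb1) := by
    refine (prodIntSymm hAi).trans
      (setIntegral_congr_fun (measurableSet_Ioc.prod measurableSet_Ioc) fun w hw => ?_)
    have hw1 : w.1 ∈ Icc y0 y1 := Ioc_subset_Icc_self hw.1
    have hw2 : w.2 ∈ Icc z0 z1 := Ioc_subset_Icc_self hw.2
    exact ftc1 (f := fun t => q1 t w.1 w.2) (f' := fun x => D1 (x, w)) hx'
      (fun x hxm => hD1 x w.1 w.2 (hmem hxm hw1 hw2))
      (hD1c.comp (Continuous.continuousOn (by fun_prop))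
        (fun x hxm => hmem hxm hw1 hw2))
      (S x0 w.1 w.2 - vb1)
  -- term B : integrate out y
  have hB : (∫ p in Ioc x0 x1 ×ˢ Ioc y0 y1 ×ˢ Ioc z0 z1,
        D2 p * (S p.1 y0 p.2.2 - vb3))
      = ∫ x in Ioc x0 x1, ∫ z in Ioc z0 z1,
        (q2 x y1 z - q2 x y0 z) * (S x y0 z - vb3) := by
    refine (prodInt hBi).trans (setIntegral_congr_fun measurableSet_Ioc fun x hx1 => ?_)
    have hx1' : x ∈ Icc x0 x1 := Ioc_subset_Icc_self hx1
    have hBix : Integrable (fun w : ℝ × ℝ => D2 (x, w) * (S x y0 w.2 - vb3))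
        ((volume : Measure (ℝ × ℝ)).restrict (Ioc y0 y1 ×ˢ Ioc z0 z1)) := by
      refine (ContinuousOn.integrableOn_compact (isCompact_Icc.prod isCompact_Icc) ?_).mono_set
        (prod_mono Ioc_subset_Icc_self Ioc_subset_Icc_self)
      exact ((hD2c.mono hTU).comp (Continuous.continuousOn (by fun_prop))
          (fun w hw => Set.mem_prod.mpr ⟨hx1', hw⟩)).mul
        ((hSc.comp (by fun_prop : Continuous fun w : ℝ × ℝ =>
          ((x, y0, w.2) : ℝ × ℝ × ℝ))).sub continuous_const).continuousOn
    refine (prodIntSymm hBix).trans (setIntegral_congr_fun measurableSet_Ioc fun z hz1 => ?_)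
    have hz1' : z ∈ Icc z0 z1 := Ioc_subset_Icc_self hz1
    exact ftc1 (f := fun s => q2 x s z) (f' := fun y => D2 (x, y, z)) hy'
      (fun y hym => hD2 x y z (hmem hx1' hym hz1'))
      (hD2c.comp (Continuous.continuousOn (by fun_prop))
        (fun y hym => hmem hx1' hym hz1'))
      (S x y0 z - vb3)
  -- term C : integrate out z
  have hC : (∫ p in Ioc x0 x1 ×ˢ Ioc y0 y1 ×ˢ Ioc z0 z1,
        D3 p * (S p.1 p.2.1 z0 - vb5))
      = ∫ x in Ioc x0 x1, ∫ y in Ioc y0 y1,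
        (q3 x y z1 - q3 x y z0) * (S x y z0 - vb5) := by
    refine (prodInt hCi).trans (setIntegral_congr_fun measurableSet_Ioc fun x hx1 => ?_)
    have hx1' : x ∈ Icc x0 x1 := Ioc_subset_Icc_self hx1
    have hCix : Integrable (fun w : ℝ × ℝ => D3 (x, w) * (S x w.1 z0 - vb5))
        ((volume : Measure (ℝ × ℝ)).restrict (Ioc y0 y1 ×ˢ Ioc z0 z1)) := by
      refine (ContinuousOn.integrableOn_compact (isCompact_Icc.prod isCompact_Icc) ?_).mono_set
        (prod_mono Ioc_subset_Icc_self Ioc_subset_Icc_self)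
      exact ((hD3c.mono hTU).comp (Continuous.continuousOn (by fun_prop))
          (fun w hw => Set.mem_prod.mpr ⟨hx1', hw⟩)).mul
        ((hSc.comp (by fun_prop : Continuous fun w : ℝ × ℝ =>
          ((x, w.1, z0) : ℝ × ℝ × ℝ))).sub continuous_const).continuousOn
    refine (prodInt hCix).trans (setIntegral_congr_fun measurableSet_Ioc fun y hy1 => ?_)
    have hy1' : y ∈ Icc y0 y1 := Ioc_subset_Icc_self hy1
    exact ftc1 (f := fun r => q3 x y r) (f' := fun z => D3 (x, y, z)) hz'
      (fun z hzm => hD3 x y z (hmem hx1' hy1' hzm))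
      (hD3c.comp (Continuous.continuousOn (by fun_prop))
        (fun z hzm => hmem hx1' hy1' hzm))
      (S x y z0 - vb5)
  -- boundary pairs
  have cT1 : ContinuousOn (fun w : ℝ × ℝ => (-(q1 x0 w.1 w.2)) * (S x0 w.1 w.2 - vb1))
      (Icc y0 y1 ×ˢ Icc z0 z1) :=
    ((hq1.continuousOn.comp (Continuous.continuousOn (by fun_prop))
        (fun w hw => hmem (left_mem_Icc.2 hx') hw.1 hw.2)).neg).mul
      ((hSc.comp (by fun_prop : Continuous fun w : ℝ × ℝ =>
        ((x0, w.1, w.2) : ℝ × ℝ × ℝ))).sub continuous_const).continuousOn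
  have cT2 : ContinuousOn (fun w : ℝ × ℝ => q1 x1 w.1 w.2 * (S x1 w.1 w.2 - vb2))
      (Icc y0 y1 ×ˢ Icc z0 z1) :=
    (hq1.continuousOn.comp (Continuous.continuousOn (by fun_prop))
        (fun w hw => hmem (right_mem_Icc.2 hx') hw.1 hw.2)).mul
      ((hSc.comp (by fun_prop : Continuous fun w : ℝ × ℝ =>
        ((x1, w.1, w.2) : ℝ × ℝ × ℝ))).sub continuous_const).continuousOn
  have cT3 : ContinuousOn (fun v : ℝ × ℝ => (-(q2 v.1 y0 v.2)) * (S v.1 y0 v.2 - vb3))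
      (Icc x0 x1 ×ˢ Icc z0 z1) :=
    ((hq2.continuousOn.comp (Continuous.continuousOn (by fun_prop))
        (fun v hv => hmem hv.1 (left_mem_Icc.2 hy') hv.2)).neg).mul
      ((hSc.comp (by fun_prop : Continuous fun v : ℝ × ℝ =>
        ((v.1, y0, v.2) : ℝ × ℝ × ℝ))).sub continuous_const).continuousOn
  have cT4 : ContinuousOn (fun v : ℝ × ℝ => q2 v.1 y1 v.2 * (S v.1 y1 v.2 - vb4))
      (Icc x0 x1 ×ˢ Icc z0 z1) :=
    (hq2.continuousOn.comp (Continuous.continuousOn (by fun_prop))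
        (fun v hv => hmem hv.1 (right_mem_Icc.2 hy') hv.2)).mul
      ((hSc.comp (by fun_prop : Continuous fun v : ℝ × ℝ =>
        ((v.1, y1, v.2) : ℝ × ℝ × ℝ))).sub continuous_const).continuousOn
  have cT5 : ContinuousOn (fun v : ℝ × ℝ => (-(q3 v.1 v.2 z0)) * (S v.1 v.2 z0 - vb5))
      (Icc x0 x1 ×ˢ Icc y0 y1) :=
    ((hq3.continuousOn.comp (Continuous.continuousOn (by fun_prop))
        (fun v hv => hmem hv.1 hv.2 (left_mem_Icc.2 hz'))).neg).mul
      ((hSc.comp (by fun_prop : Continuous fun v : ℝ × ℝ =>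
        ((v.1, v.2, z0) : ℝ × ℝ × ℝ))).sub continuous_const).continuousOn
  have cT6 : ContinuousOn (fun v : ℝ × ℝ => q3 v.1 v.2 z1 * (S v.1 v.2 z1 - vb6))
      (Icc x0 x1 ×ˢ Icc y0 y1) :=
    (hq3.continuousOn.comp (Continuous.continuousOn (by fun_prop))
        (fun v hv => hmem hv.1 hv.2 (right_mem_Icc.2 hz'))).mul
      ((hSc.comp (by fun_prop : Continuous fun v : ℝ × ℝ =>
        ((v.1, v.2, z1) : ℝ × ℝ × ℝ))).sub continuous_const).continuousOn
  have hP1 : ((∫ y in y0..y1, ∫ z in z0..z1, (-(q1 x0 y z)) * (S x0 y z - vb1))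
      + ∫ y in y0..y1, ∫ z in z0..z1, q1 x1 y z * (S x1 y z - vb2))
      = ∫ w in Ioc y0 y1 ×ˢ Ioc z0 z1,
        (q1 x1 w.1 w.2 - q1 x0 w.1 w.2) * (S x0 w.1 w.2 - vb1) :=
    pair2 (f := fun w : ℝ × ℝ => (-(q1 x0 w.1 w.2)) * (S x0 w.1 w.2 - vb1))
      (g := fun w : ℝ × ℝ => q1 x1 w.1 w.2 * (S x1 w.1 w.2 - vb2))
      (h := fun w : ℝ × ℝ => (q1 x1 w.1 w.2 - q1 x0 w.1 w.2) * (S x0 w.1 w.2 - vb1))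
      hy' hz' cT1 cT2 (fun w _ => by simp only [k1]; ring)
  have hP2 : ((∫ x in x0..x1, ∫ z in z0..z1, (-(q2 x y0 z)) * (S x y0 z - vb3))
      + ∫ x in x0..x1, ∫ z in z0..z1, q2 x y1 z * (S x y1 z - vb4))
      = ∫ v in Ioc x0 x1 ×ˢ Ioc z0 z1,
        (q2 v.1 y1 v.2 - q2 v.1 y0 v.2) * (S v.1 y0 v.2 - vb3) :=
    pair2 (f := fun v : ℝ × ℝ => (-(q2 v.1 y0 v.2)) * (S v.1 y0 v.2 - vb3))
      (g := fun v : ℝ × ℝ => q2 v.1 y1 v.2 * (S v.1 y1 v.2 - vb4))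
      (h := fun v : ℝ × ℝ => (q2 v.1 y1 v.2 - q2 v.1 y0 v.2) * (S v.1 y0 v.2 - vb3))
      hx' hz' cT3 cT4 (fun v _ => by simp only [k2]; ring)
  have hP3 : ((∫ x in x0..x1, ∫ y in y0..y1, (-(q3 x y z0)) * (S x y z0 - vb5))
      + ∫ x in x0..x1, ∫ y in y0..y1, q3 x y z1 * (S x y z1 - vb6))
      = ∫ v in Ioc x0 x1 ×ˢ Ioc y0 y1,
        (q3 v.1 v.2 z1 - q3 v.1 v.2 z0) * (S v.1 v.2 z0 - vb5) :=
    pair2 (f := fun v : ℝ × ℝ => (-(q3 v.1 v.2 z0)) * (S v.1 v.2 z0 - vb5))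
      (g := fun v : ℝ × ℝ => q3 v.1 v.2 z1 * (S v.1 v.2 z1 - vb6))
      (h := fun v : ℝ × ℝ => (q3 v.1 v.2 z1 - q3 v.1 v.2 z0) * (S v.1 v.2 z0 - vb5))
      hx' hy' cT5 cT6 (fun v _ => by simp only [k3]; ring)
  -- convert the 2D product integrals for B, C pairs into iterated form
  have hP2' : (∫ v in Ioc x0 x1 ×ˢ Ioc z0 z1,
        (q2 v.1 y1 v.2 - q2 v.1 y0 v.2) * (S v.1 y0 v.2 - vb3))
      = ∫ x in Ioc x0 x1, ∫ z in Ioc z0 z1,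
        (q2 x y1 z - q2 x y0 z) * (S x y0 z - vb3) := by
    refine prodInt ?_
    refine (ContinuousOn.integrableOn_compact (isCompact_Icc.prod isCompact_Icc) ?_).mono_set
      (prod_mono Ioc_subset_Icc_self Ioc_subset_Icc_self)
    exact ((hq2.continuousOn.comp (Continuous.continuousOn (by fun_prop))
        (fun v hv => hmem hv.1 (right_mem_Icc.2 hy') hv.2)).sub
      (hq2.continuousOn.comp (Continuous.continuousOn (by fun_prop))
        (fun v hv => hmem hv.1 (left_mem_Icc.2 hy') hv.2))).mul
      ((hSc.comp (by fun_prop : Continuous fun v : ℝ × ℝ =>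
        ((v.1, y0, v.2) : ℝ × ℝ × ℝ))).sub continuous_const).continuousOn
  have hP3' : (∫ v in Ioc x0 x1 ×ˢ Ioc y0 y1,
        (q3 v.1 v.2 z1 - q3 v.1 v.2 z0) * (S v.1 v.2 z0 - vb5))
      = ∫ x in Ioc x0 x1, ∫ y in Ioc y0 y1,
        (q3 x y z1 - q3 x y z0) * (S x y z0 - vb5) := by
    refine prodInt ?_
    refine (ContinuousOn.integrableOn_compact (isCompact_Icc.prod isCompact_Icc) ?_).mono_set
      (prod_mono Ioc_subset_Icc_self Ioc_subset_Icc_self)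
    exact ((hq3.continuousOn.comp (Continuous.continuousOn (by fun_prop))
        (fun v hv => hmem hv.1 hv.2 (right_mem_Icc.2 hz'))).sub
      (hq3.continuousOn.comp (Continuous.continuousOn (by fun_prop))
        (fun v hv => hmem hv.1 hv.2 (left_mem_Icc.2 hz')))).mul
      ((hSc.comp (by fun_prop : Continuous fun v : ℝ × ℝ =>
        ((v.1, v.2, z0) : ℝ × ℝ × ℝ))).sub continuous_const).continuousOn
  -- the RHS triple integral
  have hEq : ∀ p ∈ (Icc x0 x1 ×ˢ Icc y0 y1 ×ˢ Icc z0 z1),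
      (fun p : ℝ × ℝ × ℝ => deriv (fun t => q1 t p.2.1 p.2.2) p.1 * (S x0 p.2.1 p.2.2 - vb1)
        + deriv (fun s => q2 p.1 s p.2.2) p.2.1 * (S p.1 y0 p.2.2 - vb3)
        + deriv (fun r => q3 p.1 p.2.1 r) p.2.2 * (S p.1 p.2.1 z0 - vb5)) p
      = (fun p : ℝ × ℝ × ℝ => D1 p * (S x0 p.2.1 p.2.2 - vb1) + D2 p * (S p.1 y0 p.2.2 - vb3)
        + D3 p * (S p.1 p.2.1 z0 - vb5)) p := by
    intro p hp
    have e1 : deriv (fun t => q1 t p.2.1 p.2.2) p.1 = D1 p :=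
      (hD1 p.1 p.2.1 p.2.2 (hTU hp)).deriv
    have e2 : deriv (fun s => q2 p.1 s p.2.2) p.2.1 = D2 p :=
      (hD2 p.1 p.2.1 p.2.2 (hTU hp)).deriv
    have e3 : deriv (fun r => q3 p.1 p.2.1 r) p.2.2 = D3 p :=
      (hD3 p.1 p.2.1 p.2.2 (hTU hp)).deriv
    beta_reduce
    rw [e1, e2, e3]
  have cRHS : ContinuousOn
      (fun p : ℝ × ℝ × ℝ => deriv (fun t => q1 t p.2.1 p.2.2) p.1 * (S x0 p.2.1 p.2.2 - vb1)
        + deriv (fun s => q2 p.1 s p.2.2) p.2.1 * (S p.1 y0 p.2.2 - vb3)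
        + deriv (fun r => q3 p.1 p.2.1 r) p.2.2 * (S p.1 p.2.1 z0 - vb5))
      (Icc x0 x1 ×ˢ Icc y0 y1 ×ˢ Icc z0 z1) :=
    ((cA.add cB).add cC).congr hEq
  have hR : (∫ x in x0..x1, ∫ y in y0..y1, ∫ z in z0..z1,
        (deriv (fun t => q1 t y z) x * (S x0 y z - vb1)
          + deriv (fun s => q2 x s z) y * (S x y0 z - vb3)
          + deriv (fun r => q3 x y r) z * (S x y z0 - vb5)))
      = (∫ p in Ioc x0 x1 ×ˢ Ioc y0 y1 ×ˢ Ioc z0 z1, D1 p * (S x0 p.2.1 p.2.2 - vb1))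
        + (∫ p in Ioc x0 x1 ×ˢ Ioc y0 y1 ×ˢ Ioc z0 z1, D2 p * (S p.1 y0 p.2.2 - vb3))
        + (∫ p in Ioc x0 x1 ×ˢ Ioc y0 y1 ×ˢ Ioc z0 z1, D3 p * (S p.1 p.2.1 z0 - vb5)) := by
    have step1 := iter3 (f := fun p : ℝ × ℝ × ℝ =>
        deriv (fun t => q1 t p.2.1 p.2.2) p.1 * (S x0 p.2.1 p.2.2 - vb1)
        + deriv (fun s => q2 p.1 s p.2.2) p.2.1 * (S p.1 y0 p.2.2 - vb3)
        + deriv (fun r => q3 p.1 p.2.1 r) p.2.2 * (S p.1 p.2.1 z0 - vb5))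
      hx' hy' hz' cRHS
    refine step1.trans ?_
    have step2 : (∫ p in Ioc x0 x1 ×ˢ Ioc y0 y1 ×ˢ Ioc z0 z1,
        (deriv (fun t => q1 t p.2.1 p.2.2) p.1 * (S x0 p.2.1 p.2.2 - vb1)
          + deriv (fun s => q2 p.1 s p.2.2) p.2.1 * (S p.1 y0 p.2.2 - vb3)
          + deriv (fun r => q3 p.1 p.2.1 r) p.2.2 * (S p.1 p.2.1 z0 - vb5)))
        = ∫ p in Ioc x0 x1 ×ˢ Ioc y0 y1 ×ˢ Ioc z0 z1,
          (D1 p * (S x0 p.2.1 p.2.2 - vb1) + D2 p * (S p.1 y0 p.2.2 - vb3)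
            + D3 p * (S p.1 p.2.1 z0 - vb5)) :=
      setIntegral_congr_fun (measurableSet_Ioc.prod (measurableSet_Ioc.prod measurableSet_Ioc))
        (fun p hp => hEq p (hsub3 hp))
    refine step2.trans ?_
    have hABi : Integrable (fun p : ℝ × ℝ × ℝ =>
        D1 p * (S x0 p.2.1 p.2.2 - vb1) + D2 p * (S p.1 y0 p.2.2 - vb3))
        ((volume : Measure (ℝ × ℝ × ℝ)).restrict (Ioc x0 x1 ×ˢ Ioc y0 y1 ×ˢ Ioc z0 z1)) :=
      ((cA.add cB).integrableOn_compact hK3).mono_set hsub3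
    calc (∫ p in Ioc x0 x1 ×ˢ Ioc y0 y1 ×ˢ Ioc z0 z1,
          (D1 p * (S x0 p.2.1 p.2.2 - vb1) + D2 p * (S p.1 y0 p.2.2 - vb3)
            + D3 p * (S p.1 p.2.1 z0 - vb5)))
        = (∫ p in Ioc x0 x1 ×ˢ Ioc y0 y1 ×ˢ Ioc z0 z1,
            (D1 p * (S x0 p.2.1 p.2.2 - vb1) + D2 p * (S p.1 y0 p.2.2 - vb3)))
          + ∫ p in Ioc x0 x1 ×ˢ Ioc y0 y1 ×ˢ Ioc z0 z1, D3 p * (S p.1 p.2.1 z0 - vb5) :=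
          integral_add hABi hCi
      _ = (∫ p in Ioc x0 x1 ×ˢ Ioc y0 y1 ×ˢ Ioc z0 z1, D1 p * (S x0 p.2.1 p.2.2 - vb1))
          + (∫ p in Ioc x0 x1 ×ˢ Ioc y0 y1 ×ˢ Ioc z0 z1, D2 p * (S p.1 y0 p.2.2 - vb3))
          + (∫ p in Ioc x0 x1 ×ˢ Ioc y0 y1 ×ˢ Ioc z0 z1, D3 p * (S p.1 p.2.1 z0 - vb5)) := by
          rw [integral_add hAi hBi]
  rw [hR]
  linarith [hP1, hP2, hP3, hP2', hP3', hA, hB, hC]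
end

section
/- Let $f$ be continuously differentiable on a neighborhood of $T$ and let $\chi(x,y,z)=\chi_c+\alpha\,(y-y_c)+\beta\,(z-z_c)$ be an affine function depending only on $y$ and $z$ (with $\chi_c,\alpha,\beta\in\mathbb{R}$). Then $\int_T f\,\chi\,dV=\chi_c\int_T f\,dV+\alpha\int_T \partial_y f\,E_y(y)\,dV+\beta\int_T \partial_z f\,E_z(z)\,dV$, where $E_y(y)=\frac{e_y^2}{8}-\frac{(y-y_c)^2}{2}$ and $E_z(z)=\frac{e_z^2}{8}-\frac{(z-z_c)^2}{2}$. -/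
open MeasureTheory intervalIntegral Set

noncomputable def clampR (a b t : ℝ) : ℝ := max a (min t b)

lemma clampR_mem {a b : ℝ} (hab : a ≤ b) (t : ℝ) : clampR a b t ∈ Set.Icc a b :=
  ⟨le_max_left _ _, max_le hab (min_le_right _ _)⟩

lemma clampR_eq {a b t : ℝ} (ht : t ∈ Set.Icc a b) : clampR a b t = t := by
  unfold clampR; rw [min_eq_left ht.2, max_eq_right ht.1]

lemma clampR_cont (a b : ℝ) : Continuous (clampR a b) :=
  continuous_const.max (continuous_id.min continuous_const)

lemma helper_ibp (c d m e : ℝ) (hcd : c ≤ d) (hm : m = (c + d) / 2) (he : e = d - c)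
    (g g' : ℝ → ℝ) (hg : ∀ t ∈ Set.Icc c d, HasDerivAt g (g' t) t)
    (hg' : ContinuousOn g' (Set.Icc c d)) :
    (∫ t in c..d, g t * (t - m)) = ∫ t in c..d, g' t * (e ^ 2 / 8 - (t - m) ^ 2 / 2) := by
  have huIcc : Set.uIcc c d = Set.Icc c d := Set.uIcc_of_le hcd
  have hv : ∀ t ∈ Set.uIcc c d,
      HasDerivAt (fun t => (t - m) ^ 2 / 2 - e ^ 2 / 8) (t - m) t := by
    intro t _
    have : HasDerivAt (fun t : ℝ => (t - m) ^ 2 / 2 - e ^ 2 / 8)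
        ((2 : ℕ) * (t - m) ^ (2 - 1) * 1 / 2) t :=
      ((((hasDerivAt_id t).sub_const m).pow 2).div_const 2).sub_const _
    convert this using 1
    push_cast; ring
  have hu : ∀ t ∈ Set.uIcc c d, HasDerivAt g (g' t) t := by
    intro t ht; exact hg t (huIcc ▸ ht)
  have hg'i : IntervalIntegrable g' volume c d := by
    apply ContinuousOn.intervalIntegrable; rwa [huIcc]
  have hvi : IntervalIntegrable (fun t => t - m) volume c d := by
    apply ContinuousOn.intervalIntegrable; fun_prop
  have key := intervalIntegral.integral_mul_deriv_eq_deriv_mul hu hv hg'i hvi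
  rw [key]
  have hc : (c - m) ^ 2 / 2 - e ^ 2 / 8 = 0 := by rw [hm, he]; ring
  have hd : (d - m) ^ 2 / 2 - e ^ 2 / 8 = 0 := by rw [hm, he]; ring
  rw [hc, hd]
  have : (∫ t in c..d, g' t * (e ^ 2 / 8 - (t - m) ^ 2 / 2))
      = ∫ t in c..d, -(g' t * ((t - m) ^ 2 / 2 - e ^ 2 / 8)) := by
    apply intervalIntegral.integral_congr; intro t _; ring
  rw [this, intervalIntegral.integral_neg]
  ring

lemma helper_swap {a b c d : ℝ} (hab : a ≤ b) (hcd : c ≤ d) (H : ℝ → ℝ → ℝ)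
    (hH : ContinuousOn (fun p : ℝ × ℝ => H p.1 p.2) (Set.Icc a b ×ˢ Set.Icc c d)) :
    (∫ y in a..b, ∫ z in c..d, H y z) = ∫ z in c..d, ∫ y in a..b, H y z := by
  rw [intervalIntegral.integral_of_le hab, intervalIntegral.integral_of_le hcd]
  simp_rw [intervalIntegral.integral_of_le hcd, intervalIntegral.integral_of_le hab]
  apply MeasureTheory.integral_integral_swap
  have h1 : IntegrableOn (fun p : ℝ × ℝ => H p.1 p.2) (Set.Ioc a b ×ˢ Set.Ioc c d) := by
    apply (hH.integrableOn_compact (isCompact_Icc.prod isCompact_Icc)).mono_set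
    exact Set.prod_mono Set.Ioc_subset_Icc_self Set.Ioc_subset_Icc_self
  rw [Measure.prod_restrict]
  rw [IntegrableOn, Measure.volume_eq_prod ℝ ℝ] at h1
  exact h1

theorem stmt9 (x0 x1 y0 y1 z0 z1 : ℝ) (hx : x0 < x1) (hy : y0 < y1) (hz : z0 < z1)
    (ex ey ez xc yc zc : ℝ)
    (hex : ex = x1 - x0) (hey : ey = y1 - y0) (hez : ez = z1 - z0)
    (hxc : xc = (x0 + x1) / 2) (hyc : yc = (y0 + y1) / 2) (hzc : zc = (z0 + z1) / 2)
    -- `f` is continuously differentiable on a neighborhood `U` of `T`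
    (f : ℝ → ℝ → ℝ → ℝ) (U : Set (ℝ × ℝ × ℝ)) (hU : IsOpen U)
    (hTU : Set.Icc x0 x1 ×ˢ Set.Icc y0 y1 ×ˢ Set.Icc z0 z1 ⊆ U)
    (hf : ContDiffOn ℝ 1 (fun p : ℝ × ℝ × ℝ => f p.1 p.2.1 p.2.2) U)
    -- `χ` is an affine function of `y` and `z` only
    (χc α β : ℝ) :
    (∫ x in x0..x1, ∫ y in y0..y1, ∫ z in z0..z1,
        f x y z * (χc + α * (y - yc) + β * (z - zc)))
    = χc * (∫ x in x0..x1, ∫ y in y0..y1, ∫ z in z0..z1, f x y z)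
      + α * (∫ x in x0..x1, ∫ y in y0..y1, ∫ z in z0..z1,
          deriv (fun s => f x s z) y * (ey ^ 2 / 8 - (y - yc) ^ 2 / 2))
      + β * (∫ x in x0..x1, ∫ y in y0..y1, ∫ z in z0..z1,
          deriv (fun r => f x y r) z * (ez ^ 2 / 8 - (z - zc) ^ 2 / 2)) := by
  have hx' := hx.le
  have hy' := hy.le
  have hz' := hz.le
  have huIx : Set.uIcc x0 x1 = Set.Icc x0 x1 := Set.uIcc_of_le hx'
  have huIy : Set.uIcc y0 y1 = Set.Icc y0 y1 := Set.uIcc_of_le hy'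
  have huIz : Set.uIcc z0 z1 = Set.Icc z0 z1 := Set.uIcc_of_le hz'
  -- derivative machinery
  have hdF : ∀ p ∈ U, HasFDerivAt (fun p : ℝ × ℝ × ℝ => f p.1 p.2.1 p.2.2)
      (fderiv ℝ (fun p : ℝ × ℝ × ℝ => f p.1 p.2.1 p.2.2) p) p := by
    intro p hp
    exact (((hf.differentiableOn one_ne_zero) p hp).differentiableAt (hU.mem_nhds hp)).hasFDerivAt
  set Fy : ℝ × ℝ × ℝ → ℝ :=
    fun p => fderiv ℝ (fun q : ℝ × ℝ × ℝ => f q.1 q.2.1 q.2.2) p (0, 1, 0) with hFydef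
  set Fz : ℝ × ℝ × ℝ → ℝ :=
    fun p => fderiv ℝ (fun q : ℝ × ℝ × ℝ => f q.1 q.2.1 q.2.2) p (0, 0, 1) with hFzdef
  have hfdc : ContinuousOn (fderiv ℝ (fun q : ℝ × ℝ × ℝ => f q.1 q.2.1 q.2.2)) U :=
    hf.continuousOn_fderiv_of_isOpen hU le_rfl
  have hFyU : ContinuousOn Fy U := hfdc.clm_apply continuousOn_const
  have hFzU : ContinuousOn Fz U := hfdc.clm_apply continuousOn_const
  have hyderiv : ∀ a b c : ℝ, (a, b, c) ∈ U → HasDerivAt (fun s => f a s c) (Fy (a, b, c)) b := by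
    intro a b c hp
    have hcurve : HasDerivAt (fun s : ℝ => ((a, s, c) : ℝ × ℝ × ℝ))
        (((0 : ℝ), (1 : ℝ), (0 : ℝ))) b :=
      HasDerivAt.prodMk (hasDerivAt_const b a) (HasDerivAt.prodMk (hasDerivAt_id b) (hasDerivAt_const b c))
    have := (hdF _ hp).comp_hasDerivAt b hcurve
    exact this
  have hzderiv : ∀ a b c : ℝ, (a, b, c) ∈ U → HasDerivAt (fun r => f a b r) (Fz (a, b, c)) c := by
    intro a b c hp
    have hcurve : HasDerivAt (fun r : ℝ => ((a, b, r) : ℝ × ℝ × ℝ))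
        (((0 : ℝ), (0 : ℝ), (1 : ℝ))) c :=
      HasDerivAt.prodMk (hasDerivAt_const c a) (HasDerivAt.prodMk (hasDerivAt_const c b) (hasDerivAt_id c))
    have := (hdF _ hp).comp_hasDerivAt c hcurve
    exact this
  have hFU : ContinuousOn (fun p : ℝ × ℝ × ℝ => f p.1 p.2.1 p.2.2) U := hf.continuousOn
  -- clamped (globally continuous) versions
  have hproj : ∀ p : ℝ × ℝ × ℝ,
      ((clampR x0 x1 p.1, clampR y0 y1 p.2.1, clampR z0 z1 p.2.2) : ℝ × ℝ × ℝ) ∈ U :=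
    fun p => hTU ⟨clampR_mem hx' _, clampR_mem hy' _, clampR_mem hz' _⟩
  have hprojc : Continuous fun p : ℝ × ℝ × ℝ =>
      ((clampR x0 x1 p.1, clampR y0 y1 p.2.1, clampR z0 z1 p.2.2) : ℝ × ℝ × ℝ) := by
    refine ((clampR_cont x0 x1).comp continuous_fst).prodMk
      (((clampR_cont y0 y1).comp (continuous_fst.comp continuous_snd)).prodMk
        ((clampR_cont z0 z1).comp (continuous_snd.comp continuous_snd)))
  have hK0 : Continuous fun p : ℝ × ℝ × ℝ =>
      f (clampR x0 x1 p.1) (clampR y0 y1 p.2.1) (clampR z0 z1 p.2.2) :=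
    hFU.comp_continuous hprojc hproj
  have hK1 : Continuous fun p : ℝ × ℝ × ℝ =>
      Fy (clampR x0 x1 p.1, clampR y0 y1 p.2.1, clampR z0 z1 p.2.2) :=
    hFyU.comp_continuous hprojc hproj
  have hK2 : Continuous fun p : ℝ × ℝ × ℝ =>
      Fz (clampR x0 x1 p.1, clampR y0 y1 p.2.1, clampR z0 z1 p.2.2) :=
    hFzU.comp_continuous hprojc hproj
  -- parametric continuity of inner (z) integrals
  have hW0 : Continuous fun q : ℝ × ℝ => ∫ z in z0..z1,
      f (clampR x0 x1 q.1) (clampR y0 y1 q.2) (clampR z0 z1 z) := by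
    apply intervalIntegral.continuous_parametric_intervalIntegral_of_continuous'
    exact hK0.comp ((continuous_fst.comp continuous_fst).prodMk
      ((continuous_snd.comp continuous_fst).prodMk continuous_snd))
  have hW1 : Continuous fun q : ℝ × ℝ => ∫ z in z0..z1,
      Fy (clampR x0 x1 q.1, clampR y0 y1 q.2, clampR z0 z1 z)
        * (ey ^ 2 / 8 - (q.2 - yc) ^ 2 / 2) := by
    apply intervalIntegral.continuous_parametric_intervalIntegral_of_continuous'
    exact (hK1.comp ((continuous_fst.comp continuous_fst).prodMk
      ((continuous_snd.comp continuous_fst).prodMk continuous_snd))).mul (by fun_prop)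
  have hW2 : Continuous fun q : ℝ × ℝ => ∫ z in z0..z1,
      Fz (clampR x0 x1 q.1, clampR y0 y1 q.2, clampR z0 z1 z)
        * (ez ^ 2 / 8 - (z - zc) ^ 2 / 2) := by
    apply intervalIntegral.continuous_parametric_intervalIntegral_of_continuous'
    exact (hK2.comp ((continuous_fst.comp continuous_fst).prodMk
      ((continuous_snd.comp continuous_fst).prodMk continuous_snd))).mul (by fun_prop)
  -- parametric continuity of double (y,z) integrals, as functions of x
  have hV0 : Continuous fun x : ℝ => ∫ y in y0..y1, ∫ z in z0..z1,
      f (clampR x0 x1 x) (clampR y0 y1 y) (clampR z0 z1 z) := by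
    apply intervalIntegral.continuous_parametric_intervalIntegral_of_continuous'
    exact hW0
  have hV1 : Continuous fun x : ℝ => ∫ y in y0..y1, ∫ z in z0..z1,
      Fy (clampR x0 x1 x, clampR y0 y1 y, clampR z0 z1 z)
        * (ey ^ 2 / 8 - (y - yc) ^ 2 / 2) := by
    apply intervalIntegral.continuous_parametric_intervalIntegral_of_continuous'
    exact hW1
  have hV2 : Continuous fun x : ℝ => ∫ y in y0..y1, ∫ z in z0..z1,
      Fz (clampR x0 x1 x, clampR y0 y1 y, clampR z0 z1 z)
        * (ez ^ 2 / 8 - (z - zc) ^ 2 / 2) := by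
    apply intervalIntegral.continuous_parametric_intervalIntegral_of_continuous'
    exact hW2
  -- the key identity for each fixed x
  have key : ∀ x ∈ Set.Icc x0 x1,
      (∫ y in y0..y1, ∫ z in z0..z1, f x y z * (χc + α * (y - yc) + β * (z - zc)))
      = χc * (∫ y in y0..y1, ∫ z in z0..z1, f x y z)
        + α * (∫ y in y0..y1, ∫ z in z0..z1,
            Fy (x, y, z) * (ey ^ 2 / 8 - (y - yc) ^ 2 / 2))
        + β * (∫ y in y0..y1, ∫ z in z0..z1,
            Fz (x, y, z) * (ez ^ 2 / 8 - (z - zc) ^ 2 / 2)) := by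
    intro x hxm
    -- continuity of z-slices
    have hcf : ∀ y ∈ Set.Icc y0 y1, ContinuousOn (fun z => f x y z) (Set.Icc z0 z1) := by
      intro y hym
      have hbase : Continuous fun z : ℝ =>
          f (clampR x0 x1 x) (clampR y0 y1 y) (clampR z0 z1 z) :=
        hK0.comp (show Continuous fun z : ℝ => ((x, y, z) : ℝ × ℝ × ℝ) by fun_prop)
      refine hbase.continuousOn.congr ?_
      intro z hzm
      simp only
      rw [clampR_eq hxm, clampR_eq hym, clampR_eq hzm]
    have hcFz : ∀ y ∈ Set.Icc y0 y1, ContinuousOn (fun z => Fz (x, y, z)) (Set.Icc z0 z1) := by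
      intro y hym
      have hbase : Continuous fun z : ℝ =>
          Fz (clampR x0 x1 x, clampR y0 y1 y, clampR z0 z1 z) :=
        hK2.comp (show Continuous fun z : ℝ => ((x, y, z) : ℝ × ℝ × ℝ) by fun_prop)
      refine hbase.continuousOn.congr ?_
      intro z hzm
      simp only
      rw [clampR_eq hxm, clampR_eq hym, clampR_eq hzm]
    -- step 1: inner z-integral
    have step1 : ∀ y ∈ Set.Icc y0 y1,
        (∫ z in z0..z1, f x y z * (χc + α * (y - yc) + β * (z - zc)))
        = χc * (∫ z in z0..z1, f x y z)
          + (∫ z in z0..z1, f x y z) * (α * (y - yc))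
          + β * (∫ z in z0..z1, Fz (x, y, z) * (ez ^ 2 / 8 - (z - zc) ^ 2 / 2)) := by
      intro y hym
      have h1 : IntervalIntegrable (fun z => (χc + α * (y - yc)) * f x y z) volume z0 z1 := by
        apply ContinuousOn.intervalIntegrable
        rw [huIz]; exact continuousOn_const.mul (hcf y hym)
      have h2 : IntervalIntegrable (fun z => β * (f x y z * (z - zc))) volume z0 z1 := by
        apply ContinuousOn.intervalIntegrable
        rw [huIz]
        exact continuousOn_const.mul ((hcf y hym).mul
          ((continuous_id.sub continuous_const).continuousOn))
      have e1 : (∫ z in z0..z1, f x y z * (χc + α * (y - yc) + β * (z - zc)))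
          = ∫ z in z0..z1, ((χc + α * (y - yc)) * f x y z + β * (f x y z * (z - zc))) := by
        apply intervalIntegral.integral_congr; intro z _; ring
      rw [e1, intervalIntegral.integral_add h1 h2, intervalIntegral.integral_const_mul,
        intervalIntegral.integral_const_mul]
      rw [helper_ibp z0 z1 zc ez hz' hzc hez (fun r => f x y r) (fun r => Fz (x, y, r))
        (fun r hr => hzderiv x y r (hTU ⟨hxm, hym, hr⟩)) (hcFz y hym)]
      ring
    -- continuity of the y-integrands
    have hGcont : ContinuousOn (fun y => ∫ z in z0..z1, f x y z) (Set.Icc y0 y1) := by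
      have hbase : Continuous fun y : ℝ => ∫ z in z0..z1,
          f (clampR x0 x1 x) (clampR y0 y1 y) (clampR z0 z1 z) :=
        hW0.comp (show Continuous fun y : ℝ => ((x, y) : ℝ × ℝ) by fun_prop)
      refine hbase.continuousOn.congr ?_
      intro y hym
      simp only
      apply intervalIntegral.integral_congr
      intro z hzm
      rw [huIz] at hzm
      simp only [clampR_eq hxm, clampR_eq hym, clampR_eq hzm]
    have hHzcont : ContinuousOn
        (fun y => ∫ z in z0..z1, Fz (x, y, z) * (ez ^ 2 / 8 - (z - zc) ^ 2 / 2))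
        (Set.Icc y0 y1) := by
      have hbase : Continuous fun y : ℝ => ∫ z in z0..z1,
          Fz (clampR x0 x1 x, clampR y0 y1 y, clampR z0 z1 z)
            * (ez ^ 2 / 8 - (z - zc) ^ 2 / 2) :=
        hW2.comp (show Continuous fun y : ℝ => ((x, y) : ℝ × ℝ) by fun_prop)
      refine hbase.continuousOn.congr ?_
      intro y hym
      simp only
      apply intervalIntegral.integral_congr
      intro z hzm
      rw [huIz] at hzm
      simp only [clampR_eq hxm, clampR_eq hym, clampR_eq hzm]
    -- the α-core: integrate by parts in y, via Fubini
    have e4 : (∫ y in y0..y1, (∫ z in z0..z1, f x y z) * (y - yc))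
        = ∫ y in y0..y1, ∫ z in z0..z1,
            Fy (x, y, z) * (ey ^ 2 / 8 - (y - yc) ^ 2 / 2) := by
      have s1 : (∫ y in y0..y1, (∫ z in z0..z1, f x y z) * (y - yc))
          = ∫ y in y0..y1, ∫ z in z0..z1, f x y z * (y - yc) := by
        apply intervalIntegral.integral_congr
        intro y _
        simp only
        exact (intervalIntegral.integral_mul_const _ _).symm
      have hcont1 : ContinuousOn (fun p : ℝ × ℝ => f x p.1 p.2 * (p.1 - yc))
          (Set.Icc y0 y1 ×ˢ Set.Icc z0 z1) := by
        have hbase : Continuous fun p : ℝ × ℝ =>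
            f (clampR x0 x1 x) (clampR y0 y1 p.1) (clampR z0 z1 p.2) * (p.1 - yc) :=
          (hK0.comp (show Continuous fun p : ℝ × ℝ => ((x, p.1, p.2) : ℝ × ℝ × ℝ)
            by fun_prop)).mul (by fun_prop)
        refine hbase.continuousOn.congr ?_
        intro p hp
        simp only
        rw [clampR_eq hxm, clampR_eq hp.1, clampR_eq hp.2]
      have hcont2 : ContinuousOn (fun p : ℝ × ℝ =>
          Fy (x, p.1, p.2) * (ey ^ 2 / 8 - (p.1 - yc) ^ 2 / 2))
          (Set.Icc y0 y1 ×ˢ Set.Icc z0 z1) := by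
        have hbase : Continuous fun p : ℝ × ℝ =>
            Fy (clampR x0 x1 x, clampR y0 y1 p.1, clampR z0 z1 p.2)
              * (ey ^ 2 / 8 - (p.1 - yc) ^ 2 / 2) :=
          (hK1.comp (show Continuous fun p : ℝ × ℝ => ((x, p.1, p.2) : ℝ × ℝ × ℝ)
            by fun_prop)).mul (by fun_prop)
        refine hbase.continuousOn.congr ?_
        intro p hp
        simp only
        rw [clampR_eq hxm, clampR_eq hp.1, clampR_eq hp.2]
      rw [s1, helper_swap hy' hz' (fun y z => f x y z * (y - yc)) hcont1]
      have s2 : (∫ z in z0..z1, ∫ y in y0..y1, f x y z * (y - yc))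
          = ∫ z in z0..z1, ∫ y in y0..y1,
              Fy (x, y, z) * (ey ^ 2 / 8 - (y - yc) ^ 2 / 2) := by
        apply intervalIntegral.integral_congr
        intro z hzm
        rw [huIz] at hzm
        simp only
        refine helper_ibp y0 y1 yc ey hy' hyc hey (fun s => f x s z) (fun s => Fy (x, s, z))
          (fun s hs => hyderiv x s z (hTU ⟨hxm, hs, hzm⟩)) ?_
        have hbase : Continuous fun s : ℝ =>
            Fy (clampR x0 x1 x, clampR y0 y1 s, clampR z0 z1 z) :=
          hK1.comp (show Continuous fun s : ℝ => ((x, s, z) : ℝ × ℝ × ℝ) by fun_prop)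
        refine hbase.continuousOn.congr ?_
        intro s hs
        simp only
        rw [clampR_eq hxm, clampR_eq hs, clampR_eq hzm]
      rw [s2, ← helper_swap hy' hz'
        (fun y z => Fy (x, y, z) * (ey ^ 2 / 8 - (y - yc) ^ 2 / 2)) hcont2]
    -- assemble the middle integral
    have e2 : (∫ y in y0..y1, ∫ z in z0..z1, f x y z * (χc + α * (y - yc) + β * (z - zc)))
        = ∫ y in y0..y1, (χc * (∫ z in z0..z1, f x y z)
            + (∫ z in z0..z1, f x y z) * (α * (y - yc))
            + β * (∫ z in z0..z1, Fz (x, y, z) * (ez ^ 2 / 8 - (z - zc) ^ 2 / 2))) := by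
      apply intervalIntegral.integral_congr
      intro y hym
      rw [huIy] at hym
      exact step1 y hym
    have i1 : IntervalIntegrable (fun y => χc * ∫ z in z0..z1, f x y z) volume y0 y1 := by
      apply ContinuousOn.intervalIntegrable
      rw [huIy]; exact continuousOn_const.mul hGcont
    have i2 : IntervalIntegrable
        (fun y => (∫ z in z0..z1, f x y z) * (α * (y - yc))) volume y0 y1 := by
      apply ContinuousOn.intervalIntegrable
      rw [huIy]
      exact hGcont.mul ((show Continuous fun y : ℝ => α * (y - yc) by fun_prop).continuousOn)
    have i3 : IntervalIntegrable (fun y => β * ∫ z in z0..z1,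
        Fz (x, y, z) * (ez ^ 2 / 8 - (z - zc) ^ 2 / 2)) volume y0 y1 := by
      apply ContinuousOn.intervalIntegrable
      rw [huIy]; exact continuousOn_const.mul hHzcont
    rw [e2, intervalIntegral.integral_add (i1.add i2) i3, intervalIntegral.integral_add i1 i2,
      intervalIntegral.integral_const_mul, intervalIntegral.integral_const_mul]
    have e3 : (∫ y in y0..y1, (∫ z in z0..z1, f x y z) * (α * (y - yc)))
        = α * ∫ y in y0..y1, (∫ z in z0..z1, f x y z) * (y - yc) := by
      rw [← intervalIntegral.integral_const_mul]
      apply intervalIntegral.integral_congr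
      intro y _
      simp only; ring
    rw [e3, e4]
  -- rewrite the derivatives in the goal in terms of Fy, Fz
  have hR1 : (∫ x in x0..x1, ∫ y in y0..y1, ∫ z in z0..z1,
      deriv (fun s => f x s z) y * (ey ^ 2 / 8 - (y - yc) ^ 2 / 2))
      = ∫ x in x0..x1, ∫ y in y0..y1, ∫ z in z0..z1,
          Fy (x, y, z) * (ey ^ 2 / 8 - (y - yc) ^ 2 / 2) := by
    apply intervalIntegral.integral_congr
    intro x hxm; rw [huIx] at hxm
    apply intervalIntegral.integral_congr
    intro y hym; rw [huIy] at hym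
    apply intervalIntegral.integral_congr
    intro z hzm; rw [huIz] at hzm
    simp only
    congr 1
    exact (hyderiv x y z (hTU ⟨hxm, hym, hzm⟩)).deriv
  have hR2 : (∫ x in x0..x1, ∫ y in y0..y1, ∫ z in z0..z1,
      deriv (fun r => f x y r) z * (ez ^ 2 / 8 - (z - zc) ^ 2 / 2))
      = ∫ x in x0..x1, ∫ y in y0..y1, ∫ z in z0..z1,
          Fz (x, y, z) * (ez ^ 2 / 8 - (z - zc) ^ 2 / 2) := by
    apply intervalIntegral.integral_congr
    intro x hxm; rw [huIx] at hxm
    apply intervalIntegral.integral_congr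
    intro y hym; rw [huIy] at hym
    apply intervalIntegral.integral_congr
    intro z hzm; rw [huIz] at hzm
    simp only
    congr 1
    exact (hzderiv x y z (hTU ⟨hxm, hym, hzm⟩)).deriv
  rw [hR1, hR2]
  have e5 : (∫ x in x0..x1, ∫ y in y0..y1, ∫ z in z0..z1,
      f x y z * (χc + α * (y - yc) + β * (z - zc)))
      = ∫ x in x0..x1, (χc * (∫ y in y0..y1, ∫ z in z0..z1, f x y z)
          + α * (∫ y in y0..y1, ∫ z in z0..z1,
              Fy (x, y, z) * (ey ^ 2 / 8 - (y - yc) ^ 2 / 2))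
          + β * (∫ y in y0..y1, ∫ z in z0..z1,
              Fz (x, y, z) * (ez ^ 2 / 8 - (z - zc) ^ 2 / 2))) := by
    apply intervalIntegral.integral_congr
    intro x hxm; rw [huIx] at hxm
    exact key x hxm
  -- integrability of the three components in x
  have hQ0 : ContinuousOn (fun x => ∫ y in y0..y1, ∫ z in z0..z1, f x y z)
      (Set.Icc x0 x1) := by
    refine hV0.continuousOn.congr ?_
    intro x hxm
    simp only
    apply intervalIntegral.integral_congr
    intro y hym; rw [huIy] at hym
    apply intervalIntegral.integral_congr
    intro z hzm; rw [huIz] at hzm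
    simp only [clampR_eq hxm, clampR_eq hym, clampR_eq hzm]
  have hQ1 : ContinuousOn (fun x => ∫ y in y0..y1, ∫ z in z0..z1,
      Fy (x, y, z) * (ey ^ 2 / 8 - (y - yc) ^ 2 / 2)) (Set.Icc x0 x1) := by
    refine hV1.continuousOn.congr ?_
    intro x hxm
    simp only
    apply intervalIntegral.integral_congr
    intro y hym; rw [huIy] at hym
    apply intervalIntegral.integral_congr
    intro z hzm; rw [huIz] at hzm
    simp only [clampR_eq hxm, clampR_eq hym, clampR_eq hzm]
  have hQ2 : ContinuousOn (fun x => ∫ y in y0..y1, ∫ z in z0..z1,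
      Fz (x, y, z) * (ez ^ 2 / 8 - (z - zc) ^ 2 / 2)) (Set.Icc x0 x1) := by
    refine hV2.continuousOn.congr ?_
    intro x hxm
    simp only
    apply intervalIntegral.integral_congr
    intro y hym; rw [huIy] at hym
    apply intervalIntegral.integral_congr
    intro z hzm; rw [huIz] at hzm
    simp only [clampR_eq hxm, clampR_eq hym, clampR_eq hzm]
  have j1 : IntervalIntegrable
      (fun x => χc * (∫ y in y0..y1, ∫ z in z0..z1, f x y z)) volume x0 x1 := by
    apply ContinuousOn.intervalIntegrable
    rw [huIx]; exact continuousOn_const.mul hQ0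
  have j2 : IntervalIntegrable (fun x => α * (∫ y in y0..y1, ∫ z in z0..z1,
      Fy (x, y, z) * (ey ^ 2 / 8 - (y - yc) ^ 2 / 2))) volume x0 x1 := by
    apply ContinuousOn.intervalIntegrable
    rw [huIx]; exact continuousOn_const.mul hQ1
  have j3 : IntervalIntegrable (fun x => β * (∫ y in y0..y1, ∫ z in z0..z1,
      Fz (x, y, z) * (ez ^ 2 / 8 - (z - zc) ^ 2 / 2))) volume x0 x1 := by
    apply ContinuousOn.intervalIntegrable
    rw [huIx]; exact continuousOn_const.mul hQ2
  rw [e5, intervalIntegral.integral_add (j1.add j2) j3, intervalIntegral.integral_add j1 j2,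
    intervalIntegral.integral_const_mul, intervalIntegral.integral_const_mul,
    intervalIntegral.integral_const_mul]
end

section
/- Let $q=(q_1,q_2,q_3)$ be twice continuously differentiable on a neighborhood of $T$. Then $\sum_{p=1}^{6}\int_{F_p}(q\cdot n_p)\big(\mathcal{S}(v_b)-v_{bp}\big)\,dS=\chi_1(M_1)\int_T\partial_x q_1\,dV+\chi_2(M_3)\int_T\partial_y q_2\,dV+\chi_3(M_5)\int_T\partial_z q_3\,dV+R_1$, where $R_1=c_3\int_T\partial_y\partial_x q_1\,E_y(y)\,dV+c_4\int_T\partial_z\partial_x q_1\,E_z(z)\,dV+c_2\int_T\partial_x\partial_y q_2\,E_x(x)\,dV+c_4\int_T\partial_z\partial_y q_2\,E_z(z)\,dV+c_2\int_T\partial_x\partial_z q_3\,E_x(x)\,dV+c_3\int_T\partial_y\partial_z q_3\,E_y(y)\,dV$, with kernels $E_x(x)=\frac{e_x^2}{8}-\frac{(x-x_c)^2}{2}$, $E_y(y)=\frac{e_y^2}{8}-\frac{(y-y_c)^2}{2}$, $E_z(z)=\frac{e_z^2}{8}-\frac{(z-z_c)^2}{2}$. -/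
open MeasureTheory intervalIntegral Set Function

namespace Stmt10Aux

lemma swap2 {a b c d : ℝ} (hab : a ≤ b) (hcd : c ≤ d) (f : ℝ → ℝ → ℝ)
    (hf : Continuous (Function.uncurry f)) :
    (∫ x in a..b, ∫ y in c..d, f x y) = ∫ y in c..d, ∫ x in a..b, f x y := by
  have h1 : ∀ x, (∫ y in c..d, f x y) = ∫ y in Ioc c d, f x y := fun x =>
    intervalIntegral.integral_of_le hcd
  have h2 : ∀ y, (∫ x in a..b, f x y) = ∫ x in Ioc a b, f x y := fun y =>
    intervalIntegral.integral_of_le hab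
  rw [intervalIntegral.integral_of_le hab, intervalIntegral.integral_of_le hcd]
  simp_rw [h1, h2]
  have hint : Integrable (uncurry f)
      ((volume.restrict (Ioc a b)).prod (volume.restrict (Ioc c d))) := by
    rw [Measure.prod_restrict]
    have : IntegrableOn (uncurry f) (Icc a b ×ˢ Icc c d) (volume.prod volume) :=
      (hf.continuousOn).integrableOn_compact (isCompact_Icc.prod isCompact_Icc)
    exact this.mono_set (Set.prod_mono Ioc_subset_Icc_self Ioc_subset_Icc_self)
  exact MeasureTheory.integral_integral_swap hint

end Stmt10Aux

namespace Stmt10Aux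

lemma byparts {a b : ℝ} (hab : a ≤ b) (u u' : ℝ → ℝ)
    (hu : ContinuousOn u (Icc a b))
    (hd : ∀ y ∈ Ioo a b, HasDerivAt u (u' y) y)
    (hu' : ContinuousOn u' (Icc a b)) :
    (∫ y in a..b, u' y * ((b - a) ^ 2 / 8 - (y - (a + b) / 2) ^ 2 / 2))
      = ∫ y in a..b, u y * (y - (a + b) / 2) := by
  set c : ℝ := (a + b) / 2
  set E : ℝ → ℝ := fun y => (b - a) ^ 2 / 8 - (y - c) ^ 2 / 2 with hE
  have hEd : ∀ y : ℝ, HasDerivAt E (-(y - c)) y := by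
    intro y
    have : HasDerivAt (fun y : ℝ => (b - a) ^ 2 / 8 - (y - c) ^ 2 / 2) (-(y - c)) y := by
      have h1 : HasDerivAt (fun y : ℝ => y - c) 1 y := (hasDerivAt_id y).sub_const c
      have h2 := (h1.pow 2)
      have h3 := (h2.div_const 2)
      have h4 := (hasDerivAt_const y ((b - a) ^ 2 / 8)).sub h3
      exact h4.congr_deriv (by ring)
    exact this
  have hEa : E a = 0 := by simp only [hE]; field_simp [c]; ring
  have hEb : E b = 0 := by simp only [hE]; field_simp [c]; ring
  have hprod : ∀ y ∈ Ioo a b, HasDerivAt (fun y => u y * E y)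
      (u' y * E y + u y * (-(y - c))) y := fun y hy => (hd y hy).mul (hEd y)
  have hEc : Continuous E := by fun_prop
  have hint1 : IntervalIntegrable (fun y => u' y * E y) volume a b :=
    ((hu'.mul hEc.continuousOn).mono (by rw [uIcc_of_le hab])).intervalIntegrable
  have hint2 : IntervalIntegrable (fun y => u y * (-(y - c))) volume a b := by
    apply ContinuousOn.intervalIntegrable
    apply ContinuousOn.mul (hu.mono (by rw [uIcc_of_le hab])) (by fun_prop)
  have hcont : ContinuousOn (fun y => u y * E y) (Icc a b) := hu.mul hEc.continuousOn
  have := intervalIntegral.integral_eq_sub_of_hasDerivAt_of_le hab hcont hprod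
    (hint1.add hint2)
  rw [hEb, hEa] at this
  simp only [mul_zero, sub_zero, zero_sub] at this
  rw [intervalIntegral.integral_add hint1 hint2] at this
  have h2 : (∫ y in a..b, u y * (-(y - c))) = -∫ y in a..b, u y * (y - c) := by
    rw [← intervalIntegral.integral_neg]
    congr 1; funext y; ring
  rw [h2] at this
  linarith [this]

end Stmt10Aux

namespace Stmt10Aux

lemma contParam {c d : ℝ} (f : ℝ → ℝ → ℝ) (hf : Continuous (uncurry f)) :
    Continuous fun x => ∫ y in c..d, f x y :=
  intervalIntegral.continuous_parametric_intervalIntegral_of_continuous' hf c d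

lemma contParam2 {c d : ℝ} (f : ℝ → ℝ → ℝ → ℝ)
    (hf : Continuous fun p : ℝ × ℝ × ℝ => f p.1 p.2.1 p.2.2) :
    Continuous fun p : ℝ × ℝ => ∫ z in c..d, f p.1 p.2 z := by
  have : Continuous (uncurry (fun (p : ℝ × ℝ) (z : ℝ) => f p.1 p.2 z)) := by
    exact hf.comp (by fun_prop : Continuous fun q : (ℝ × ℝ) × ℝ => (q.1.1, q.1.2, q.2))
  exact intervalIntegral.continuous_parametric_intervalIntegral_of_continuous' this c d

lemma swap_outer {a b c d e k : ℝ} (hab : a ≤ b) (hcd : c ≤ d) (f : ℝ → ℝ → ℝ → ℝ)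
    (hf : Continuous fun p : ℝ × ℝ × ℝ => f p.1 p.2.1 p.2.2) :
    (∫ x in a..b, ∫ y in c..d, ∫ z in e..k, f x y z)
      = ∫ y in c..d, ∫ x in a..b, ∫ z in e..k, f x y z := by
  apply swap2 hab hcd (fun x y => ∫ z in e..k, f x y z)
  exact contParam2 f hf

lemma swap_inner {a b c d e k : ℝ} (hcd : c ≤ d) (hek : e ≤ k) (f : ℝ → ℝ → ℝ → ℝ)
    (hf : Continuous fun p : ℝ × ℝ × ℝ => f p.1 p.2.1 p.2.2) :
    (∫ x in a..b, ∫ y in c..d, ∫ z in e..k, f x y z)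
      = ∫ x in a..b, ∫ z in e..k, ∫ y in c..d, f x y z := by
  apply intervalIntegral.integral_congr
  intro x _
  apply swap2 hcd hek (fun y z => f x y z)
  exact hf.comp (by fun_prop : Continuous fun p : ℝ × ℝ => (x, p.1, p.2))

lemma triple_add {a b c d e k : ℝ} (F G : ℝ → ℝ → ℝ → ℝ)
    (hF : Continuous fun p : ℝ × ℝ × ℝ => F p.1 p.2.1 p.2.2)
    (hG : Continuous fun p : ℝ × ℝ × ℝ => G p.1 p.2.1 p.2.2) :
    (∫ x in a..b, ∫ y in c..d, ∫ z in e..k, (F x y z + G x y z))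
      = (∫ x in a..b, ∫ y in c..d, ∫ z in e..k, F x y z)
        + ∫ x in a..b, ∫ y in c..d, ∫ z in e..k, G x y z := by
  have hFz : ∀ x y, IntervalIntegrable (fun z => F x y z) volume e k := fun x y =>
    ((hF.comp (by fun_prop : Continuous fun z : ℝ => (x, y, z)))).intervalIntegrable e k
  have hGz : ∀ x y, IntervalIntegrable (fun z => G x y z) volume e k := fun x y =>
    ((hG.comp (by fun_prop : Continuous fun z : ℝ => (x, y, z)))).intervalIntegrable e k
  have hFy : ∀ x, IntervalIntegrable (fun y => ∫ z in e..k, F x y z) volume c d := fun x =>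
    (contParam (fun y z => F x y z)
      ((hF.comp (by fun_prop : Continuous fun p : ℝ × ℝ => (x, p.1, p.2))))).intervalIntegrable c d
  have hGy : ∀ x, IntervalIntegrable (fun y => ∫ z in e..k, G x y z) volume c d := fun x =>
    (contParam (fun y z => G x y z)
      ((hG.comp (by fun_prop : Continuous fun p : ℝ × ℝ => (x, p.1, p.2))))).intervalIntegrable c d
  have hFx : IntervalIntegrable (fun x => ∫ y in c..d, ∫ z in e..k, F x y z) volume a b := by
    apply Continuous.intervalIntegrable
    exact contParam (fun x y => ∫ z in e..k, F x y z) (contParam2 F hF)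
  have hGx : IntervalIntegrable (fun x => ∫ y in c..d, ∫ z in e..k, G x y z) volume a b := by
    apply Continuous.intervalIntegrable
    exact contParam (fun x y => ∫ z in e..k, G x y z) (contParam2 G hG)
  rw [← intervalIntegral.integral_add hFx hGx]
  apply intervalIntegral.integral_congr
  intro x _
  show _ = _ + _
  rw [← intervalIntegral.integral_add (hFy x) (hGy x)]
  apply intervalIntegral.integral_congr
  intro y _
  show _ = _ + _
  rw [← intervalIntegral.integral_add (hFz x y) (hGz x y)]

lemma triple_smul {a b c d e k : ℝ} (A : ℝ) (F : ℝ → ℝ → ℝ → ℝ) :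
    (∫ x in a..b, ∫ y in c..d, ∫ z in e..k, A * F x y z)
      = A * ∫ x in a..b, ∫ y in c..d, ∫ z in e..k, F x y z := by
  simp only [intervalIntegral.integral_const_mul]

end Stmt10Aux

namespace Stmt10Aux

lemma key {a b u v w r : ℝ} (hab : a ≤ b) (huv : u ≤ v) (hwr : w ≤ r)
    (Φ : ℝ → ℝ → ℝ → ℝ) (G G1 G2 : ℝ → ℝ → ℝ → ℝ) (Fa Fb : ℝ → ℝ → ℝ) (A β γ : ℝ)
    (hG : Continuous fun p : ℝ × ℝ × ℝ => G p.1 p.2.1 p.2.2)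
    (hG1 : Continuous fun p : ℝ × ℝ × ℝ => G1 p.1 p.2.1 p.2.2)
    (hG2 : Continuous fun p : ℝ × ℝ × ℝ => G2 p.1 p.2.1 p.2.2)
    (hFa : Continuous (uncurry Fa)) (hFb : Continuous (uncurry Fb))
    (hFae : ∀ s₁ ∈ Icc u v, ∀ s₂ ∈ Icc w r, Fa s₁ s₂ = Φ a s₁ s₂)
    (hFbe : ∀ s₁ ∈ Icc u v, ∀ s₂ ∈ Icc w r, Fb s₁ s₂ = Φ b s₁ s₂)
    (hftc : ∀ s₁ ∈ Icc u v, ∀ s₂ ∈ Icc w r, ∀ t ∈ Icc a b,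
      HasDerivAt (fun t' => Φ t' s₁ s₂) (G t s₁ s₂) t)
    (hd1 : ∀ t ∈ Icc a b, ∀ s₂ ∈ Icc w r, ∀ s₁ ∈ Ioo u v,
      HasDerivAt (fun s => G t s s₂) (G1 t s₁ s₂) s₁)
    (hd2 : ∀ t ∈ Icc a b, ∀ s₁ ∈ Icc u v, ∀ s₂ ∈ Ioo w r,
      HasDerivAt (fun s => G t s₁ s) (G2 t s₁ s₂) s₂) :
    (∫ s₁ in u..v, ∫ s₂ in w..r,
        (-(Fa s₁ s₂)) * (A + β * (s₁ - (u + v) / 2) + γ * (s₂ - (w + r) / 2)))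
      + (∫ s₁ in u..v, ∫ s₂ in w..r,
        Fb s₁ s₂ * (A + β * (s₁ - (u + v) / 2) + γ * (s₂ - (w + r) / 2)))
    = A * (∫ t in a..b, ∫ s₁ in u..v, ∫ s₂ in w..r, G t s₁ s₂)
      + β * (∫ t in a..b, ∫ s₁ in u..v, ∫ s₂ in w..r,
          G1 t s₁ s₂ * ((v - u) ^ 2 / 8 - (s₁ - (u + v) / 2) ^ 2 / 2))
      + γ * (∫ t in a..b, ∫ s₁ in u..v, ∫ s₂ in w..r,
          G2 t s₁ s₂ * ((r - w) ^ 2 / 8 - (s₂ - (w + r) / 2) ^ 2 / 2)) := by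
  set χ : ℝ → ℝ → ℝ := fun s₁ s₂ => A + β * (s₁ - (u + v) / 2) + γ * (s₂ - (w + r) / 2) with hχdef
  have hχ : Continuous (uncurry χ) := by
    simp only [hχdef]; fun_prop
  -- continuity of slices
  have hGslice : ∀ t s₁, Continuous fun s₂ => G t s₁ s₂ := fun t s₁ =>
    hG.comp (by fun_prop : Continuous fun s₂ : ℝ => (t, s₁, s₂))
  have hG2slice : ∀ t s₁, Continuous fun s₂ => G2 t s₁ s₂ := fun t s₁ =>
    hG2.comp (by fun_prop : Continuous fun s₂ : ℝ => (t, s₁, s₂))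
  have hGslice1 : ∀ t s₂, Continuous fun s => G t s s₂ := fun t s₂ =>
    hG.comp (by fun_prop : Continuous fun s : ℝ => (t, s, s₂))
  have hG1slice1 : ∀ t s₂, Continuous fun s => G1 t s s₂ := fun t s₂ =>
    hG1.comp (by fun_prop : Continuous fun s : ℝ => (t, s, s₂))
  -- the combined integrand
  set K : ℝ → ℝ → ℝ → ℝ := fun t s₁ s₂ => G t s₁ s₂ * χ s₁ s₂ with hKdef
  have hK : Continuous fun p : ℝ × ℝ × ℝ => K p.1 p.2.1 p.2.2 := by
    apply hG.mul (hχ.comp (by fun_prop : Continuous fun p : ℝ × ℝ × ℝ => (p.2.1, p.2.2)))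
  -- Step 1: LHS equals the triple integral in order (s₁, s₂, t)
  have hI1 : IntervalIntegrable (fun s₁ => ∫ s₂ in w..r, (-(Fa s₁ s₂)) * χ s₁ s₂) volume u v := by
    apply Continuous.intervalIntegrable
    apply contParam
    exact (hFa.neg.mul hχ)
  have hI2 : IntervalIntegrable (fun s₁ => ∫ s₂ in w..r, Fb s₁ s₂ * χ s₁ s₂) volume u v := by
    apply Continuous.intervalIntegrable
    apply contParam
    exact (hFb.mul hχ)
  have step1 :
      (∫ s₁ in u..v, ∫ s₂ in w..r, (-(Fa s₁ s₂)) * χ s₁ s₂)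
        + (∫ s₁ in u..v, ∫ s₂ in w..r, Fb s₁ s₂ * χ s₁ s₂)
      = ∫ s₁ in u..v, ∫ s₂ in w..r, ∫ t in a..b, K t s₁ s₂ := by
    rw [← intervalIntegral.integral_add hI1 hI2]
    apply intervalIntegral.integral_congr
    intro s₁ hs₁
    rw [uIcc_of_le huv] at hs₁
    show _ + _ = _
    have ha' : IntervalIntegrable (fun s₂ => (-(Fa s₁ s₂)) * χ s₁ s₂) volume w r := by
      apply Continuous.intervalIntegrable
      exact ((hFa.comp (by fun_prop : Continuous fun s₂ : ℝ => (s₁, s₂))).neg.mul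
        (hχ.comp (by fun_prop : Continuous fun s₂ : ℝ => (s₁, s₂))))
    have hb' : IntervalIntegrable (fun s₂ => Fb s₁ s₂ * χ s₁ s₂) volume w r := by
      apply Continuous.intervalIntegrable
      exact ((hFb.comp (by fun_prop : Continuous fun s₂ : ℝ => (s₁, s₂))).mul
        (hχ.comp (by fun_prop : Continuous fun s₂ : ℝ => (s₁, s₂))))
    rw [← intervalIntegral.integral_add ha' hb']
    apply intervalIntegral.integral_congr
    intro s₂ hs₂
    rw [uIcc_of_le hwr] at hs₂
    have hftci : (∫ t in a..b, G t s₁ s₂) = Φ b s₁ s₂ - Φ a s₁ s₂ := by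
      apply intervalIntegral.integral_eq_sub_of_hasDerivAt
      · rw [uIcc_of_le hab]
        exact fun t ht => hftc s₁ hs₁ s₂ hs₂ t ht
      · exact (hG.comp (by fun_prop : Continuous fun t : ℝ => (t, s₁, s₂))).intervalIntegrable a b
    show (-(Fa s₁ s₂)) * χ s₁ s₂ + Fb s₁ s₂ * χ s₁ s₂ = ∫ t in a..b, G t s₁ s₂ * χ s₁ s₂
    rw [intervalIntegral.integral_mul_const, hftci, hFae s₁ hs₁ s₂ hs₂, hFbe s₁ hs₁ s₂ hs₂]
    ring
  -- Step 2: reorder the triple integral to (t, s₁, s₂)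
  have step2 :
      (∫ s₁ in u..v, ∫ s₂ in w..r, ∫ t in a..b, K t s₁ s₂)
        = ∫ t in a..b, ∫ s₁ in u..v, ∫ s₂ in w..r, K t s₁ s₂ := by
    rw [swap_inner hwr hab (fun s₁ s₂ t => K t s₁ s₂)
      (hK.comp (by fun_prop : Continuous fun p : ℝ × ℝ × ℝ => (p.2.2, p.1, p.2.1)))]
    rw [swap_outer huv hab (fun s₁ t s₂ => K t s₁ s₂)
      (hK.comp (by fun_prop : Continuous fun p : ℝ × ℝ × ℝ => (p.2.1, p.1, p.2.2)))]
  -- Step 3: transform the γ-term by parts in the innermost variable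
  have step3 :
      (∫ t in a..b, ∫ s₁ in u..v, ∫ s₂ in w..r,
          G2 t s₁ s₂ * ((r - w) ^ 2 / 8 - (s₂ - (w + r) / 2) ^ 2 / 2))
        = ∫ t in a..b, ∫ s₁ in u..v, ∫ s₂ in w..r, G t s₁ s₂ * (s₂ - (w + r) / 2) := by
    apply intervalIntegral.integral_congr
    intro t ht
    rw [uIcc_of_le hab] at ht
    apply intervalIntegral.integral_congr
    intro s₁ hs₁
    rw [uIcc_of_le huv] at hs₁
    exact byparts hwr (fun s₂ => G t s₁ s₂) (fun s₂ => G2 t s₁ s₂)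
      (hGslice t s₁).continuousOn
      (fun s₂ hs₂ => hd2 t ht s₁ hs₁ s₂ hs₂)
      (hG2slice t s₁).continuousOn
  -- Step 4: transform the β-term
  have step4 :
      (∫ t in a..b, ∫ s₁ in u..v, ∫ s₂ in w..r,
          G1 t s₁ s₂ * ((v - u) ^ 2 / 8 - (s₁ - (u + v) / 2) ^ 2 / 2))
        = ∫ t in a..b, ∫ s₁ in u..v, ∫ s₂ in w..r, G t s₁ s₂ * (s₁ - (u + v) / 2) := by
    apply intervalIntegral.integral_congr
    intro t ht
    rw [uIcc_of_le hab] at ht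
    have e1 : (∫ s₁ in u..v, ∫ s₂ in w..r,
        G1 t s₁ s₂ * ((v - u) ^ 2 / 8 - (s₁ - (u + v) / 2) ^ 2 / 2))
        = ∫ s₂ in w..r, ∫ s₁ in u..v,
        G1 t s₁ s₂ * ((v - u) ^ 2 / 8 - (s₁ - (u + v) / 2) ^ 2 / 2) := by
      apply swap2 huv hwr
      apply Continuous.mul
      · exact hG1.comp (by fun_prop : Continuous fun p : ℝ × ℝ => (t, p.1, p.2))
      · fun_prop
    have e2 : (∫ s₂ in w..r, ∫ s₁ in u..v,
        G1 t s₁ s₂ * ((v - u) ^ 2 / 8 - (s₁ - (u + v) / 2) ^ 2 / 2))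
        = ∫ s₂ in w..r, ∫ s₁ in u..v, G t s₁ s₂ * (s₁ - (u + v) / 2) := by
      apply intervalIntegral.integral_congr
      intro s₂ hs₂
      rw [uIcc_of_le hwr] at hs₂
      exact byparts huv (fun s => G t s s₂) (fun s => G1 t s s₂)
        (hGslice1 t s₂).continuousOn
        (fun s hs => hd1 t ht s₂ hs₂ s hs)
        (hG1slice1 t s₂).continuousOn
    have e3 : (∫ s₂ in w..r, ∫ s₁ in u..v, G t s₁ s₂ * (s₁ - (u + v) / 2))
        = ∫ s₁ in u..v, ∫ s₂ in w..r, G t s₁ s₂ * (s₁ - (u + v) / 2) := by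
      apply (swap2 huv hwr _ _).symm
      apply Continuous.mul
      · exact hG.comp (by fun_prop : Continuous fun p : ℝ × ℝ => (t, p.1, p.2))
      · fun_prop
    show (∫ s₁ in u..v, ∫ s₂ in w..r,
        G1 t s₁ s₂ * ((v - u) ^ 2 / 8 - (s₁ - (u + v) / 2) ^ 2 / 2))
      = ∫ s₁ in u..v, ∫ s₂ in w..r, G t s₁ s₂ * (s₁ - (u + v) / 2)
    rw [e1, e2, e3]
  -- Step 5: combine
  rw [step1, step2, step3, step4]
  have hGm1 : Continuous fun p : ℝ × ℝ × ℝ => G p.1 p.2.1 p.2.2 * (p.2.1 - (u + v) / 2) := by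
    apply hG.mul; fun_prop
  have hGm2 : Continuous fun p : ℝ × ℝ × ℝ => G p.1 p.2.1 p.2.2 * (p.2.2 - (w + r) / 2) := by
    apply hG.mul; fun_prop
  rw [← triple_smul A G, ← triple_smul β (fun t s₁ s₂ => G t s₁ s₂ * (s₁ - (u + v) / 2)),
    ← triple_smul γ (fun t s₁ s₂ => G t s₁ s₂ * (s₂ - (w + r) / 2))]
  rw [← triple_add _ _ (by fun_prop) (by exact continuous_const.mul hGm1)]
  rw [← triple_add _ _ (by
      apply Continuous.add
      · exact continuous_const.mul hG
      · exact continuous_const.mul hGm1) (by exact continuous_const.mul hGm2)]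
  apply intervalIntegral.integral_congr
  intro t _
  apply intervalIntegral.integral_congr
  intro s₁ _
  apply intervalIntegral.integral_congr
  intro s₂ _
  show K t s₁ s₂ = _
  simp only [hKdef, hχdef]
  ring

end Stmt10Aux

namespace Stmt10Aux

lemma slice_hasDerivAt {g : ℝ × ℝ × ℝ → ℝ} {p : ℝ × ℝ × ℝ} (hg : DifferentiableAt ℝ g p)
    {L : ℝ → ℝ × ℝ × ℝ} {t : ℝ} {v : ℝ × ℝ × ℝ} (hL : HasDerivAt L v t) (hp : L t = p) :
    HasDerivAt (fun s => g (L s)) (fderiv ℝ g p v) t := by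
  subst hp
  exact hg.hasFDerivAt.comp_hasDerivAt t hL

lemma line1 (y z t : ℝ) : HasDerivAt (fun s : ℝ => (s, y, z)) ((1 : ℝ), (0 : ℝ), (0 : ℝ)) t :=
  (hasDerivAt_id t).prodMk ((hasDerivAt_const t y).prodMk (hasDerivAt_const t z))

lemma line2 (x z t : ℝ) : HasDerivAt (fun s : ℝ => (x, s, z)) ((0 : ℝ), (1 : ℝ), (0 : ℝ)) t :=
  (hasDerivAt_const t x).prodMk ((hasDerivAt_id t).prodMk (hasDerivAt_const t z))

lemma line3 (x y t : ℝ) : HasDerivAt (fun s : ℝ => (x, y, s)) ((0 : ℝ), (0 : ℝ), (1 : ℝ)) t :=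
  (hasDerivAt_const t x).prodMk ((hasDerivAt_const t y).prodMk (hasDerivAt_id t))

lemma contDiffOn_D {U : Set (ℝ × ℝ × ℝ)} (hU : IsOpen U) {f : ℝ × ℝ × ℝ → ℝ}
    (hf : ContDiffOn ℝ 2 f U) (v : ℝ × ℝ × ℝ) :
    ContDiffOn ℝ 1 (fun p => fderiv ℝ f p v) U := by
  have h := hf.fderiv_of_isOpen hU (by norm_num : (1 : WithTop ℕ∞) + 1 ≤ 2)
  exact h.clm_apply contDiffOn_const

lemma contOn_D2 {U : Set (ℝ × ℝ × ℝ)} (hU : IsOpen U) {f : ℝ × ℝ × ℝ → ℝ}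
    (hf : ContDiffOn ℝ 2 f U) (v w : ℝ × ℝ × ℝ) :
    ContinuousOn (fun p => fderiv ℝ (fun q => fderiv ℝ f q v) p w) U := by
  have h1 := contDiffOn_D hU hf v
  have h2 := h1.continuousOn_fderiv_of_isOpen hU le_rfl
  exact h2.clm_apply continuousOn_const

lemma diffAt_of_contDiffOn2 {U : Set (ℝ × ℝ × ℝ)} (hU : IsOpen U) {f : ℝ × ℝ × ℝ → ℝ}
    (hf : ContDiffOn ℝ 2 f U) {p : ℝ × ℝ × ℝ} (hp : p ∈ U) : DifferentiableAt ℝ f p :=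
  (hf.contDiffAt (hU.mem_nhds hp)).differentiableAt (by norm_num)

lemma diffAt_D {U : Set (ℝ × ℝ × ℝ)} (hU : IsOpen U) {f : ℝ × ℝ × ℝ → ℝ}
    (hf : ContDiffOn ℝ 2 f U) (v : ℝ × ℝ × ℝ) {p : ℝ × ℝ × ℝ} (hp : p ∈ U) :
    DifferentiableAt ℝ (fun q => fderiv ℝ f q v) p :=
  ((contDiffOn_D hU hf v).contDiffAt (hU.mem_nhds hp)).differentiableAt one_ne_zero

end Stmt10Aux

namespace Stmt10Aux

lemma pairFull {a b u v w r : ℝ} (hab : a ≤ b) (huv : u ≤ v) (hwr : w ≤ r)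
    {V : Set (ℝ × ℝ × ℝ)} (hV : IsOpen V)
    (hbox : Icc a b ×ˢ Icc u v ×ˢ Icc w r ⊆ V)
    (F : ℝ → ℝ → ℝ → ℝ)
    (hF : ContDiffOn ℝ 2 (fun p : ℝ × ℝ × ℝ => F p.1 p.2.1 p.2.2) V)
    (A β γ : ℝ) :
    ∃ G G1 G2 : ℝ → ℝ → ℝ → ℝ,
      (Continuous fun p : ℝ × ℝ × ℝ => G p.1 p.2.1 p.2.2)
      ∧ (Continuous fun p : ℝ × ℝ × ℝ => G1 p.1 p.2.1 p.2.2)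
      ∧ (Continuous fun p : ℝ × ℝ × ℝ => G2 p.1 p.2.1 p.2.2)
      ∧ (∀ t ∈ Icc a b, ∀ s₁ ∈ Icc u v, ∀ s₂ ∈ Icc w r,
          G t s₁ s₂ = deriv (fun t' => F t' s₁ s₂) t
          ∧ G1 t s₁ s₂ = deriv (fun s => deriv (fun t' => F t' s s₂) t) s₁
          ∧ G2 t s₁ s₂ = deriv (fun s => deriv (fun t' => F t' s₁ s) t) s₂)
      ∧ ((∫ s₁ in u..v, ∫ s₂ in w..r,
            (-(F a s₁ s₂)) * (A + β * (s₁ - (u + v) / 2) + γ * (s₂ - (w + r) / 2)))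
          + (∫ s₁ in u..v, ∫ s₂ in w..r,
            F b s₁ s₂ * (A + β * (s₁ - (u + v) / 2) + γ * (s₂ - (w + r) / 2)))
        = A * (∫ t in a..b, ∫ s₁ in u..v, ∫ s₂ in w..r, G t s₁ s₂)
          + β * (∫ t in a..b, ∫ s₁ in u..v, ∫ s₂ in w..r,
              G1 t s₁ s₂ * ((v - u) ^ 2 / 8 - (s₁ - (u + v) / 2) ^ 2 / 2))
          + γ * (∫ t in a..b, ∫ s₁ in u..v, ∫ s₂ in w..r,
              G2 t s₁ s₂ * ((r - w) ^ 2 / 8 - (s₂ - (w + r) / 2) ^ 2 / 2))) := by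
  classical
  set f : ℝ × ℝ × ℝ → ℝ := fun p => F p.1 p.2.1 p.2.2 with hfdef
  -- clamping functions
  set ct : ℝ → ℝ := fun x => ((projIcc a b hab x : Icc a b) : ℝ) with hctdef
  set cu : ℝ → ℝ := fun x => ((projIcc u v huv x : Icc u v) : ℝ) with hcudef
  set cw : ℝ → ℝ := fun x => ((projIcc w r hwr x : Icc w r) : ℝ) with hcwdef
  have hctc : Continuous ct := continuous_subtype_val.comp continuous_projIcc
  have hcuc : Continuous cu := continuous_subtype_val.comp continuous_projIcc
  have hcwc : Continuous cw := continuous_subtype_val.comp continuous_projIcc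
  have hctm : ∀ x, ct x ∈ Icc a b := fun x => (projIcc a b hab x).2
  have hcum : ∀ x, cu x ∈ Icc u v := fun x => (projIcc u v huv x).2
  have hcwm : ∀ x, cw x ∈ Icc w r := fun x => (projIcc w r hwr x).2
  have hcti : ∀ x ∈ Icc a b, ct x = x := fun x hx => by
    simp only [hctdef, projIcc_of_mem hab hx]
  have hcui : ∀ x ∈ Icc u v, cu x = x := fun x hx => by
    simp only [hcudef, projIcc_of_mem huv hx]
  have hcwi : ∀ x ∈ Icc w r, cw x = x := fun x hx => by
    simp only [hcwdef, projIcc_of_mem hwr hx]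
  have hmem : ∀ t s₁ s₂ : ℝ, t ∈ Icc a b → s₁ ∈ Icc u v → s₂ ∈ Icc w r →
      ((t, s₁, s₂) : ℝ × ℝ × ℝ) ∈ V := fun t s₁ s₂ ht hs₁ hs₂ => hbox ⟨ht, hs₁, hs₂⟩
  have hmemc : ∀ t s₁ s₂ : ℝ, ((ct t, cu s₁, cw s₂) : ℝ × ℝ × ℝ) ∈ V := fun t s₁ s₂ =>
    hmem _ _ _ (hctm t) (hcum s₁) (hcwm s₂)
  -- derivative functions
  set D1 : ℝ × ℝ × ℝ → ℝ := fun p => fderiv ℝ f p ((1 : ℝ), (0 : ℝ), (0 : ℝ)) with hD1def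
  set D21 : ℝ × ℝ × ℝ → ℝ :=
    fun p => fderiv ℝ D1 p ((0 : ℝ), (1 : ℝ), (0 : ℝ)) with hD21def
  set D31 : ℝ × ℝ × ℝ → ℝ :=
    fun p => fderiv ℝ D1 p ((0 : ℝ), (0 : ℝ), (1 : ℝ)) with hD31def
  have hD1cont : ContinuousOn D1 V := (contDiffOn_D hV hF _).continuousOn
  have hD21cont : ContinuousOn D21 V := contOn_D2 hV hF _ _
  have hD31cont : ContinuousOn D31 V := contOn_D2 hV hF _ _
  -- pointwise identities with `deriv` on V
  have hD1eq : ∀ t s₁ s₂ : ℝ, ((t, s₁, s₂) : ℝ × ℝ × ℝ) ∈ V →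
      deriv (fun t' => F t' s₁ s₂) t = D1 (t, s₁, s₂) := by
    intro t s₁ s₂ hp
    exact (slice_hasDerivAt (diffAt_of_contDiffOn2 hV hF hp) (line1 s₁ s₂ t) rfl).deriv
  have hD1hd : ∀ t s₁ s₂ : ℝ, ((t, s₁, s₂) : ℝ × ℝ × ℝ) ∈ V →
      HasDerivAt (fun t' => F t' s₁ s₂) (D1 (t, s₁, s₂)) t := by
    intro t s₁ s₂ hp
    exact slice_hasDerivAt (diffAt_of_contDiffOn2 hV hF hp) (line1 s₁ s₂ t) rfl
  have hD21eq : ∀ t s₁ s₂ : ℝ, ((t, s₁, s₂) : ℝ × ℝ × ℝ) ∈ V →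
      deriv (fun s => deriv (fun t' => F t' s s₂) t) s₁ = D21 (t, s₁, s₂) := by
    intro t s₁ s₂ hp
    have hev : (fun s => deriv (fun t' => F t' s s₂) t) =ᶠ[nhds s₁]
        (fun s => D1 (t, s, s₂)) := by
      have hUev : ∀ᶠ s in nhds s₁, ((t, s, s₂) : ℝ × ℝ × ℝ) ∈ V := by
        have : Continuous fun s : ℝ => ((t, s, s₂) : ℝ × ℝ × ℝ) := by fun_prop
        exact this.continuousAt.preimage_mem_nhds (hV.mem_nhds hp)
      filter_upwards [hUev] with s hs
      exact hD1eq t s s₂ hs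
    rw [hev.deriv_eq]
    exact (slice_hasDerivAt (diffAt_D hV hF _ hp) (line2 t s₂ s₁) rfl).deriv
  have hD31eq : ∀ t s₁ s₂ : ℝ, ((t, s₁, s₂) : ℝ × ℝ × ℝ) ∈ V →
      deriv (fun s => deriv (fun t' => F t' s₁ s) t) s₂ = D31 (t, s₁, s₂) := by
    intro t s₁ s₂ hp
    have hev : (fun s => deriv (fun t' => F t' s₁ s) t) =ᶠ[nhds s₂]
        (fun s => D1 (t, s₁, s)) := by
      have hUev : ∀ᶠ s in nhds s₂, ((t, s₁, s) : ℝ × ℝ × ℝ) ∈ V := by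
        have : Continuous fun s : ℝ => ((t, s₁, s) : ℝ × ℝ × ℝ) := by fun_prop
        exact this.continuousAt.preimage_mem_nhds (hV.mem_nhds hp)
      filter_upwards [hUev] with s hs
      exact hD1eq t s₁ s hs
    rw [hev.deriv_eq]
    exact (slice_hasDerivAt (diffAt_D hV hF _ hp) (line3 t s₁ s₂) rfl).deriv
  -- clamped versions
  set G : ℝ → ℝ → ℝ → ℝ := fun t s₁ s₂ => D1 (ct t, cu s₁, cw s₂) with hGdef
  set Gb : ℝ → ℝ → ℝ → ℝ := fun t s₁ s₂ => D21 (ct t, cu s₁, cw s₂) with hGbdef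
  set Gc : ℝ → ℝ → ℝ → ℝ := fun t s₁ s₂ => D31 (ct t, cu s₁, cw s₂) with hGcdef
  set Fa : ℝ → ℝ → ℝ := fun s₁ s₂ => f (a, cu s₁, cw s₂) with hFadef
  set Fb : ℝ → ℝ → ℝ := fun s₁ s₂ => f (b, cu s₁, cw s₂) with hFbdef
  have hGcont : Continuous fun p : ℝ × ℝ × ℝ => G p.1 p.2.1 p.2.2 :=
    hD1cont.comp_continuous (by fun_prop) fun p => hmemc _ _ _
  have hGbcont : Continuous fun p : ℝ × ℝ × ℝ => Gb p.1 p.2.1 p.2.2 :=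
    hD21cont.comp_continuous (by fun_prop) fun p => hmemc _ _ _
  have hGccont : Continuous fun p : ℝ × ℝ × ℝ => Gc p.1 p.2.1 p.2.2 :=
    hD31cont.comp_continuous (by fun_prop) fun p => hmemc _ _ _
  have hFacont : Continuous (uncurry Fa) :=
    hF.continuousOn.comp_continuous (by fun_prop)
      fun q => hmem _ _ _ (left_mem_Icc.mpr hab) (hcum q.1) (hcwm q.2)
  have hFbcont : Continuous (uncurry Fb) :=
    hF.continuousOn.comp_continuous (by fun_prop)
      fun q => hmem _ _ _ (right_mem_Icc.mpr hab) (hcum q.1) (hcwm q.2)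
  have hFaeq : ∀ s₁ ∈ Icc u v, ∀ s₂ ∈ Icc w r, Fa s₁ s₂ = F a s₁ s₂ := by
    intro s₁ hs₁ s₂ hs₂
    show f (a, cu s₁, cw s₂) = _
    rw [hcui s₁ hs₁, hcwi s₂ hs₂]
  have hFbeq : ∀ s₁ ∈ Icc u v, ∀ s₂ ∈ Icc w r, Fb s₁ s₂ = F b s₁ s₂ := by
    intro s₁ hs₁ s₂ hs₂
    show f (b, cu s₁, cw s₂) = _
    rw [hcui s₁ hs₁, hcwi s₂ hs₂]
  have hGeq : ∀ t ∈ Icc a b, ∀ s₁ ∈ Icc u v, ∀ s₂ ∈ Icc w r,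
      G t s₁ s₂ = D1 (t, s₁, s₂) := by
    intro t ht s₁ hs₁ s₂ hs₂
    show D1 (ct t, cu s₁, cw s₂) = _
    rw [hcti t ht, hcui s₁ hs₁, hcwi s₂ hs₂]
  have hGbeq : ∀ t ∈ Icc a b, ∀ s₁ ∈ Icc u v, ∀ s₂ ∈ Icc w r,
      Gb t s₁ s₂ = D21 (t, s₁, s₂) := by
    intro t ht s₁ hs₁ s₂ hs₂
    show D21 (ct t, cu s₁, cw s₂) = _
    rw [hcti t ht, hcui s₁ hs₁, hcwi s₂ hs₂]
  have hGceq : ∀ t ∈ Icc a b, ∀ s₁ ∈ Icc u v, ∀ s₂ ∈ Icc w r,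
      Gc t s₁ s₂ = D31 (t, s₁, s₂) := by
    intro t ht s₁ hs₁ s₂ hs₂
    show D31 (ct t, cu s₁, cw s₂) = _
    rw [hcti t ht, hcui s₁ hs₁, hcwi s₂ hs₂]
  have hftc : ∀ s₁ ∈ Icc u v, ∀ s₂ ∈ Icc w r, ∀ t ∈ Icc a b,
      HasDerivAt (fun t' => F t' s₁ s₂) (G t s₁ s₂) t := by
    intro s₁ hs₁ s₂ hs₂ t ht
    rw [hGeq t ht s₁ hs₁ s₂ hs₂]
    exact hD1hd t s₁ s₂ (hmem t s₁ s₂ ht hs₁ hs₂)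
  have hd1 : ∀ t ∈ Icc a b, ∀ s₂ ∈ Icc w r, ∀ s₁ ∈ Ioo u v,
      HasDerivAt (fun s => G t s s₂) (Gb t s₁ s₂) s₁ := by
    intro t ht s₂ hs₂ s₁ hs₁
    rw [hGbeq t ht s₁ (mem_Icc_of_Ioo hs₁) s₂ hs₂]
    have hp := hmem t s₁ s₂ ht (mem_Icc_of_Ioo hs₁) hs₂
    have hbase : HasDerivAt (fun s => D1 (t, s, s₂)) (D21 (t, s₁, s₂)) s₁ :=
      slice_hasDerivAt (diffAt_D hV hF _ hp) (line2 t s₂ s₁) rfl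
    apply hbase.congr_of_eventuallyEq
    filter_upwards [Ioo_mem_nhds hs₁.1 hs₁.2] with s hs
    show D1 (ct t, cu s, cw s₂) = _
    rw [hcti t ht, hcui s (mem_Icc_of_Ioo hs), hcwi s₂ hs₂]
  have hd2 : ∀ t ∈ Icc a b, ∀ s₁ ∈ Icc u v, ∀ s₂ ∈ Ioo w r,
      HasDerivAt (fun s => G t s₁ s) (Gc t s₁ s₂) s₂ := by
    intro t ht s₁ hs₁ s₂ hs₂
    rw [hGceq t ht s₁ hs₁ s₂ (mem_Icc_of_Ioo hs₂)]
    have hp := hmem t s₁ s₂ ht hs₁ (mem_Icc_of_Ioo hs₂)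
    have hbase : HasDerivAt (fun s => D1 (t, s₁, s)) (D31 (t, s₁, s₂)) s₂ :=
      slice_hasDerivAt (diffAt_D hV hF _ hp) (line3 t s₁ s₂) rfl
    apply hbase.congr_of_eventuallyEq
    filter_upwards [Ioo_mem_nhds hs₂.1 hs₂.2] with s hs
    show D1 (ct t, cu s₁, cw s) = _
    rw [hcti t ht, hcui s₁ hs₁, hcwi s (mem_Icc_of_Ioo hs)]
  have hkey := key hab huv hwr F G Gb Gc Fa Fb A β γ hGcont hGbcont hGccont
    hFacont hFbcont (fun s₁ hs₁ s₂ hs₂ => (hFaeq s₁ hs₁ s₂ hs₂).trans rfl)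
    (fun s₁ hs₁ s₂ hs₂ => (hFbeq s₁ hs₁ s₂ hs₂).trans rfl) hftc hd1 hd2
  refine ⟨G, Gb, Gc, hGcont, hGbcont, hGccont, ?_, ?_⟩
  · intro t ht s₁ hs₁ s₂ hs₂
    exact ⟨(hGeq t ht s₁ hs₁ s₂ hs₂).trans (hD1eq t s₁ s₂ (hmem t s₁ s₂ ht hs₁ hs₂)).symm,
      (hGbeq t ht s₁ hs₁ s₂ hs₂).trans (hD21eq t s₁ s₂ (hmem t s₁ s₂ ht hs₁ hs₂)).symm,
      (hGceq t ht s₁ hs₁ s₂ hs₂).trans (hD31eq t s₁ s₂ (hmem t s₁ s₂ ht hs₁ hs₂)).symm⟩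
  · have e1 : (∫ s₁ in u..v, ∫ s₂ in w..r,
        (-(F a s₁ s₂)) * (A + β * (s₁ - (u + v) / 2) + γ * (s₂ - (w + r) / 2)))
        = ∫ s₁ in u..v, ∫ s₂ in w..r,
        (-(Fa s₁ s₂)) * (A + β * (s₁ - (u + v) / 2) + γ * (s₂ - (w + r) / 2)) := by
      apply intervalIntegral.integral_congr
      intro s₁ hs₁
      rw [uIcc_of_le huv] at hs₁
      apply intervalIntegral.integral_congr
      intro s₂ hs₂
      rw [uIcc_of_le hwr] at hs₂
      show (-(F a s₁ s₂)) * _ = (-(Fa s₁ s₂)) * _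
      rw [hFaeq s₁ hs₁ s₂ hs₂]
    have e2 : (∫ s₁ in u..v, ∫ s₂ in w..r,
        F b s₁ s₂ * (A + β * (s₁ - (u + v) / 2) + γ * (s₂ - (w + r) / 2)))
        = ∫ s₁ in u..v, ∫ s₂ in w..r,
        Fb s₁ s₂ * (A + β * (s₁ - (u + v) / 2) + γ * (s₂ - (w + r) / 2)) := by
      apply intervalIntegral.integral_congr
      intro s₁ hs₁
      rw [uIcc_of_le huv] at hs₁
      apply intervalIntegral.integral_congr
      intro s₂ hs₂
      rw [uIcc_of_le hwr] at hs₂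
      show F b s₁ s₂ * _ = Fb s₁ s₂ * _
      rw [hFbeq s₁ hs₁ s₂ hs₂]
    rw [e1, e2]
    exact hkey

end Stmt10Aux

namespace Stmt10Aux

lemma two_congr {a b c d : ℝ} {f g : ℝ → ℝ → ℝ} (h : ∀ x z, f x z = g x z) :
    (∫ x in a..b, ∫ z in c..d, f x z) = ∫ x in a..b, ∫ z in c..d, g x z := by
  apply intervalIntegral.integral_congr
  intro x _
  apply intervalIntegral.integral_congr
  intro z _
  exact h x z

lemma tri_congr {a b c d e k : ℝ} (hab : a ≤ b) (hcd : c ≤ d) (hek : e ≤ k)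
    {f g : ℝ → ℝ → ℝ → ℝ}
    (h : ∀ t ∈ Icc a b, ∀ y ∈ Icc c d, ∀ z ∈ Icc e k, f t y z = g t y z) :
    (∫ t in a..b, ∫ y in c..d, ∫ z in e..k, f t y z)
      = ∫ t in a..b, ∫ y in c..d, ∫ z in e..k, g t y z := by
  apply intervalIntegral.integral_congr
  intro t ht
  rw [uIcc_of_le hab] at ht
  apply intervalIntegral.integral_congr
  intro y hy
  rw [uIcc_of_le hcd] at hy
  apply intervalIntegral.integral_congr
  intro z hz
  rw [uIcc_of_le hek] at hz
  exact h t ht y hy z hz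

end Stmt10Aux

open Stmt10Aux Set in
theorem stmt10 (x0 x1 y0 y1 z0 z1 : ℝ) (hx : x0 < x1) (hy : y0 < y1) (hz : z0 < z1)
    (ex ey ez xc yc zc F1 F3 F5 : ℝ)
    (hex : ex = x1 - x0) (hey : ey = y1 - y0) (hez : ez = z1 - z0)
    (hxc : xc = (x0 + x1) / 2) (hyc : yc = (y0 + y1) / 2) (hzc : zc = (z0 + z1) / 2)
    (hF1 : F1 = ey * ez) (hF3 : F3 = ex * ez) (hF5 : F5 = ex * ey)
    (vb1 vb2 vb3 vb4 vb5 vb6 : ℝ) (c1 c2 c3 c4 : ℝ)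
    (hc1 : c1 = (F1 * (vb1 + vb2) + F3 * (vb3 + vb4) + F5 * (vb5 + vb6)) / (2 * (F1 + F3 + F5)))
    (hc2 : c2 = (vb2 - vb1) / ex) (hc3 : c3 = (vb4 - vb3) / ey) (hc4 : c4 = (vb6 - vb5) / ez)
    (S : ℝ → ℝ → ℝ → ℝ)
    (hS : ∀ x y z : ℝ, S x y z = c1 + c2 * (x - xc) + c3 * (y - yc) + c4 * (z - zc))
    -- `q = (q1, q2, q3)` is twice continuously differentiable on a neighborhood `U` of `T`
    (q1 q2 q3 : ℝ → ℝ → ℝ → ℝ) (U : Set (ℝ × ℝ × ℝ)) (hU : IsOpen U)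
    (hTU : Set.Icc x0 x1 ×ˢ Set.Icc y0 y1 ×ˢ Set.Icc z0 z1 ⊆ U)
    (hq1 : ContDiffOn ℝ 2 (fun p : ℝ × ℝ × ℝ => q1 p.1 p.2.1 p.2.2) U)
    (hq2 : ContDiffOn ℝ 2 (fun p : ℝ × ℝ × ℝ => q2 p.1 p.2.1 p.2.2) U)
    (hq3 : ContDiffOn ℝ 2 (fun p : ℝ × ℝ × ℝ => q3 p.1 p.2.1 p.2.2) U)
    -- the remainder term `R₁`
    (R1 : ℝ)
    (hR1 : R1 =
      c3 * (∫ x in x0..x1, ∫ y in y0..y1, ∫ z in z0..z1,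
        deriv (fun s => deriv (fun t => q1 t s z) x) y * (ey ^ 2 / 8 - (y - yc) ^ 2 / 2))
      + c4 * (∫ x in x0..x1, ∫ y in y0..y1, ∫ z in z0..z1,
        deriv (fun r => deriv (fun t => q1 t y r) x) z * (ez ^ 2 / 8 - (z - zc) ^ 2 / 2))
      + c2 * (∫ x in x0..x1, ∫ y in y0..y1, ∫ z in z0..z1,
        deriv (fun t => deriv (fun s => q2 t s z) y) x * (ex ^ 2 / 8 - (x - xc) ^ 2 / 2))
      + c4 * (∫ x in x0..x1, ∫ y in y0..y1, ∫ z in z0..z1,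
        deriv (fun r => deriv (fun s => q2 x s r) y) z * (ez ^ 2 / 8 - (z - zc) ^ 2 / 2))
      + c2 * (∫ x in x0..x1, ∫ y in y0..y1, ∫ z in z0..z1,
        deriv (fun t => deriv (fun r => q3 t y r) z) x * (ex ^ 2 / 8 - (x - xc) ^ 2 / 2))
      + c3 * (∫ x in x0..x1, ∫ y in y0..y1, ∫ z in z0..z1,
        deriv (fun s => deriv (fun r => q3 x s r) z) y * (ey ^ 2 / 8 - (y - yc) ^ 2 / 2))) :
    (∫ y in y0..y1, ∫ z in z0..z1, (-(q1 x0 y z)) * (S x0 y z - vb1))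
      + (∫ y in y0..y1, ∫ z in z0..z1, q1 x1 y z * (S x1 y z - vb2))
      + (∫ x in x0..x1, ∫ z in z0..z1, (-(q2 x y0 z)) * (S x y0 z - vb3))
      + (∫ x in x0..x1, ∫ z in z0..z1, q2 x y1 z * (S x y1 z - vb4))
      + (∫ x in x0..x1, ∫ y in y0..y1, (-(q3 x y z0)) * (S x y z0 - vb5))
      + (∫ x in x0..x1, ∫ y in y0..y1, q3 x y z1 * (S x y z1 - vb6))
    = (S x0 yc zc - vb1) * (∫ x in x0..x1, ∫ y in y0..y1, ∫ z in z0..z1,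
          deriv (fun t => q1 t y z) x)
      + (S xc y0 zc - vb3) * (∫ x in x0..x1, ∫ y in y0..y1, ∫ z in z0..z1,
          deriv (fun s => q2 x s z) y)
      + (S xc yc z0 - vb5) * (∫ x in x0..x1, ∫ y in y0..y1, ∫ z in z0..z1,
          deriv (fun r => q3 x y r) z)
      + R1 := by
  have hx' : x0 ≤ x1 := hx.le
  have hy' : y0 ≤ y1 := hy.le
  have hz' : z0 ≤ z1 := hz.le
  have hxne : x1 - x0 ≠ 0 := sub_ne_zero.mpr hx.ne'
  have hyne : y1 - y0 ≠ 0 := sub_ne_zero.mpr hy.ne'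
  have hzne : z1 - z0 ≠ 0 := sub_ne_zero.mpr hz.ne'
  subst hex hey hez hxc hyc hzc
  have hkx : c2 * (x1 - x0) = vb2 - vb1 := by rw [hc2]; field_simp
  have hky : c3 * (y1 - y0) = vb4 - vb3 := by rw [hc3]; field_simp
  have hkz : c4 * (z1 - z0) = vb6 - vb5 := by rw [hc4]; field_simp
  -- ===== pair 1 (q1, x-direction) =====
  obtain ⟨Ga, Gb, Gc, hca, hcb, hcc, hptw, hmain⟩ :=
    pairFull hx' hy' hz' hU hTU q1 hq1
      (S x0 ((y0 + y1) / 2) ((z0 + z1) / 2) - vb1) c3 c4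
  have f1eq : (∫ y in y0..y1, ∫ z in z0..z1, (-(q1 x0 y z)) * (S x0 y z - vb1))
      = ∫ y in y0..y1, ∫ z in z0..z1, (-(q1 x0 y z)) *
        ((S x0 ((y0 + y1) / 2) ((z0 + z1) / 2) - vb1)
          + c3 * (y - (y0 + y1) / 2) + c4 * (z - (z0 + z1) / 2)) :=
    two_congr fun y z => by rw [hS, hS]; ring
  have f2eq : (∫ y in y0..y1, ∫ z in z0..z1, q1 x1 y z * (S x1 y z - vb2))
      = ∫ y in y0..y1, ∫ z in z0..z1, q1 x1 y z *
        ((S x0 ((y0 + y1) / 2) ((z0 + z1) / 2) - vb1)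
          + c3 * (y - (y0 + y1) / 2) + c4 * (z - (z0 + z1) / 2)) :=
    two_congr fun y z => by rw [hS, hS]; linear_combination q1 x1 y z * hkx
  have t1 : (∫ x in x0..x1, ∫ y in y0..y1, ∫ z in z0..z1, deriv (fun t => q1 t y z) x)
      = ∫ x in x0..x1, ∫ y in y0..y1, ∫ z in z0..z1, Ga x y z :=
    tri_congr hx' hy' hz' fun t ht y hy z hz => ((hptw t ht y hy z hz).1).symm
  have t2 : (∫ x in x0..x1, ∫ y in y0..y1, ∫ z in z0..z1,
        deriv (fun s => deriv (fun t => q1 t s z) x) y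
          * ((y1 - y0) ^ 2 / 8 - (y - (y0 + y1) / 2) ^ 2 / 2))
      = ∫ x in x0..x1, ∫ y in y0..y1, ∫ z in z0..z1,
        Gb x y z * ((y1 - y0) ^ 2 / 8 - (y - (y0 + y1) / 2) ^ 2 / 2) :=
    tri_congr hx' hy' hz' fun t ht y hy z hz => by
      rw [(hptw t ht y hy z hz).2.1]
  have t3 : (∫ x in x0..x1, ∫ y in y0..y1, ∫ z in z0..z1,
        deriv (fun r => deriv (fun t => q1 t y r) x) z
          * ((z1 - z0) ^ 2 / 8 - (z - (z0 + z1) / 2) ^ 2 / 2))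
      = ∫ x in x0..x1, ∫ y in y0..y1, ∫ z in z0..z1,
        Gc x y z * ((z1 - z0) ^ 2 / 8 - (z - (z0 + z1) / 2) ^ 2 / 2) :=
    tri_congr hx' hy' hz' fun t ht y hy z hz => by
      rw [(hptw t ht y hy z hz).2.2]
  have hpair1 : (∫ y in y0..y1, ∫ z in z0..z1, (-(q1 x0 y z)) * (S x0 y z - vb1))
      + (∫ y in y0..y1, ∫ z in z0..z1, q1 x1 y z * (S x1 y z - vb2))
      = (S x0 ((y0 + y1) / 2) ((z0 + z1) / 2) - vb1)
          * (∫ x in x0..x1, ∫ y in y0..y1, ∫ z in z0..z1, deriv (fun t => q1 t y z) x)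
        + c3 * (∫ x in x0..x1, ∫ y in y0..y1, ∫ z in z0..z1,
            deriv (fun s => deriv (fun t => q1 t s z) x) y
              * ((y1 - y0) ^ 2 / 8 - (y - (y0 + y1) / 2) ^ 2 / 2))
        + c4 * (∫ x in x0..x1, ∫ y in y0..y1, ∫ z in z0..z1,
            deriv (fun r => deriv (fun t => q1 t y r) x) z
              * ((z1 - z0) ^ 2 / 8 - (z - (z0 + z1) / 2) ^ 2 / 2)) := by
    rw [f1eq, f2eq, t1, t2, t3]; exact hmain
  -- ===== pair 2 (q2, y-direction) =====
  have hV2 : IsOpen ((fun p : ℝ × ℝ × ℝ => ((p.2.1, p.1, p.2.2) : ℝ × ℝ × ℝ)) ⁻¹' U) :=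
    hU.preimage (by fun_prop)
  have hbox2 : Icc y0 y1 ×ˢ Icc x0 x1 ×ˢ Icc z0 z1
      ⊆ (fun p : ℝ × ℝ × ℝ => ((p.2.1, p.1, p.2.2) : ℝ × ℝ × ℝ)) ⁻¹' U := fun p hp =>
    hTU ⟨hp.2.1, hp.1, hp.2.2⟩
  have hF2 : ContDiffOn ℝ 2 (fun p : ℝ × ℝ × ℝ => q2 p.2.1 p.1 p.2.2)
      ((fun p : ℝ × ℝ × ℝ => ((p.2.1, p.1, p.2.2) : ℝ × ℝ × ℝ)) ⁻¹' U) :=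
    hq2.comp ((by fun_prop :
      ContDiff ℝ 2 (fun p : ℝ × ℝ × ℝ => ((p.2.1, p.1, p.2.2) : ℝ × ℝ × ℝ)))).contDiffOn
      (fun p hp => hp)
  obtain ⟨Ha, Hb, Hc, hda, hdb, hdc, hptw2, hmain2⟩ :=
    pairFull hy' hx' hz' hV2 hbox2 (fun t s₁ s₂ => q2 s₁ t s₂) hF2
      (S ((x0 + x1) / 2) y0 ((z0 + z1) / 2) - vb3) c2 c4
  have f3eq : (∫ x in x0..x1, ∫ z in z0..z1, (-(q2 x y0 z)) * (S x y0 z - vb3))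
      = ∫ x in x0..x1, ∫ z in z0..z1, (-(q2 x y0 z)) *
        ((S ((x0 + x1) / 2) y0 ((z0 + z1) / 2) - vb3)
          + c2 * (x - (x0 + x1) / 2) + c4 * (z - (z0 + z1) / 2)) :=
    two_congr fun x z => by rw [hS, hS]; ring
  have f4eq : (∫ x in x0..x1, ∫ z in z0..z1, q2 x y1 z * (S x y1 z - vb4))
      = ∫ x in x0..x1, ∫ z in z0..z1, q2 x y1 z *
        ((S ((x0 + x1) / 2) y0 ((z0 + z1) / 2) - vb3)
          + c2 * (x - (x0 + x1) / 2) + c4 * (z - (z0 + z1) / 2)) :=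
    two_congr fun x z => by rw [hS, hS]; linear_combination q2 x y1 z * hky
  have u1 : (∫ x in x0..x1, ∫ y in y0..y1, ∫ z in z0..z1, deriv (fun s => q2 x s z) y)
      = ∫ t in y0..y1, ∫ s in x0..x1, ∫ z in z0..z1, Ha t s z := by
    rw [tri_congr hx' hy' hz'
      (fun x hx y hy z hz => ((hptw2 y hy x hx z hz).1).symm :
        ∀ x ∈ Icc x0 x1, ∀ y ∈ Icc y0 y1, ∀ z ∈ Icc z0 z1,
          deriv (fun s => q2 x s z) y = Ha y x z)]
    exact (swap_outer hy' hx' (fun t s z => Ha t s z) hda).symm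
  have u2 : (∫ x in x0..x1, ∫ y in y0..y1, ∫ z in z0..z1,
        deriv (fun t => deriv (fun s => q2 t s z) y) x
          * ((x1 - x0) ^ 2 / 8 - (x - (x0 + x1) / 2) ^ 2 / 2))
      = ∫ t in y0..y1, ∫ s in x0..x1, ∫ z in z0..z1,
        Hb t s z * ((x1 - x0) ^ 2 / 8 - (s - (x0 + x1) / 2) ^ 2 / 2) := by
    rw [tri_congr hx' hy' hz'
      (fun x hx y hy z hz => by rw [(hptw2 y hy x hx z hz).2.1] :
        ∀ x ∈ Icc x0 x1, ∀ y ∈ Icc y0 y1, ∀ z ∈ Icc z0 z1,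
          deriv (fun t => deriv (fun s => q2 t s z) y) x
            * ((x1 - x0) ^ 2 / 8 - (x - (x0 + x1) / 2) ^ 2 / 2)
          = Hb y x z * ((x1 - x0) ^ 2 / 8 - (x - (x0 + x1) / 2) ^ 2 / 2))]
    exact (swap_outer hy' hx'
      (fun t s z => Hb t s z * ((x1 - x0) ^ 2 / 8 - (s - (x0 + x1) / 2) ^ 2 / 2))
      (hdb.mul (by fun_prop))).symm
  have u3 : (∫ x in x0..x1, ∫ y in y0..y1, ∫ z in z0..z1,
        deriv (fun r => deriv (fun s => q2 x s r) y) z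
          * ((z1 - z0) ^ 2 / 8 - (z - (z0 + z1) / 2) ^ 2 / 2))
      = ∫ t in y0..y1, ∫ s in x0..x1, ∫ z in z0..z1,
        Hc t s z * ((z1 - z0) ^ 2 / 8 - (z - (z0 + z1) / 2) ^ 2 / 2) := by
    rw [tri_congr hx' hy' hz'
      (fun x hx y hy z hz => by rw [(hptw2 y hy x hx z hz).2.2] :
        ∀ x ∈ Icc x0 x1, ∀ y ∈ Icc y0 y1, ∀ z ∈ Icc z0 z1,
          deriv (fun r => deriv (fun s => q2 x s r) y) z
            * ((z1 - z0) ^ 2 / 8 - (z - (z0 + z1) / 2) ^ 2 / 2)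
          = Hc y x z * ((z1 - z0) ^ 2 / 8 - (z - (z0 + z1) / 2) ^ 2 / 2))]
    exact (swap_outer hy' hx'
      (fun t s z => Hc t s z * ((z1 - z0) ^ 2 / 8 - (z - (z0 + z1) / 2) ^ 2 / 2))
      (hdc.mul (by fun_prop))).symm
  have hpair2 : (∫ x in x0..x1, ∫ z in z0..z1, (-(q2 x y0 z)) * (S x y0 z - vb3))
      + (∫ x in x0..x1, ∫ z in z0..z1, q2 x y1 z * (S x y1 z - vb4))
      = (S ((x0 + x1) / 2) y0 ((z0 + z1) / 2) - vb3)
          * (∫ x in x0..x1, ∫ y in y0..y1, ∫ z in z0..z1, deriv (fun s => q2 x s z) y)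
        + c2 * (∫ x in x0..x1, ∫ y in y0..y1, ∫ z in z0..z1,
            deriv (fun t => deriv (fun s => q2 t s z) y) x
              * ((x1 - x0) ^ 2 / 8 - (x - (x0 + x1) / 2) ^ 2 / 2))
        + c4 * (∫ x in x0..x1, ∫ y in y0..y1, ∫ z in z0..z1,
            deriv (fun r => deriv (fun s => q2 x s r) y) z
              * ((z1 - z0) ^ 2 / 8 - (z - (z0 + z1) / 2) ^ 2 / 2)) := by
    rw [f3eq, f4eq, u1, u2, u3]; exact hmain2
  -- ===== pair 3 (q3, z-direction) =====
  have hV3 : IsOpen ((fun p : ℝ × ℝ × ℝ => ((p.2.1, p.2.2, p.1) : ℝ × ℝ × ℝ)) ⁻¹' U) :=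
    hU.preimage (by fun_prop)
  have hbox3 : Icc z0 z1 ×ˢ Icc x0 x1 ×ˢ Icc y0 y1
      ⊆ (fun p : ℝ × ℝ × ℝ => ((p.2.1, p.2.2, p.1) : ℝ × ℝ × ℝ)) ⁻¹' U := fun p hp =>
    hTU ⟨hp.2.1, hp.2.2, hp.1⟩
  have hF3 : ContDiffOn ℝ 2 (fun p : ℝ × ℝ × ℝ => q3 p.2.1 p.2.2 p.1)
      ((fun p : ℝ × ℝ × ℝ => ((p.2.1, p.2.2, p.1) : ℝ × ℝ × ℝ)) ⁻¹' U) :=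
    hq3.comp ((by fun_prop :
      ContDiff ℝ 2 (fun p : ℝ × ℝ × ℝ => ((p.2.1, p.2.2, p.1) : ℝ × ℝ × ℝ)))).contDiffOn
      (fun p hp => hp)
  obtain ⟨Ka, Kb, Kc, hea, heb, hec, hptw3, hmain3⟩ :=
    pairFull hz' hx' hy' hV3 hbox3 (fun t s₁ s₂ => q3 s₁ s₂ t) hF3
      (S ((x0 + x1) / 2) ((y0 + y1) / 2) z0 - vb5) c2 c3
  have f5eq : (∫ x in x0..x1, ∫ y in y0..y1, (-(q3 x y z0)) * (S x y z0 - vb5))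
      = ∫ x in x0..x1, ∫ y in y0..y1, (-(q3 x y z0)) *
        ((S ((x0 + x1) / 2) ((y0 + y1) / 2) z0 - vb5)
          + c2 * (x - (x0 + x1) / 2) + c3 * (y - (y0 + y1) / 2)) :=
    two_congr fun x y => by rw [hS, hS]; ring
  have f6eq : (∫ x in x0..x1, ∫ y in y0..y1, q3 x y z1 * (S x y z1 - vb6))
      = ∫ x in x0..x1, ∫ y in y0..y1, q3 x y z1 *
        ((S ((x0 + x1) / 2) ((y0 + y1) / 2) z0 - vb5)
          + c2 * (x - (x0 + x1) / 2) + c3 * (y - (y0 + y1) / 2)) :=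
    two_congr fun x y => by rw [hS, hS]; linear_combination q3 x y z1 * hkz
  have v1 : (∫ x in x0..x1, ∫ y in y0..y1, ∫ z in z0..z1, deriv (fun r => q3 x y r) z)
      = ∫ t in z0..z1, ∫ s in x0..x1, ∫ y in y0..y1, Ka t s y := by
    rw [tri_congr hx' hy' hz'
      (fun x hx y hy z hz => ((hptw3 z hz x hx y hy).1).symm :
        ∀ x ∈ Icc x0 x1, ∀ y ∈ Icc y0 y1, ∀ z ∈ Icc z0 z1,
          deriv (fun r => q3 x y r) z = Ka z x y)]
    rw [swap_inner hy' hz' (fun x y z => Ka z x y)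
      (hea.comp (by fun_prop : Continuous fun p : ℝ × ℝ × ℝ => ((p.2.2, p.1, p.2.1) : ℝ × ℝ × ℝ)))]
    exact swap_outer hx' hz' (fun x z y => Ka z x y)
      (hea.comp (by fun_prop : Continuous fun p : ℝ × ℝ × ℝ => ((p.2.1, p.1, p.2.2) : ℝ × ℝ × ℝ)))
  have v2 : (∫ x in x0..x1, ∫ y in y0..y1, ∫ z in z0..z1,
        deriv (fun t => deriv (fun r => q3 t y r) z) x
          * ((x1 - x0) ^ 2 / 8 - (x - (x0 + x1) / 2) ^ 2 / 2))
      = ∫ t in z0..z1, ∫ s in x0..x1, ∫ y in y0..y1,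
        Kb t s y * ((x1 - x0) ^ 2 / 8 - (s - (x0 + x1) / 2) ^ 2 / 2) := by
    rw [tri_congr hx' hy' hz'
      (fun x hx y hy z hz => by rw [(hptw3 z hz x hx y hy).2.1] :
        ∀ x ∈ Icc x0 x1, ∀ y ∈ Icc y0 y1, ∀ z ∈ Icc z0 z1,
          deriv (fun t => deriv (fun r => q3 t y r) z) x
            * ((x1 - x0) ^ 2 / 8 - (x - (x0 + x1) / 2) ^ 2 / 2)
          = Kb z x y * ((x1 - x0) ^ 2 / 8 - (x - (x0 + x1) / 2) ^ 2 / 2))]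
    rw [swap_inner hy' hz'
      (fun x y z => Kb z x y * ((x1 - x0) ^ 2 / 8 - (x - (x0 + x1) / 2) ^ 2 / 2))
      ((heb.comp (by fun_prop : Continuous fun p : ℝ × ℝ × ℝ =>
        ((p.2.2, p.1, p.2.1) : ℝ × ℝ × ℝ))).mul (by fun_prop))]
    exact swap_outer hx' hz'
      (fun x z y => Kb z x y * ((x1 - x0) ^ 2 / 8 - (x - (x0 + x1) / 2) ^ 2 / 2))
      ((heb.comp (by fun_prop : Continuous fun p : ℝ × ℝ × ℝ =>
        ((p.2.1, p.1, p.2.2) : ℝ × ℝ × ℝ))).mul (by fun_prop))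
  have v3 : (∫ x in x0..x1, ∫ y in y0..y1, ∫ z in z0..z1,
        deriv (fun s => deriv (fun r => q3 x s r) z) y
          * ((y1 - y0) ^ 2 / 8 - (y - (y0 + y1) / 2) ^ 2 / 2))
      = ∫ t in z0..z1, ∫ s in x0..x1, ∫ y in y0..y1,
        Kc t s y * ((y1 - y0) ^ 2 / 8 - (y - (y0 + y1) / 2) ^ 2 / 2) := by
    rw [tri_congr hx' hy' hz'
      (fun x hx y hy z hz => by rw [(hptw3 z hz x hx y hy).2.2] :
        ∀ x ∈ Icc x0 x1, ∀ y ∈ Icc y0 y1, ∀ z ∈ Icc z0 z1,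
          deriv (fun s => deriv (fun r => q3 x s r) z) y
            * ((y1 - y0) ^ 2 / 8 - (y - (y0 + y1) / 2) ^ 2 / 2)
          = Kc z x y * ((y1 - y0) ^ 2 / 8 - (y - (y0 + y1) / 2) ^ 2 / 2))]
    rw [swap_inner hy' hz'
      (fun x y z => Kc z x y * ((y1 - y0) ^ 2 / 8 - (y - (y0 + y1) / 2) ^ 2 / 2))
      ((hec.comp (by fun_prop : Continuous fun p : ℝ × ℝ × ℝ =>
        ((p.2.2, p.1, p.2.1) : ℝ × ℝ × ℝ))).mul (by fun_prop))]
    exact swap_outer hx' hz'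
      (fun x z y => Kc z x y * ((y1 - y0) ^ 2 / 8 - (y - (y0 + y1) / 2) ^ 2 / 2))
      ((hec.comp (by fun_prop : Continuous fun p : ℝ × ℝ × ℝ =>
        ((p.2.1, p.1, p.2.2) : ℝ × ℝ × ℝ))).mul (by fun_prop))
  have hpair3 : (∫ x in x0..x1, ∫ y in y0..y1, (-(q3 x y z0)) * (S x y z0 - vb5))
      + (∫ x in x0..x1, ∫ y in y0..y1, q3 x y z1 * (S x y z1 - vb6))
      = (S ((x0 + x1) / 2) ((y0 + y1) / 2) z0 - vb5)
          * (∫ x in x0..x1, ∫ y in y0..y1, ∫ z in z0..z1, deriv (fun r => q3 x y r) z)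
        + c2 * (∫ x in x0..x1, ∫ y in y0..y1, ∫ z in z0..z1,
            deriv (fun t => deriv (fun r => q3 t y r) z) x
              * ((x1 - x0) ^ 2 / 8 - (x - (x0 + x1) / 2) ^ 2 / 2))
        + c3 * (∫ x in x0..x1, ∫ y in y0..y1, ∫ z in z0..z1,
            deriv (fun s => deriv (fun r => q3 x s r) z) y
              * ((y1 - y0) ^ 2 / 8 - (y - (y0 + y1) / 2) ^ 2 / 2)) := by
    rw [f5eq, f6eq, v1, v2, v3]; exact hmain3
  rw [hR1]
  linarith [hpair1, hpair2, hpair3]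
end

section
/- Let $u$ be three times continuously differentiable on $[a,b]$, $h=b-a$, and define the cubic kernel $K(x)=\frac{h^2(x-a)}{6}-\frac{h(x-a)^2}{2}+\frac{(x-a)^3}{3}$. Then $K(a)=K(b)=0$, $|K(x)|\le\frac{h^3}{24}$ for all $x\in[a,b]$, and the Euler–MacLaurin-type identity $u(a)+u(b)=\frac{2}{h}\int_a^b u(x)\,dx+\frac{h}{6}\int_a^b u''(x)\,dx+\frac{1}{h}\int_a^b u'''(x)\,K(x)\,dx$ holds. -/
set_option maxHeartbeats 1000000

theorem stmt12 (a b h : ℝ) (hab : a < b) (hh : h = b - a)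
    -- `u` is three times continuously differentiable on `[a, b]`
    (u u' u'' u''' : ℝ → ℝ)
    (hu : ∀ x ∈ Set.Icc a b, HasDerivWithinAt u (u' x) (Set.Icc a b) x)
    (hu' : ∀ x ∈ Set.Icc a b, HasDerivWithinAt u' (u'' x) (Set.Icc a b) x)
    (hu'' : ∀ x ∈ Set.Icc a b, HasDerivWithinAt u'' (u''' x) (Set.Icc a b) x)
    (hu''' : ContinuousOn u''' (Set.Icc a b))
    (K : ℝ → ℝ)
    (hK : ∀ x : ℝ, K x = h ^ 2 * (x - a) / 6 - h * (x - a) ^ 2 / 2 + (x - a) ^ 3 / 3) :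
    K a = 0 ∧ K b = 0 ∧ (∀ x ∈ Set.Icc a b, |K x| ≤ h ^ 3 / 24) ∧
    u a + u b
      = 2 / h * (∫ x in a..b, u x) + h / 6 * (∫ x in a..b, u'' x)
        + 1 / h * (∫ x in a..b, u''' x * K x) := by
  have hab' : a ≤ b := hab.le
  have h0 : 0 < h := by rw [hh]; linarith
  have hKfun : K = fun x => h ^ 2 * (x - a) / 6 - h * (x - a) ^ 2 / 2 + (x - a) ^ 3 / 3 :=
    funext hK
  have Ka : K a = 0 := by rw [hK]; ring
  have Kb : K b = 0 := by rw [hK, ← hh]; ring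
  have hicc : Set.uIcc a b = Set.Icc a b := Set.uIcc_of_le hab'
  -- bound on K
  have hbound : ∀ x ∈ Set.Icc a b, |K x| ≤ h ^ 3 / 24 := by
    intro x hx
    obtain ⟨hx1, hx2⟩ := hx
    set t := x - a with htdef
    have ht0 : 0 ≤ t := by simp [htdef]; linarith
    have hth : t ≤ h := by rw [hh]; simp [htdef]; linarith
    have hKx : K x = t * (h - t) * (h - 2 * t) / 6 := by rw [hK]; ring
    have h1 : t * (h - t) ≤ h ^ 2 / 4 := by nlinarith [sq_nonneg (h - 2 * t)]
    have h2 : 0 ≤ t * (h - t) := mul_nonneg ht0 (by linarith)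
    have h3 : |h - 2 * t| ≤ h := abs_le.2 ⟨by linarith, by linarith⟩
    have : |K x| = t * (h - t) * |h - 2 * t| / 6 := by
      rw [hKx, abs_div, abs_mul, abs_of_nonneg h2]
      norm_num
    rw [this]
    have h4 : t * (h - t) * |h - 2 * t| ≤ h ^ 2 / 4 * h := by
      calc t * (h - t) * |h - 2 * t| ≤ (h ^ 2 / 4) * |h - 2 * t| :=
            mul_le_mul_of_nonneg_right h1 (abs_nonneg _)
        _ ≤ h ^ 2 / 4 * h := by
            apply mul_le_mul_of_nonneg_left h3 (by positivity)
    linarith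
  refine ⟨Ka, Kb, hbound, ?_⟩
  -- derivatives of K
  set Kd : ℝ → ℝ := fun x => h ^ 2 / 6 - h * (x - a) + (x - a) ^ 2 with hKddef
  set Kdd : ℝ → ℝ := fun x => -h + 2 * (x - a) with hKdddef
  have hid : ∀ x : ℝ, HasDerivAt (fun y : ℝ => y - a) 1 x := fun x =>
    (hasDerivAt_id x).sub_const a
  have hKd : ∀ x : ℝ, HasDerivAt K (Kd x) x := by
    intro x
    rw [hKfun]
    have h1 := hid x
    have := ((((h1.const_mul (h ^ 2)).div_const 6).sub
      (((h1.pow 2).const_mul h).div_const 2)).add ((h1.pow 3).div_const 3))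
    refine this.congr_deriv ?_; symm
    simp [hKddef]; ring
  have hKdd : ∀ x : ℝ, HasDerivAt Kd (Kdd x) x := by
    intro x
    have h1 := hid x
    have := ((hasDerivAt_const x (h ^ 2 / 6)).sub (h1.const_mul h)).add (h1.pow 2)
    refine this.congr_deriv ?_; symm
    simp [hKdddef]
    try ring
  have hKddd : ∀ x : ℝ, HasDerivAt Kdd (2 : ℝ) x := by
    intro x
    have h1 := hid x
    have := (hasDerivAt_const x (-h)).add ((h1.const_mul 2))
    refine this.congr_deriv ?_; symm
    · ring
  -- continuity
  have hcu : ContinuousOn u (Set.Icc a b) := fun x hx => (hu x hx).continuousWithinAt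
  have hcu' : ContinuousOn u' (Set.Icc a b) := fun x hx => (hu' x hx).continuousWithinAt
  have hcu'' : ContinuousOn u'' (Set.Icc a b) := fun x hx => (hu'' x hx).continuousWithinAt
  have hcK : Continuous K := by rw [hKfun]; fun_prop
  have hcKd : Continuous Kd := by rw [hKddef]; fun_prop
  have hcKdd : Continuous Kdd := by rw [hKdddef]; fun_prop
  -- integrability
  have hiu : IntervalIntegrable u MeasureTheory.volume a b :=
    (hicc ▸ hcu).intervalIntegrable
  have hiu' : IntervalIntegrable u' MeasureTheory.volume a b :=
    (hicc ▸ hcu').intervalIntegrable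
  have hiu'' : IntervalIntegrable u'' MeasureTheory.volume a b :=
    (hicc ▸ hcu'').intervalIntegrable
  have hiu''' : IntervalIntegrable u''' MeasureTheory.volume a b :=
    (hicc ▸ hu''').intervalIntegrable
  have hiKd : IntervalIntegrable Kd MeasureTheory.volume a b :=
    hcKd.intervalIntegrable a b
  have hiKdd : IntervalIntegrable Kdd MeasureTheory.volume a b :=
    hcKdd.intervalIntegrable a b
  have hi2 : IntervalIntegrable (fun _ : ℝ => (2 : ℝ)) MeasureTheory.volume a b :=
    intervalIntegrable_const
  -- integration by parts
  have I1 : ∫ x in a..b, K x * u''' x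
      = K b * u'' b - K a * u'' a - ∫ x in a..b, Kd x * u'' x := by
    apply intervalIntegral.integral_mul_deriv_eq_deriv_mul_of_hasDerivWithinAt
      (fun x _ => (hKd x).hasDerivWithinAt) (fun x hx => hicc ▸ hu'' x (hicc ▸ hx))
      hiKd hiu'''
  have I2 : ∫ x in a..b, Kd x * u'' x
      = Kd b * u' b - Kd a * u' a - ∫ x in a..b, Kdd x * u' x := by
    apply intervalIntegral.integral_mul_deriv_eq_deriv_mul_of_hasDerivWithinAt
      (fun x _ => (hKdd x).hasDerivWithinAt) (fun x hx => hicc ▸ hu' x (hicc ▸ hx))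
      hiKdd hiu''
  have I3 : ∫ x in a..b, Kdd x * u' x
      = Kdd b * u b - Kdd a * u a - ∫ x in a..b, (2 : ℝ) * u x := by
    apply intervalIntegral.integral_mul_deriv_eq_deriv_mul_of_hasDerivWithinAt
      (fun x _ => (hKddd x).hasDerivWithinAt) (fun x hx => hicc ▸ hu x (hicc ▸ hx))
      hi2 hiu'
  -- FTC for u''
  have FTC : ∫ x in a..b, u'' x = u' b - u' a := by
    apply intervalIntegral.integral_eq_sub_of_hasDeriv_right_of_le hab' hcu'
      (fun x hx => ((hu' x (Set.mem_Icc_of_Ioo hx)).hasDerivAt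
        (Icc_mem_nhds hx.1 hx.2)).hasDerivWithinAt) hiu''
  have h2int : ∫ x in a..b, (2 : ℝ) * u x = 2 * ∫ x in a..b, u x :=
    intervalIntegral.integral_const_mul 2 u
  -- evaluate boundary values
  have Kda : Kd a = h ^ 2 / 6 := by simp [hKddef]
  have Kdb : Kd b = h ^ 2 / 6 := by simp [hKddef, ← hh]; ring
  have Kdda : Kdd a = -h := by simp [hKdddef]
  have Kddb : Kdd b = h := by simp [hKdddef, ← hh]; ring
  have hcomm : ∫ x in a..b, u''' x * K x = ∫ x in a..b, K x * u''' x := by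
    simp_rw [mul_comm]
  rw [hcomm, I1, Ka, Kb, I2, Kda, Kdb, I3, Kdda, Kddb, h2int, FTC]
  field_simp
  ring
end

section
/- Let $u$ be three times continuously differentiable on $[a,b]$ and $h=b-a$. Then $\left|u(a)+u(b)-\frac{2}{h}\int_a^b u(x)\,dx-\frac{h}{6}\int_a^b u''(x)\,dx\right|\le\frac{h^2}{24}\int_a^b|u'''(x)|\,dx$. -/
theorem stmt13 (a b h : ℝ) (hab : a < b) (hh : h = b - a)
    -- `u` is three times continuously differentiable on `[a, b]`
    (u u' u'' u''' : ℝ → ℝ)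
    (hu : ∀ x ∈ Set.Icc a b, HasDerivWithinAt u (u' x) (Set.Icc a b) x)
    (hu' : ∀ x ∈ Set.Icc a b, HasDerivWithinAt u' (u'' x) (Set.Icc a b) x)
    (hu'' : ∀ x ∈ Set.Icc a b, HasDerivWithinAt u'' (u''' x) (Set.Icc a b) x)
    (hu''' : ContinuousOn u''' (Set.Icc a b)) :
    |u a + u b - 2 / h * (∫ x in a..b, u x) - h / 6 * (∫ x in a..b, u'' x)|
      ≤ h ^ 2 / 24 * ∫ x in a..b, |u''' x| := by
  have hh0 : (0:ℝ) < h := by rw [hh]; linarith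
  have hne : h ≠ 0 := ne_of_gt hh0
  have hab' : a ≤ b := le_of_lt hab
  have huIcc : Set.uIcc a b = Set.Icc a b := Set.uIcc_of_le hab'
  -- Peano kernel and its derivatives
  set K : ℝ → ℝ := fun t => (b - t) * (t - a) * (a + b - 2 * t) / (6 * h) with hK
  set K1 : ℝ → ℝ := fun t =>
    ((-1 * (t - a) + (b - t) * 1) * (a + b - 2 * t) + (b - t) * (t - a) * (-2)) / (6 * h) with hK1
  set K2 : ℝ → ℝ := fun t => (2 * t - (a + b)) / h with hK2
  have hbd : ∀ t : ℝ, HasDerivAt (fun t : ℝ => b - t) (-1) t := fun t => by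
    simpa using (hasDerivAt_id t).const_sub b
  have had : ∀ t : ℝ, HasDerivAt (fun t : ℝ => t - a) 1 t := fun t =>
    (hasDerivAt_id t).sub_const a
  have hcd : ∀ t : ℝ, HasDerivAt (fun t : ℝ => a + b - 2 * t) (-2) t := fun t => by
    simpa using ((hasDerivAt_id t).const_mul 2).const_sub (a + b)
  have hKd : ∀ t : ℝ, HasDerivAt K (K1 t) t := by
    intro t
    have := (((hbd t).mul (had t)).mul (hcd t)).div_const (6 * h)
    convert this using 1
    all_goals rfl
  have hK1d : ∀ t : ℝ, HasDerivAt K1 (K2 t) t := by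
    intro t
    have h1 : HasDerivAt (fun t : ℝ =>
        (-1 * (t - a) + (b - t) * 1) * (a + b - 2 * t) + (b - t) * (t - a) * (-2))
        ((-1 * 1 + -1 * 1) * (a + b - 2 * t) + (-1 * (t - a) + (b - t) * 1) * (-2)
          + ((-1) * (t - a) + (b - t) * 1) * (-2)) t := by
      exact ((((had t).const_mul (-1)).add ((hbd t).mul_const 1)).mul (hcd t)).add
        (((hbd t).mul (had t)).mul_const (-2))
    have := h1.div_const (6 * h)
    convert this using 1
    · rfl
    · rfl
    simp only [hK2]
    field_simp
    ring
  have hK2d : ∀ t : ℝ, HasDerivAt K2 (2 / h) t := by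
    intro t
    have := (((hasDerivAt_id t).const_mul 2).sub_const (a + b)).div_const h
    simpa using this
  -- continuity
  have hcu : ContinuousOn u (Set.Icc a b) := fun x hx => (hu x hx).continuousWithinAt
  have hcu' : ContinuousOn u' (Set.Icc a b) := fun x hx => (hu' x hx).continuousWithinAt
  have hcu'' : ContinuousOn u'' (Set.Icc a b) := fun x hx => (hu'' x hx).continuousWithinAt
  have hKc : Continuous K :=
    (((continuous_const.sub continuous_id).mul (continuous_id.sub continuous_const)).mul
      (continuous_const.sub (continuous_const.mul continuous_id))).div_const _
  have hK1c : Continuous K1 := by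
    simp only [hK1]
    fun_prop
  have hK2c : Continuous K2 :=
    ((continuous_const.mul continuous_id).sub continuous_const).div_const _
  -- integrability
  have hint_u : IntervalIntegrable u MeasureTheory.volume a b :=
    (hcu.mono (by rw [huIcc])).intervalIntegrable
  have hint_u'' : IntervalIntegrable u'' MeasureTheory.volume a b :=
    (hcu''.mono (by rw [huIcc])).intervalIntegrable
  have hint_Ku''' : IntervalIntegrable (fun x => K x * u''' x) MeasureTheory.volume a b := by
    apply ContinuousOn.intervalIntegrable
    rw [huIcc]
    exact (hKc.continuousOn).mul hu'''
  have hint_absu''' : IntervalIntegrable (fun x => |u''' x|) MeasureTheory.volume a b := by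
    apply ContinuousOn.intervalIntegrable
    rw [huIcc]
    exact hu'''.abs
  -- within-Ioi derivative helper
  have hIoi : ∀ x ∈ Set.Ioo a b, Set.Icc a b ∈ nhdsWithin x (Set.Ioi x) := by
    intro x hx
    apply mem_nhdsWithin.2
    exact ⟨Set.Iio b, isOpen_Iio, hx.2, fun y hy => ⟨le_of_lt (lt_of_le_of_lt hx.1.le hy.2), le_of_lt hy.1⟩⟩
  -- FTC 1 : ∫ u'' = u' b - u' a
  have hJ : (∫ x in a..b, u'' x) = u' b - u' a := by
    apply intervalIntegral.integral_eq_sub_of_hasDeriv_right_of_le hab' hcu'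
    · intro x hx
      exact ((hu' x ⟨hx.1.le, hx.2.le⟩).mono_of_mem_nhdsWithin (hIoi x hx))
    · exact hint_u''
  -- FTC 2 for F = K u'' - K1 u' + K2 u
  set F : ℝ → ℝ := fun t => K t * u'' t - K1 t * u' t + K2 t * u t with hF
  have hFderiv : ∀ x ∈ Set.Icc a b,
      HasDerivWithinAt F (K x * u''' x + 2 / h * u x) (Set.Icc a b) x := by
    intro x hx
    have h1 := ((hKd x).hasDerivWithinAt.mul (hu'' x hx)).sub
      ((hK1d x).hasDerivWithinAt.mul (hu' x hx))
    have h2 := h1.add ((hK2d x).hasDerivWithinAt.mul (hu x hx))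
    convert h2 using 1
    · rfl
    · rfl
    · rfl
    ring
  have hFTC2 : (∫ x in a..b, (K x * u''' x + 2 / h * u x)) = F b - F a := by
    apply intervalIntegral.integral_eq_sub_of_hasDeriv_right_of_le hab'
    · exact ((hKc.continuousOn.mul hcu'').sub (hK1c.continuousOn.mul hcu')).add
        (hK2c.continuousOn.mul hcu)
    · intro x hx
      exact (hFderiv x ⟨hx.1.le, hx.2.le⟩).mono_of_mem_nhdsWithin (hIoi x hx)
    · apply ContinuousOn.intervalIntegrable
      rw [huIcc]
      exact (hKc.continuousOn.mul hu''').add (continuousOn_const.mul hcu)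
  -- boundary values
  have hKa : K a = 0 := by simp [hK]
  have hKb : K b = 0 := by simp [hK]
  have hba : b - a ≠ 0 := by intro hc; linarith
  have hK1a : K1 a = h / 6 := by
    simp only [hK1]; rw [hh, div_eq_div_iff (by positivity) (by norm_num)]; ring
  have hK1b : K1 b = h / 6 := by
    simp only [hK1]; rw [hh, div_eq_div_iff (by positivity) (by norm_num)]; ring
  have hK2a : K2 a = -1 := by
    simp only [hK2]; rw [hh, div_eq_iff (by positivity)]; ring
  have hK2b : K2 b = 1 := by
    simp only [hK2]; rw [hh, div_eq_iff (by positivity)]; ring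
  -- split the integral
  have hsplit : (∫ x in a..b, (K x * u''' x + 2 / h * u x))
      = (∫ x in a..b, K x * u''' x) + 2 / h * (∫ x in a..b, u x) := by
    rw [intervalIntegral.integral_add hint_Ku''' (hint_u.const_mul (2 / h)),
      intervalIntegral.integral_const_mul]
  -- error representation
  have hrep : u a + u b - 2 / h * (∫ x in a..b, u x) - h / 6 * (∫ x in a..b, u'' x)
      = ∫ x in a..b, K x * u''' x := by
    have hFb : F b - F a = u a + u b - h / 6 * (u' b - u' a) := by
      simp only [hF, hKa, hKb, hK1a, hK1b, hK2a, hK2b]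
      ring
    rw [hJ]
    have := hFTC2
    rw [hsplit, hFb] at this
    linarith
  rw [hrep]
  -- kernel bound
  have hKbound : ∀ x ∈ Set.Icc a b, |K x * u''' x| ≤ h ^ 2 / 24 * |u''' x| := by
    intro x hx
    rw [abs_mul]
    apply mul_le_mul_of_nonneg_right _ (abs_nonneg _)
    have hx1 := hx.1
    have hx2 := hx.2
    have h1 : (b - x) * (x - a) ≤ h ^ 2 / 4 := by rw [hh]; nlinarith [sq_nonneg (a + b - 2 * x)]
    have h1' : (0:ℝ) ≤ (b - x) * (x - a) := mul_nonneg (by linarith) (by linarith)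
    have h2 : |a + b - 2 * x| ≤ h := abs_le.2 ⟨by linarith [hh], by linarith [hh]⟩
    have : |K x| = (b - x) * (x - a) * |a + b - 2 * x| / (6 * h) := by
      simp only [hK]
      rw [abs_div, abs_mul, abs_of_nonneg h1', abs_of_pos (by positivity : (0:ℝ) < 6 * h)]
    rw [this]
    rw [div_le_iff₀ (by positivity : (0:ℝ) < 6 * h)]
    calc (b - x) * (x - a) * |a + b - 2 * x| ≤ (h ^ 2 / 4) * h :=
          mul_le_mul h1 h2 (abs_nonneg _) (by positivity)
      _ = h ^ 2 / 24 * (6 * h) := by ring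
  calc |∫ x in a..b, K x * u''' x| ≤ ∫ x in a..b, |K x * u''' x| :=
        intervalIntegral.abs_integral_le_integral_abs hab'
    _ ≤ ∫ x in a..b, h ^ 2 / 24 * |u''' x| := by
        apply intervalIntegral.integral_mono_on hab' hint_Ku'''.abs
          (hint_absu'''.const_mul _) hKbound
    _ = h ^ 2 / 24 * ∫ x in a..b, |u''' x| := intervalIntegral.integral_const_mul _ _
end

section
/- Let $f$ be continuously differentiable on a neighborhood of $T$. Then $\int_{F_3}f\,dS+\int_{F_4}f\,dS=\frac{2}{e_y}\left(\int_T f\,dV+\int_T \partial_y f\,(y-y_c)\,dV\right)$, and the analogous identities hold in the $x$-direction ($F_1,F_2$ with $e_x$ and $\partial_x f\,(x-x_c)$) and in the $z$-direction ($F_5,F_6$ with $e_z$ and $\partial_z f\,(z-z_c)$). -/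
open MeasureTheory Set Function

private lemma tietze3 {s : Set (ℝ×ℝ×ℝ)} (hs : IsClosed s) {g : ℝ×ℝ×ℝ → ℝ}
    (hg : ContinuousOn g s) : ∃ G : ℝ×ℝ×ℝ → ℝ, Continuous G ∧ ∀ p ∈ s, G p = g p := by
  obtain ⟨G, hG⟩ := ContinuousMap.exists_restrict_eq (Y := ℝ) hs ⟨s.restrict g, hg.restrict⟩
  exact ⟨G, G.continuous, fun p hp => DFunLike.congr_fun hG ⟨p, hp⟩⟩

private lemma clamp_mem {a b u : ℝ} (hab : a ≤ b) :
    max a (min u b) ∈ Set.Icc a b :=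
  ⟨le_max_left _ _, max_le hab (min_le_right _ _)⟩

private lemma clamp_dist {a b u ε : ℝ} (hab : a ≤ b) (hε : 0 ≤ ε)
    (h1 : a - ε ≤ u) (h2 : u ≤ b + ε) : |u - max a (min u b)| ≤ ε := by
  rcases le_total u a with h | h
  · rw [min_eq_left (h.trans hab), max_eq_left h, abs_of_nonpos (by linarith)]; linarith
  · rcases le_total u b with h' | h'
    · rw [min_eq_left h', max_eq_right h]; simpa using hε
    · rw [min_eq_right h', max_eq_right hab, abs_of_nonneg (by linarith)]; linarith

private lemma swap2 {a b c d : ℝ} (hab : a ≤ b) (hcd : c ≤ d) {H : ℝ → ℝ → ℝ}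
    (h : Continuous fun p : ℝ × ℝ => H p.1 p.2) :
    ∫ s in a..b, ∫ t in c..d, H s t = ∫ t in c..d, ∫ s in a..b, H s t := by
  rw [intervalIntegral.integral_of_le hab, intervalIntegral.integral_of_le hcd]
  simp_rw [intervalIntegral.integral_of_le hab, intervalIntegral.integral_of_le hcd]
  apply MeasureTheory.integral_integral_swap
  rw [Measure.prod_restrict]
  exact (h.continuousOn.integrableOn_compact (isCompact_Icc.prod isCompact_Icc)).mono_set
    (Set.prod_mono Set.Ioc_subset_Icc_self Set.Ioc_subset_Icc_self)

private lemma oneD {a b : ℝ} (hab : a < b) {g g' : ℝ → ℝ}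
    (hg : ∀ t ∈ Set.Icc a b, HasDerivAt g (g' t) t)
    (hg' : ContinuousOn g' (Set.Icc a b)) :
    g a + g b = 2 / (b - a) * ((∫ t in a..b, g t)
      + ∫ t in a..b, g' t * (t - (a + b) / 2)) := by
  have hab' : a ≤ b := hab.le
  have huIcc : Set.uIcc a b = Set.Icc a b := Set.uIcc_of_le hab'
  have hgc : ContinuousOn g (Set.Icc a b) :=
    fun t ht => ((hg t ht).continuousAt).continuousWithinAt
  have hcc : ContinuousOn (fun t => g' t * (t - (a + b) / 2)) (Set.Icc a b) :=
    hg'.mul (continuousOn_id.sub continuousOn_const)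
  have hint1 : IntervalIntegrable g volume a b :=
    (huIcc ▸ hgc).intervalIntegrable
  have hint2 : IntervalIntegrable (fun t => g' t * (t - (a + b) / 2)) volume a b :=
    (huIcc ▸ hcc).intervalIntegrable
  have hder : ∀ t ∈ Set.uIcc a b,
      HasDerivAt (fun t => g t * (t - (a + b) / 2))
        (g' t * (t - (a + b) / 2) + g t) t := by
    intro t ht
    rw [huIcc] at ht
    have := (hg t ht).mul ((hasDerivAt_id t).sub (hasDerivAt_const t ((a + b) / 2)))
    simp at this
    exact this
  have key := intervalIntegral.integral_eq_sub_of_hasDerivAt hder (hint2.add hint1)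
  rw [intervalIntegral.integral_add hint2 hint1] at key
  have h2 : (∫ t in a..b, g t) + ∫ t in a..b, g' t * (t - (a + b) / 2)
      = (b - a) / 2 * (g a + g b) := by linear_combination key
  rw [h2]
  have : b - a ≠ 0 := sub_ne_zero.mpr hab.ne'
  field_simp

private lemma master {p q r s a b : ℝ} (hpq : p ≤ q) (hab : a < b) (hrs : r ≤ s)
    {G D : ℝ → ℝ → ℝ → ℝ}
    (hG : Continuous fun t : ℝ × ℝ × ℝ => G t.1 t.2.1 t.2.2)
    (hD : Continuous fun t : ℝ × ℝ × ℝ => D t.1 t.2.1 t.2.2)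
    (hder : ∀ u ∈ Set.Icc p q, ∀ w ∈ Set.Icc r s, ∀ v ∈ Set.Icc a b,
      HasDerivAt (fun v => G u v w) (D u v w) v) :
    (∫ u in p..q, ∫ w in r..s, G u a w) + (∫ u in p..q, ∫ w in r..s, G u b w)
      = 2 / (b - a) * ((∫ u in p..q, ∫ v in a..b, ∫ w in r..s, G u v w)
        + ∫ u in p..q, ∫ v in a..b, ∫ w in r..s, D u v w * (v - (a + b) / 2)) := by
  have hab' : a ≤ b := hab.le
  set c : ℝ := (a + b) / 2 with hc
  set E : ℝ → ℝ → ℝ → ℝ := fun u v w => D u v w * (v - c) with hE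
  have hEcont : Continuous fun t : ℝ × ℝ × ℝ => E t.1 t.2.1 t.2.2 :=
    hD.mul (by fun_prop)
  -- inner integrals in v
  set J : ℝ → ℝ → ℝ := fun u w => ∫ v in a..b, G u v w with hJ
  set K : ℝ → ℝ → ℝ := fun u w => ∫ v in a..b, E u v w with hK
  have hJc : Continuous fun uw : ℝ × ℝ => J uw.1 uw.2 := by
    have h : Continuous (Function.uncurry fun (uw : ℝ × ℝ) v => G uw.1 v uw.2) :=
      hG.comp (show Continuous fun pr : (ℝ × ℝ) × ℝ => ((pr.1.1, pr.2, pr.1.2) : ℝ×ℝ×ℝ) by fun_prop)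
    exact intervalIntegral.continuous_parametric_intervalIntegral_of_continuous' h a b
  have hKc : Continuous fun uw : ℝ × ℝ => K uw.1 uw.2 := by
    have h : Continuous (Function.uncurry fun (uw : ℝ × ℝ) v => E uw.1 v uw.2) :=
      hEcont.comp (show Continuous fun pr : (ℝ × ℝ) × ℝ => ((pr.1.1, pr.2, pr.1.2) : ℝ×ℝ×ℝ) by fun_prop)
    exact intervalIntegral.continuous_parametric_intervalIntegral_of_continuous' h a b
  -- pointwise identity
  have hpt : ∀ u ∈ Set.Icc p q, ∀ w ∈ Set.Icc r s,
      G u a w + G u b w = 2 / (b - a) * (J u w + K u w) := by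
    intro u hu w hw
    exact oneD hab (fun v hv => hder u hu w hw v hv)
      ((hD.comp (by fun_prop : Continuous fun v : ℝ => ((u, v, w) : ℝ×ℝ×ℝ))).continuousOn)
  -- integrability facts
  have hintGa : ∀ y : ℝ, ∀ u, IntervalIntegrable (fun w => G u y w) volume r s :=
    fun y u => ((hG.comp (by fun_prop : Continuous fun w : ℝ => ((u, y, w) : ℝ×ℝ×ℝ))).intervalIntegrable _ _)
  have houtGa : ∀ y : ℝ, IntervalIntegrable (fun u => ∫ w in r..s, G u y w) volume p q := by
    intro y
    have h : Continuous (Function.uncurry fun (u : ℝ) w => G u y w) :=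
      hG.comp (show Continuous fun pr : ℝ × ℝ => ((pr.1, y, pr.2) : ℝ×ℝ×ℝ) by fun_prop)
    exact (intervalIntegral.continuous_parametric_intervalIntegral_of_continuous' h r s).intervalIntegrable _ _
  have hJw : ∀ u, IntervalIntegrable (fun w => J u w) volume r s :=
    fun u => ((hJc.comp (by fun_prop : Continuous fun w : ℝ => ((u, w) : ℝ×ℝ))).intervalIntegrable _ _)
  have hKw : ∀ u, IntervalIntegrable (fun w => K u w) volume r s :=
    fun u => ((hKc.comp (by fun_prop : Continuous fun w : ℝ => ((u, w) : ℝ×ℝ))).intervalIntegrable _ _)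
  have hJu : IntervalIntegrable (fun u => ∫ w in r..s, J u w) volume p q := by
    have h : Continuous (Function.uncurry fun (u : ℝ) w => J u w) := hJc
    exact (intervalIntegral.continuous_parametric_intervalIntegral_of_continuous' h r s).intervalIntegrable _ _
  have hKu : IntervalIntegrable (fun u => ∫ w in r..s, K u w) volume p q := by
    have h : Continuous (Function.uncurry fun (u : ℝ) w => K u w) := hKc
    exact (intervalIntegral.continuous_parametric_intervalIntegral_of_continuous' h r s).intervalIntegrable _ _
  calc (∫ u in p..q, ∫ w in r..s, G u a w) + (∫ u in p..q, ∫ w in r..s, G u b w)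
      = ∫ u in p..q, ((∫ w in r..s, G u a w) + ∫ w in r..s, G u b w) := by
        rw [intervalIntegral.integral_add (houtGa a) (houtGa b)]
    _ = ∫ u in p..q, ∫ w in r..s, (G u a w + G u b w) := by
        apply intervalIntegral.integral_congr
        intro u hu
        dsimp only
        rw [← intervalIntegral.integral_add (hintGa a u) (hintGa b u)]
    _ = ∫ u in p..q, ∫ w in r..s, 2 / (b - a) * (J u w + K u w) := by
        apply intervalIntegral.integral_congr
        intro u hu
        rw [Set.uIcc_of_le hpq] at hu
        apply intervalIntegral.integral_congr
        intro w hw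
        rw [Set.uIcc_of_le hrs] at hw
        exact hpt u hu w hw
    _ = 2 / (b - a) * ∫ u in p..q, ∫ w in r..s, (J u w + K u w) := by
        simp_rw [intervalIntegral.integral_const_mul]
    _ = 2 / (b - a) * ((∫ u in p..q, ∫ w in r..s, J u w)
          + ∫ u in p..q, ∫ w in r..s, K u w) := by
        congr 1
        calc ∫ u in p..q, ∫ w in r..s, (J u w + K u w)
            = ∫ u in p..q, ((∫ w in r..s, J u w) + ∫ w in r..s, K u w) := by
              apply intervalIntegral.integral_congr
              intro u hu
              dsimp only
              rw [intervalIntegral.integral_add (hJw u) (hKw u)]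
          _ = _ := intervalIntegral.integral_add hJu hKu
    _ = 2 / (b - a) * ((∫ u in p..q, ∫ v in a..b, ∫ w in r..s, G u v w)
        + ∫ u in p..q, ∫ v in a..b, ∫ w in r..s, E u v w) := by
        congr 1
        congr 1
        · apply intervalIntegral.integral_congr
          intro u hu
          exact swap2 hrs hab' (H := fun w v => G u v w)
            (hG.comp (by fun_prop : Continuous fun pr : ℝ × ℝ => ((u, pr.2, pr.1) : ℝ×ℝ×ℝ)))
        · apply intervalIntegral.integral_congr
          intro u hu
          exact swap2 hrs hab' (H := fun w v => E u v w)
            (hEcont.comp (by fun_prop : Continuous fun pr : ℝ × ℝ => ((u, pr.2, pr.1) : ℝ×ℝ×ℝ)))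

private lemma dcongr {a1 b1 a2 b2 : ℝ} (h1 : a1 ≤ b1) (h2 : a2 ≤ b2)
    {f g : ℝ → ℝ → ℝ}
    (h : ∀ u ∈ Set.Icc a1 b1, ∀ v ∈ Set.Icc a2 b2, f u v = g u v) :
    (∫ u in a1..b1, ∫ v in a2..b2, f u v) = ∫ u in a1..b1, ∫ v in a2..b2, g u v := by
  apply intervalIntegral.integral_congr; intro u hu
  rw [Set.uIcc_of_le h1] at hu
  apply intervalIntegral.integral_congr; intro v hv
  rw [Set.uIcc_of_le h2] at hv
  exact h u hu v hv

private lemma tcongr {a1 b1 a2 b2 a3 b3 : ℝ} (h1 : a1 ≤ b1) (h2 : a2 ≤ b2) (h3 : a3 ≤ b3)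
    {f g : ℝ → ℝ → ℝ → ℝ}
    (h : ∀ u ∈ Set.Icc a1 b1, ∀ v ∈ Set.Icc a2 b2, ∀ w ∈ Set.Icc a3 b3, f u v w = g u v w) :
    (∫ u in a1..b1, ∫ v in a2..b2, ∫ w in a3..b3, f u v w)
      = ∫ u in a1..b1, ∫ v in a2..b2, ∫ w in a3..b3, g u v w := by
  apply intervalIntegral.integral_congr; intro u hu
  rw [Set.uIcc_of_le h1] at hu
  exact dcongr h2 h3 (h u hu)

theorem stmt14 (x0 x1 y0 y1 z0 z1 : ℝ) (hx : x0 < x1) (hy : y0 < y1) (hz : z0 < z1)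
    (ex ey ez xc yc zc : ℝ)
    (hex : ex = x1 - x0) (hey : ey = y1 - y0) (hez : ez = z1 - z0)
    (hxc : xc = (x0 + x1) / 2) (hyc : yc = (y0 + y1) / 2) (hzc : zc = (z0 + z1) / 2)
    -- `f` is continuously differentiable on a neighborhood `U` of `T`
    (f : ℝ → ℝ → ℝ → ℝ) (U : Set (ℝ × ℝ × ℝ)) (hU : IsOpen U)
    (hTU : Set.Icc x0 x1 ×ˢ Set.Icc y0 y1 ×ˢ Set.Icc z0 z1 ⊆ U)
    (hf : ContDiffOn ℝ 1 (fun p : ℝ × ℝ × ℝ => f p.1 p.2.1 p.2.2) U) :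
    ((∫ x in x0..x1, ∫ z in z0..z1, f x y0 z) + (∫ x in x0..x1, ∫ z in z0..z1, f x y1 z)
      = 2 / ey * ((∫ x in x0..x1, ∫ y in y0..y1, ∫ z in z0..z1, f x y z)
        + (∫ x in x0..x1, ∫ y in y0..y1, ∫ z in z0..z1,
            deriv (fun s => f x s z) y * (y - yc)))) ∧
    ((∫ y in y0..y1, ∫ z in z0..z1, f x0 y z) + (∫ y in y0..y1, ∫ z in z0..z1, f x1 y z)
      = 2 / ex * ((∫ x in x0..x1, ∫ y in y0..y1, ∫ z in z0..z1, f x y z)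
        + (∫ x in x0..x1, ∫ y in y0..y1, ∫ z in z0..z1,
            deriv (fun t => f t y z) x * (x - xc)))) ∧
    ((∫ x in x0..x1, ∫ y in y0..y1, f x y z0) + (∫ x in x0..x1, ∫ y in y0..y1, f x y z1)
      = 2 / ez * ((∫ x in x0..x1, ∫ y in y0..y1, ∫ z in z0..z1, f x y z)
        + (∫ x in x0..x1, ∫ y in y0..y1, ∫ z in z0..z1,
            deriv (fun r => f x y r) z * (z - zc)))) := by
  subst hex hey hez hxc hyc hzc
  have hx' : x0 ≤ x1 := hx.le
  have hy' : y0 ≤ y1 := hy.le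
  have hz' : z0 ≤ z1 := hz.le
  obtain ⟨δ, hδ, hthick⟩ :=
    (isCompact_Icc.prod (isCompact_Icc.prod isCompact_Icc)).exists_thickening_subset_open hU hTU
  set ε := δ / 2 with hεdef
  have hε0 : 0 < ε := by positivity
  set K : Set (ℝ×ℝ×ℝ) :=
    Set.Icc (x0-ε) (x1+ε) ×ˢ Set.Icc (y0-ε) (y1+ε) ×ˢ Set.Icc (z0-ε) (z1+ε) with hKdef
  have hKU : K ⊆ U := by
    rintro ⟨u, v, w⟩ ⟨hu, hv, hw⟩
    apply hthick
    rw [Metric.mem_thickening_iff]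
    refine ⟨(max x0 (min u x1), max y0 (min v y1), max z0 (min w z1)),
      ⟨clamp_mem hx', clamp_mem hy', clamp_mem hz'⟩, ?_⟩
    have h1 := clamp_dist hx' hε0.le hu.1 hu.2
    have h2 := clamp_dist hy' hε0.le hv.1 hv.2
    have h3 := clamp_dist hz' hε0.le hw.1 hw.2
    rw [Prod.dist_eq, Prod.dist_eq]
    simp only [Real.dist_eq]
    have hεδ : ε < δ := by rw [hεdef]; linarith
    exact max_lt (lt_of_le_of_lt h1 hεδ) (max_lt (lt_of_le_of_lt h2 hεδ) (lt_of_le_of_lt h3 hεδ))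
  have hBK : ∀ {u v w : ℝ}, u ∈ Set.Icc x0 x1 → v ∈ Set.Icc y0 y1 → w ∈ Set.Icc z0 z1 →
      ((u,v,w) : ℝ×ℝ×ℝ) ∈ K := by
    intro u v w hu hv hw
    exact ⟨⟨by linarith [hu.1], by linarith [hu.2]⟩, ⟨by linarith [hv.1], by linarith [hv.2]⟩,
      ⟨by linarith [hw.1], by linarith [hw.2]⟩⟩
  set F : ℝ×ℝ×ℝ → ℝ := fun p => f p.1 p.2.1 p.2.2 with hFdef
  have hdiff : ∀ p ∈ U, DifferentiableAt ℝ F p := fun p hp =>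
    (hf.contDiffAt (hU.mem_nhds hp)).differentiableAt one_ne_zero
  have hfderiv_cont : ContinuousOn (fun p => fderiv ℝ F p) U :=
    hf.continuousOn_fderiv_of_isOpen hU le_rfl
  set Dx : ℝ×ℝ×ℝ → ℝ := fun p => fderiv ℝ F p (1,0,0) with hDxdef
  set Dy : ℝ×ℝ×ℝ → ℝ := fun p => fderiv ℝ F p (0,1,0) with hDydef
  set Dz : ℝ×ℝ×ℝ → ℝ := fun p => fderiv ℝ F p (0,0,1) with hDzdef
  have hDxc : ContinuousOn Dx U := hfderiv_cont.clm_apply continuousOn_const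
  have hDyc : ContinuousOn Dy U := hfderiv_cont.clm_apply continuousOn_const
  have hDzc : ContinuousOn Dz U := hfderiv_cont.clm_apply continuousOn_const
  have hdx : ∀ u v w : ℝ, ((u,v,w) : ℝ×ℝ×ℝ) ∈ U →
      HasDerivAt (fun t => f t v w) (Dx (u,v,w)) u := by
    intro u v w hp
    have h1 : HasDerivAt (fun t : ℝ => ((t, v, w) : ℝ×ℝ×ℝ)) (1, 0, 0) u :=
      (hasDerivAt_id u).prodMk ((hasDerivAt_const u v).prodMk (hasDerivAt_const u w))
    exact (hdiff _ hp).hasFDerivAt.comp_hasDerivAt u h1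
  have hdy : ∀ u v w : ℝ, ((u,v,w) : ℝ×ℝ×ℝ) ∈ U →
      HasDerivAt (fun s => f u s w) (Dy (u,v,w)) v := by
    intro u v w hp
    have h1 : HasDerivAt (fun s : ℝ => ((u, s, w) : ℝ×ℝ×ℝ)) (0, 1, 0) v :=
      (hasDerivAt_const v u).prodMk ((hasDerivAt_id v).prodMk (hasDerivAt_const v w))
    exact (hdiff _ hp).hasFDerivAt.comp_hasDerivAt v h1
  have hdz : ∀ u v w : ℝ, ((u,v,w) : ℝ×ℝ×ℝ) ∈ U →
      HasDerivAt (fun r => f u v r) (Dz (u,v,w)) w := by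
    intro u v w hp
    have h1 : HasDerivAt (fun r : ℝ => ((u, v, r) : ℝ×ℝ×ℝ)) (0, 0, 1) w :=
      (hasDerivAt_const w u).prodMk ((hasDerivAt_const w v).prodMk (hasDerivAt_id w))
    exact (hdiff _ hp).hasFDerivAt.comp_hasDerivAt w h1
  have hKcl : IsClosed K := isClosed_Icc.prod (isClosed_Icc.prod isClosed_Icc)
  obtain ⟨G, hGc, hGK⟩ := tietze3 hKcl ((hf.continuousOn).mono hKU)
  obtain ⟨Px, hPxc, hPxK⟩ := tietze3 hKcl (hDxc.mono hKU)
  obtain ⟨Py, hPyc, hPyK⟩ := tietze3 hKcl (hDyc.mono hKU)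
  obtain ⟨Pz, hPzc, hPzK⟩ := tietze3 hKcl (hDzc.mono hKU)
  -- derivative facts for the extension
  have hdy' : ∀ u ∈ Set.Icc x0 x1, ∀ w ∈ Set.Icc z0 z1, ∀ v ∈ Set.Icc y0 y1,
      HasDerivAt (fun v => G (u, v, w)) (Py (u, v, w)) v := by
    intro u hu w hw v hv
    have hmem : ((u,v,w) : ℝ×ℝ×ℝ) ∈ K := hBK hu hv hw
    have base : HasDerivAt (fun s => f u s w) (Dy (u,v,w)) v := hdy u v w (hKU hmem)
    rw [hPyK _ hmem]
    have hnb : Set.Ioo (y0 - ε) (y1 + ε) ∈ nhds v :=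
      Ioo_mem_nhds (by linarith [hv.1]) (by linarith [hv.2])
    have heq : (fun s => G (u, s, w)) =ᶠ[nhds v] fun s => f u s w :=
      Filter.eventuallyEq_of_mem hnb (fun s hs => hGK _
        ⟨⟨by linarith [hu.1], by linarith [hu.2]⟩, ⟨hs.1.le, hs.2.le⟩,
         ⟨by linarith [hw.1], by linarith [hw.2]⟩⟩)
    exact base.congr_of_eventuallyEq heq
  have hdx' : ∀ u ∈ Set.Icc y0 y1, ∀ w ∈ Set.Icc z0 z1, ∀ v ∈ Set.Icc x0 x1,
      HasDerivAt (fun v => G (v, u, w)) (Px (v, u, w)) v := by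
    intro u hu w hw v hv
    have hmem : ((v,u,w) : ℝ×ℝ×ℝ) ∈ K := hBK hv hu hw
    have base : HasDerivAt (fun t => f t u w) (Dx (v,u,w)) v := hdx v u w (hKU hmem)
    rw [hPxK _ hmem]
    have hnb : Set.Ioo (x0 - ε) (x1 + ε) ∈ nhds v :=
      Ioo_mem_nhds (by linarith [hv.1]) (by linarith [hv.2])
    have heq : (fun s => G (s, u, w)) =ᶠ[nhds v] fun s => f s u w :=
      Filter.eventuallyEq_of_mem hnb (fun s hs => hGK _
        ⟨⟨hs.1.le, hs.2.le⟩, ⟨by linarith [hu.1], by linarith [hu.2]⟩,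
         ⟨by linarith [hw.1], by linarith [hw.2]⟩⟩)
    exact base.congr_of_eventuallyEq heq
  have hdz' : ∀ u ∈ Set.Icc x0 x1, ∀ w ∈ Set.Icc y0 y1, ∀ v ∈ Set.Icc z0 z1,
      HasDerivAt (fun v => G (u, w, v)) (Pz (u, w, v)) v := by
    intro u hu w hw v hv
    have hmem : ((u,w,v) : ℝ×ℝ×ℝ) ∈ K := hBK hu hw hv
    have base : HasDerivAt (fun r => f u w r) (Dz (u,w,v)) v := hdz u w v (hKU hmem)
    rw [hPzK _ hmem]
    have hnb : Set.Ioo (z0 - ε) (z1 + ε) ∈ nhds v :=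
      Ioo_mem_nhds (by linarith [hv.1]) (by linarith [hv.2])
    have heq : (fun s => G (u, w, s)) =ᶠ[nhds v] fun s => f u w s :=
      Filter.eventuallyEq_of_mem hnb (fun s hs => hGK _
        ⟨⟨by linarith [hu.1], by linarith [hu.2]⟩, ⟨by linarith [hw.1], by linarith [hw.2]⟩,
         ⟨hs.1.le, hs.2.le⟩⟩)
    exact base.congr_of_eventuallyEq heq
  -- deriv = P on the box
  have hderivx : ∀ u ∈ Set.Icc x0 x1, ∀ v ∈ Set.Icc y0 y1, ∀ w ∈ Set.Icc z0 z1,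
      deriv (fun t => f t v w) u = Px (u,v,w) := by
    intro u hu v hv w hw
    have hmem := hBK hu hv hw
    rw [(hdx u v w (hKU hmem)).deriv, hPxK _ hmem]
  have hderivy : ∀ u ∈ Set.Icc x0 x1, ∀ v ∈ Set.Icc y0 y1, ∀ w ∈ Set.Icc z0 z1,
      deriv (fun s => f u s w) v = Py (u,v,w) := by
    intro u hu v hv w hw
    have hmem := hBK hu hv hw
    rw [(hdy u v w (hKU hmem)).deriv, hPyK _ hmem]
  have hderivz : ∀ u ∈ Set.Icc x0 x1, ∀ v ∈ Set.Icc y0 y1, ∀ w ∈ Set.Icc z0 z1,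
      deriv (fun r => f u v r) w = Pz (u,v,w) := by
    intro u hu v hv w hw
    have hmem := hBK hu hv hw
    rw [(hdz u v w (hKU hmem)).deriv, hPzK _ hmem]
  have hfG : ∀ u ∈ Set.Icc x0 x1, ∀ v ∈ Set.Icc y0 y1, ∀ w ∈ Set.Icc z0 z1,
      f u v w = G (u,v,w) := fun u hu v hv w hw => (hGK _ (hBK hu hv hw)).symm
  refine ⟨?_, ?_, ?_⟩
  · -- y direction
    have M := master hx' hy hz' (G := fun u v w => G (u,v,w)) (D := fun u v w => Py (u,v,w))
      hGc hPyc hdy'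
    calc (∫ x in x0..x1, ∫ z in z0..z1, f x y0 z) + (∫ x in x0..x1, ∫ z in z0..z1, f x y1 z)
        = (∫ x in x0..x1, ∫ z in z0..z1, G (x, y0, z))
          + (∫ x in x0..x1, ∫ z in z0..z1, G (x, y1, z)) := by
          rw [dcongr hx' hz' (fun u hu w hw => hfG u hu y0 ⟨le_rfl, hy'⟩ w hw),
            dcongr hx' hz' (fun u hu w hw => hfG u hu y1 ⟨hy', le_rfl⟩ w hw)]
      _ = 2 / (y1 - y0) * ((∫ x in x0..x1, ∫ y in y0..y1, ∫ z in z0..z1, G (x,y,z))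
          + ∫ x in x0..x1, ∫ y in y0..y1, ∫ z in z0..z1, Py (x,y,z) * (y - (y0+y1)/2)) := M
      _ = _ := by
          rw [tcongr hx' hy' hz' (fun u hu v hv w hw => (hfG u hu v hv w hw).symm),
            tcongr hx' hy' hz' (g := fun u v w => Py (u,v,w) * (v - (y0+y1)/2))
              (f := fun u v w => deriv (fun s => f u s w) v * (v - (y0+y1)/2))
              (fun u hu v hv w hw => by rw [hderivy u hu v hv w hw])]
  · -- x direction
    have M := master hy' hx hz' (G := fun u v w => G (v,u,w)) (D := fun u v w => Px (v,u,w))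
      (hGc.comp (by fun_prop)) (hPxc.comp (by fun_prop)) hdx'
    have hsw : (∫ u in y0..y1, ∫ v in x0..x1, ∫ w in z0..z1, G (v, u, w))
        = ∫ v in x0..x1, ∫ u in y0..y1, ∫ w in z0..z1, G (v, u, w) := by
      apply swap2 hy' hx' (H := fun u v => ∫ w in z0..z1, G (v, u, w))
      exact intervalIntegral.continuous_parametric_intervalIntegral_of_continuous'
        (f := fun (p : ℝ×ℝ) w => G (p.2, p.1, w)) (hGc.comp (by fun_prop)) z0 z1
    have hsw2 : (∫ u in y0..y1, ∫ v in x0..x1, ∫ w in z0..z1, Px (v,u,w) * (v - (x0+x1)/2))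
        = ∫ v in x0..x1, ∫ u in y0..y1, ∫ w in z0..z1, Px (v,u,w) * (v - (x0+x1)/2) := by
      apply swap2 hy' hx' (H := fun u v => ∫ w in z0..z1, Px (v,u,w) * (v - (x0+x1)/2))
      exact intervalIntegral.continuous_parametric_intervalIntegral_of_continuous'
        (f := fun (p : ℝ×ℝ) w => Px (p.2, p.1, w) * (p.2 - (x0+x1)/2))
        ((hPxc.comp (by fun_prop)).mul (by fun_prop)) z0 z1
    rw [hsw, hsw2] at M
    calc (∫ y in y0..y1, ∫ z in z0..z1, f x0 y z) + (∫ y in y0..y1, ∫ z in z0..z1, f x1 y z)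
        = (∫ u in y0..y1, ∫ w in z0..z1, G (x0, u, w))
          + (∫ u in y0..y1, ∫ w in z0..z1, G (x1, u, w)) := by
          rw [dcongr hy' hz' (fun u hu w hw => hfG x0 ⟨le_rfl, hx'⟩ u hu w hw),
            dcongr hy' hz' (fun u hu w hw => hfG x1 ⟨hx', le_rfl⟩ u hu w hw)]
      _ = 2 / (x1 - x0) * ((∫ x in x0..x1, ∫ y in y0..y1, ∫ z in z0..z1, G (x,y,z))
          + ∫ x in x0..x1, ∫ y in y0..y1, ∫ z in z0..z1, Px (x,y,z) * (x - (x0+x1)/2)) := M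
      _ = _ := by
          rw [tcongr hx' hy' hz' (fun u hu v hv w hw => (hfG u hu v hv w hw).symm),
            tcongr hx' hy' hz' (g := fun u v w => Px (u,v,w) * (u - (x0+x1)/2))
              (f := fun u v w => deriv (fun t => f t v w) u * (u - (x0+x1)/2))
              (fun u hu v hv w hw => by rw [hderivx u hu v hv w hw])]
  · -- z direction
    have M := master hx' hz hy' (G := fun u v w => G (u,w,v)) (D := fun u v w => Pz (u,w,v))
      (hGc.comp (by fun_prop)) (hPzc.comp (by fun_prop)) hdz'
    have hsw : (∫ u in x0..x1, ∫ v in z0..z1, ∫ w in y0..y1, G (u, w, v))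
        = ∫ u in x0..x1, ∫ w in y0..y1, ∫ v in z0..z1, G (u, w, v) := by
      apply intervalIntegral.integral_congr
      intro u hu
      exact swap2 hz' hy' (H := fun v w => G (u, w, v)) (hGc.comp (by fun_prop))
    have hsw2 : (∫ u in x0..x1, ∫ v in z0..z1, ∫ w in y0..y1, Pz (u,w,v) * (v - (z0+z1)/2))
        = ∫ u in x0..x1, ∫ w in y0..y1, ∫ v in z0..z1, Pz (u,w,v) * (v - (z0+z1)/2) := by
      apply intervalIntegral.integral_congr
      intro u hu
      exact swap2 hz' hy' (H := fun v w => Pz (u, w, v) * (v - (z0+z1)/2))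
        ((hPzc.comp (by fun_prop)).mul (by fun_prop))
    rw [hsw, hsw2] at M
    calc (∫ x in x0..x1, ∫ y in y0..y1, f x y z0) + (∫ x in x0..x1, ∫ y in y0..y1, f x y z1)
        = (∫ u in x0..x1, ∫ w in y0..y1, G (u, w, z0))
          + (∫ u in x0..x1, ∫ w in y0..y1, G (u, w, z1)) := by
          rw [dcongr hx' hy' (fun u hu w hw => hfG u hu w hw z0 ⟨le_rfl, hz'⟩),
            dcongr hx' hy' (fun u hu w hw => hfG u hu w hw z1 ⟨hz', le_rfl⟩)]
      _ = 2 / (z1 - z0) * ((∫ x in x0..x1, ∫ y in y0..y1, ∫ z in z0..z1, G (x,y,z))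
          + ∫ x in x0..x1, ∫ y in y0..y1, ∫ z in z0..z1, Pz (x,y,z) * (z - (z0+z1)/2)) := M
      _ = _ := by
          rw [tcongr hx' hy' hz' (fun u hu v hv w hw => (hfG u hu v hv w hw).symm),
            tcongr hx' hy' hz' (g := fun u v w => Pz (u,v,w) * (w - (z0+z1)/2))
              (f := fun u v w => deriv (fun r => f u v r) w * (w - (z0+z1)/2))
              (fun u hu v hv w hw => by rw [hderivz u hu v hv w hw])]
end
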